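/- arXiv:1611.02589 — 5 statements merged into one kernel-verified Lean document; each statement's English description precedes it below -/
import Mathlib

section
/- There exist a constant C and a single decoder relation D : ℕ → ℕ → Bool with the following property: for every finite tree order (X, ≤) with n = |X| ≥ 4 elements, there is an injective labeling L : X → ℕ such that L(x) ≤ C · n · (log₂ n)³ · (log₂ log₂ n)^C for every x ∈ X, and for all u, v ∈ X one has u ≤ v if and only if D(L(v), L(u)) = true. (Equivalently: there is an ancestry-labeling scheme for the family of all rooted forests whose labels on n-node forests use log₂ n + 3 log₂ log₂ n + O(log₂ log₂ log₂ n) bits.) -/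
set_option linter.unusedSectionVars false
set_option maxHeartbeats 1000000


/-- A partial order is a *tree order* if any two incomparable elements
have no common upper bound; equivalently, the set of elements above any
given element is a chain. -/
def IsTreeOrder (X : Type*) [PartialOrder X] : Prop :=
  ∀ x y z : X, x ≤ y → x ≤ z → (y ≤ z ∨ z ≤ y)


namespace AncView
open Finset
attribute [local instance] Classical.propDecidable

section ListLex
variable {α : Type*} [LinearOrder α]


lemma lex_of_prefix_ne : ∀ {l m : List α}, l <+: m → l ≠ m → List.Lex (· < ·) l m := by
  intro l
  induction l with
  | nil =>
    intro m _ hne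
    cases m with
    | nil => exact absurd rfl hne
    | cons a t => exact List.Lex.nil
  | cons x l ih =>
    intro m hp hne
    cases m with
    | nil => exact absurd (List.prefix_nil.mp hp) (by simp)
    | cons y t =>
      rw [List.cons_prefix_cons] at hp
      obtain ⟨rfl, hp⟩ := hp
      exact List.Lex.cons (ih hp (by rintro rfl; exact hne rfl))

lemma lex_of_lex_of_prefix : ∀ {a b c : List α}, List.Lex (· < ·) a b → ¬ a <+: b →
    a <+: c → List.Lex (· < ·) c b := by
  intro a b c h
  induction h generalizing c with
  | nil => intro hnp _; exact absurd (List.nil_prefix) hnp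
  | @rel x as y bs hxy =>
    intro _ hpc
    cases c with
    | nil => exact absurd (List.prefix_nil.mp hpc) (by simp)
    | cons z cs =>
      rw [List.cons_prefix_cons] at hpc
      obtain ⟨rfl, _⟩ := hpc
      exact List.Lex.rel hxy
  | @cons x as bs hab ih =>
    intro hnp hpc
    cases c with
    | nil => exact absurd (List.prefix_nil.mp hpc) (by simp)
    | cons z cs =>
      rw [List.cons_prefix_cons] at hpc
      obtain ⟨rfl, hpc⟩ := hpc
      refine List.Lex.cons (ih (fun hh => hnp ?_) hpc)
      exact List.cons_prefix_cons.mpr ⟨rfl, hh⟩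

lemma prefix_of_between : ∀ (a : List α) {b c : List α}, ¬ List.Lex (· < ·) c a →
    List.Lex (· < ·) c b → a <+: b → a <+: c := by
  intro a
  induction a with
  | nil => intro b c _ _ _; exact List.nil_prefix
  | cons x a' ih =>
    intro b c h1 h2 h3
    cases b with
    | nil => exact absurd (List.prefix_nil.mp h3) (by simp)
    | cons xb b' =>
      rw [List.cons_prefix_cons] at h3
      obtain ⟨rfl, h3⟩ := h3
      cases c with
      | nil => exact absurd List.Lex.nil h1
      | cons y c' =>
        cases h2 with
        | rel hyx => exact absurd (List.Lex.rel hyx) h1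
        | cons h2 =>
          refine List.cons_prefix_cons.mpr ⟨rfl, ih (fun hh => h1 (List.Lex.cons hh)) h2 h3⟩

lemma lex_of_sibling : ∀ (p : List α) {x y : α} {l l' : List α}, (p ++ [x]) <+: l →
    (p ++ [y]) <+: l' → x < y → List.Lex (· < ·) l l' := by
  intro p
  induction p with
  | nil =>
    intro x y l l' h1 h2 hxy
    simp only [List.nil_append] at h1 h2
    obtain ⟨t1, rfl⟩ := h1
    obtain ⟨t2, rfl⟩ := h2
    exact List.Lex.rel hxy
  | cons z p ih =>
    intro x y l l' h1 h2 hxy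
    simp only [List.cons_append] at h1 h2
    obtain ⟨t1, rfl⟩ := h1
    obtain ⟨t2, rfl⟩ := h2
    exact List.Lex.cons (ih (by simp) (by simp) hxy)


lemma lex_asymm {a b : List ℕ} (h : List.Lex (· < ·) a b) : ¬ List.Lex (· < ·) b a :=
  Std.Asymm.asymm a b h

lemma lex_trans {a b c : List ℕ} (h1 : List.Lex (· < ·) a b) (h2 : List.Lex (· < ·) b c) :
    List.Lex (· < ·) a c := List.lex_trans (fun h1 h2 => Nat.lt_trans h1 h2) h1 h2

lemma lex_irrefl (a : List ℕ) : ¬ List.Lex (· < ·) a a := fun h => lex_asymm h h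

lemma lex_trichot (a b : List ℕ) : List.Lex (· < ·) a b ∨ a = b ∨ List.Lex (· < ·) b a :=
  by
  by_cases h1 : List.Lex (· < ·) a b
  · exact Or.inl h1
  by_cases h2 : List.Lex (· < ·) b a
  · exact Or.inr (Or.inr h2)
  exact Or.inr (Or.inl (Std.Trichotomous.trichotomous (r := List.Lex (· < ·)) a b h1 h2))
end ListLex

variable {X : Type} [Fintype X] [PartialOrder X]

noncomputable def emb (x : X) : ℕ := (Fintype.equivFin X x : ℕ)

lemma emb_inj : Function.Injective (emb (X := X)) := by
  intro a b h
  have := Fin.val_injective h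
  exact (Fintype.equivFin X).injective this

lemma emb_lt (x : X) : emb x < Fintype.card X := (Fintype.equivFin X x).isLt

/-- subtree size -/
noncomputable def sz (x : X) : ℕ := (univ.filter (· ≤ x)).card

lemma sz_pos (x : X) : 0 < sz x :=
  Finset.card_pos.mpr ⟨x, by simp [sz]⟩

lemma sz_le_card (x : X) : sz x ≤ Fintype.card X := by
  simpa [sz] using Finset.card_filter_le univ (· ≤ x)

lemma sz_mono {u v : X} (h : u ≤ v) : sz u ≤ sz v := by
  apply Finset.card_le_card
  intro z hz
  simp only [mem_filter, mem_univ, true_and] at hz ⊢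
  exact le_trans hz h

lemma sz_strict {u v : X} (h : u < v) : sz u < sz v := by
  apply Finset.card_lt_card
  constructor
  · intro z hz
    simp only [mem_filter, mem_univ, true_and] at hz ⊢
    exact le_trans hz h.le
  · intro hsub
    have := hsub (by simp : v ∈ univ.filter (· ≤ v))
    simp only [mem_filter, mem_univ, true_and] at this
    exact absurd (le_antisymm this h.le) (ne_of_gt h)

noncomputable def key (x : X) : ℕ := Fintype.card X * sz x + emb x

lemma key_inj : Function.Injective (key (X := X)) := by
  intro a b h
  unfold key at h
  have ha := emb_lt a
  have hb := emb_lt b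
  have hsz : sz a = sz b := by
    by_contra hne
    rcases Nat.lt_or_ge (sz a) (sz b) with hl | hl
    · have : Fintype.card X * sz a + emb a < Fintype.card X * sz b + emb b := by
        calc Fintype.card X * sz a + emb a < Fintype.card X * (sz a + 1) := by
              rw [Nat.mul_succ]; omega
        _ ≤ Fintype.card X * sz b := Nat.mul_le_mul_left _ hl
        _ ≤ _ := Nat.le_add_right _ _
      omega
    · have hl' : sz b < sz a := lt_of_le_of_ne hl (Ne.symm hne)
      have : Fintype.card X * sz b + emb b < Fintype.card X * sz a + emb a := by
        calc Fintype.card X * sz b + emb b < Fintype.card X * (sz b + 1) := by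
              rw [Nat.mul_succ]; omega
        _ ≤ Fintype.card X * sz a := Nat.mul_le_mul_left _ hl'
        _ ≤ _ := Nat.le_add_right _ _
      omega
  rw [hsz] at h
  exact emb_inj (by omega)

lemma sz_le_of_key_lt {a b : X} (h : key a < key b) : sz a ≤ sz b := by
  by_contra hc
  push_neg at hc
  have hb := emb_lt a
  have : Fintype.card X * sz b + emb b < Fintype.card X * sz a + emb a := by
    calc Fintype.card X * sz b + emb b < Fintype.card X * (sz b + 1) := by
          rw [Nat.mul_succ]; have := emb_lt b; omega
    _ ≤ Fintype.card X * sz a := Nat.mul_le_mul_left _ hc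
    _ ≤ _ := Nat.le_add_right _ _
  unfold key at h; omega

def hasParent (x : X) : Prop := ∃ p, x < p

noncomputable def parent (x : X) : X :=
  if h : (univ.filter (fun p => x < p)).Nonempty then
    (Finset.exists_min_image (univ.filter (fun p => x < p)) sz h).choose
  else x

lemma hasParent_iff_nonempty (x : X) :
    hasParent x ↔ (univ.filter (fun p => x < p)).Nonempty := by
  constructor
  · rintro ⟨p, hp⟩; exact ⟨p, by simp [hp]⟩
  · rintro ⟨p, hp⟩; simp only [mem_filter, mem_univ, true_and] at hp; exact ⟨p, hp⟩

lemma lt_parent {x : X} (h : hasParent x) : x < parent x := by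
  rw [hasParent_iff_nonempty] at h
  rw [parent, dif_pos h]
  have := (Finset.exists_min_image (univ.filter (fun p => x < p)) sz h).choose_spec
  exact (mem_filter.mp this.1).2

lemma parent_sz_min {x q : X} (hq : x < q) : sz (parent x) ≤ sz q := by
  have h : (univ.filter (fun p => x < p)).Nonempty := ⟨q, by simp [hq]⟩
  rw [parent, dif_pos h]
  have := (Finset.exists_min_image (univ.filter (fun p => x < p)) sz h).choose_spec
  exact this.2 q (by simp [hq])


/-- a non-maximal element is *heavy* if it has the largest key among its siblings -/
noncomputable def isHeavy (c : X) : Prop :=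
  hasParent c ∧ ∀ c', c' < parent c → parent c' = parent c → key c' ≤ key c

variable (H : IsTreeOrder X)
include H

lemma comparable_of_above {x y z : X} (hy : x ≤ y) (hz : x ≤ z) : y ≤ z ∨ z ≤ y := H x y z hy hz

lemma parent_min {x q : X} (hq : x < q) : parent x ≤ q := by
  have hx : x < parent x := lt_parent ⟨q, hq⟩
  rcases comparable_of_above H hx.le hq.le with h | h
  · exact h
  · rcases eq_or_lt_of_le h with rfl | h'
    · exact le_refl _
    · exact absurd (parent_sz_min hq) (by have := sz_strict h'; omega)

-- continuing
lemma light_double {c : X} (hc : hasParent c) (hl : ¬ isHeavy c) :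
    2 * sz c < sz (parent c) := by
  have hex : ∃ c', c' < parent c ∧ parent c' = parent c ∧ key c < key c' := by
    by_contra hno
    push_neg at hno
    exact hl ⟨hc, fun c' h1 h2 => by
      rcases Nat.lt_or_ge (key c) (key c') with h | h
      · exact absurd (hno c' h1 h2) (by omega)
      · exact h⟩
  obtain ⟨c', hc'lt, hc'par, hkey⟩ := hex
  have hsz : sz c ≤ sz c' := sz_le_of_key_lt hkey
  have hne : c ≠ c' := fun h => by rw [h] at hkey; omega
  -- c and c' are incomparable
  have hinc1 : ¬ c < c' := by
    intro h
    have := parent_min H h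
    exact absurd (lt_of_le_of_lt this hc'lt) (lt_irrefl _)
  have hinc2 : ¬ c' < c := by
    intro h
    have h3 := parent_min H h
    rw [hc'par] at h3
    exact absurd (lt_of_le_of_lt h3 (lt_parent hc)) (lt_irrefl _)
  -- subtrees disjoint
  have hdisj : Disjoint (univ.filter (· ≤ c)) (univ.filter (· ≤ c')) := by
    rw [Finset.disjoint_left]
    intro z hz hz'
    simp only [mem_filter, mem_univ, true_and] at hz hz'
    rcases comparable_of_above H hz hz' with h | h
    · rcases eq_or_lt_of_le h with rfl | h'
      · exact hne rfl
      · exact hinc1 h'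
    · rcases eq_or_lt_of_le h with h0 | h'
      · exact hne h0.symm
      · exact hinc2 h'
  have hsub : (univ.filter (· ≤ c)) ∪ (univ.filter (· ≤ c')) ⊆
      (univ.filter (· ≤ parent c)).erase (parent c) := by
    intro z hz
    rcases Finset.mem_union.mp hz with h | h <;>
      simp only [mem_filter, mem_univ, true_and] at h
    · refine Finset.mem_erase.mpr ⟨fun he => ?_, by simp [le_trans h (lt_parent hc).le]⟩
      rw [he] at h
      exact absurd (lt_of_le_of_lt h (lt_parent hc)) (lt_irrefl _)
    · refine Finset.mem_erase.mpr ⟨fun he => ?_, by simp [le_trans h hc'lt.le]⟩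
      rw [he] at h
      exact absurd (lt_of_le_of_lt h hc'lt) (lt_irrefl _)
  have hcard := Finset.card_le_card hsub
  rw [Finset.card_union_of_disjoint hdisj] at hcard
  have herase : ((univ.filter (· ≤ parent c)).erase (parent c)).card
      = sz (parent c) - 1 := by
    rw [Finset.card_erase_of_mem (by simp)]
    rfl
  have := sz_pos (parent c)
  unfold sz at *
  omega

omit H

noncomputable def w : X → List ℕ :=
  (IsWellFounded.wf (α := X) (r := (· > ·))).fix
    (fun x ih =>
      if h : hasParent x then ih (parent x) (lt_parent h) ++ [key x] else [key x])

lemma w_def (x : X) : w x =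
    if h : hasParent x then w (parent x) ++ [key x] else [key x] := by
  rw [w, WellFounded.fix_eq]

lemma w_par {x : X} (h : hasParent x) : w x = w (parent x) ++ [key x] := by
  rw [w_def, dif_pos h]

lemma w_max {x : X} (h : ¬ hasParent x) : w x = [key x] := by
  rw [w_def, dif_neg h]

lemma w_ne_nil (x : X) : w x ≠ [] := by
  by_cases h : hasParent x
  · rw [w_par h]; simp
  · rw [w_max h]; simp

lemma w_getLast (x : X) : (w x).getLast? = some (key x) := by
  by_cases h : hasParent x
  · rw [w_par h, List.getLast?_concat]
  · rw [w_max h]; rfl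

lemma w_inj : Function.Injective (w (X := X)) := by
  intro a b h
  have : (w a).getLast? = (w b).getLast? := by rw [h]
  rw [w_getLast, w_getLast] at this
  exact key_inj (Option.some_injective _ this)

include H

lemma prefix_of_le : ∀ u v : X, u ≤ v → w v <+: w u := by
  have wf : WellFounded ((· > ·) : X → X → Prop) := IsWellFounded.wf
  intro u
  refine wf.induction (C := fun u => ∀ v, u ≤ v → w v <+: w u) u ?_
  intro u ih v h
  rcases eq_or_lt_of_le h with rfl | h'
  · exact List.prefix_refl _
  · have hpu : hasParent u := ⟨v, h'⟩
    rw [w_par hpu]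
    have h1 : parent u ≤ v := parent_min H h'
    exact (ih (parent u) (lt_parent hpu) v h1).trans (List.prefix_append _ _)

lemma le_of_prefix : ∀ u v : X, w v <+: w u → u ≤ v := by
  have wf : WellFounded ((· > ·) : X → X → Prop) := IsWellFounded.wf
  intro u
  refine wf.induction (C := fun u => ∀ v, w v <+: w u → u ≤ v) u ?_
  intro u ih v hp
  rcases eq_or_ne (w v) (w u) with he | hne
  · exact le_of_eq (w_inj he).symm
  · have hlt : (w v).length < (w u).length := by
      rcases lt_or_eq_of_le hp.length_le with h | h
      · exact h
      · exact absurd (List.IsPrefix.eq_of_length hp h) hne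
    by_cases hx : hasParent u
    · have hup : w u = w (parent u) ++ [key u] := w_par hx
      have hlen : (w v).length ≤ (w (parent u)).length := by
        rw [hup] at hlt
        simp only [List.length_append, List.length_singleton] at hlt
        omega
      have hpp : w v <+: w (parent u) := by
        refine List.prefix_of_prefix_length_le hp ?_ hlen
        rw [hup]; exact List.prefix_append _ _
      exact le_trans (lt_parent hx).le (ih (parent u) (lt_parent hx) v hpp)
    · rw [w_max hx] at hlt
      simp only [List.length_singleton] at hlt
      have := w_ne_nil v
      have : 0 < (w v).length := List.length_pos_iff.mpr this
      omega

lemma lex_of_lt {u v : X} (h : u < v) : List.Lex (· < ·) (w v) (w u) :=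
  lex_of_prefix_ne (prefix_of_le H u v h.le)
    (fun he => absurd (w_inj he) (fun h2 => absurd (h2 ▸ h) (lt_irrefl _)))

lemma lex_total {u v : X} (h : u ≠ v) :
    List.Lex (· < ·) (w u) (w v) ∨ List.Lex (· < ·) (w v) (w u) := by
  have hne : w u ≠ w v := fun he => h (w_inj he)
  rcases lex_trichot (w u) (w v) with h1 | h1 | h1
  · exact Or.inl h1
  · exact absurd h1 hne
  · exact Or.inr h1

omit H

def isTop (c : X) : Prop := ¬ isHeavy c

noncomputable def topSet (v : X) : Finset X :=
  univ.filter (fun t => v ≤ t ∧ ∀ z, v ≤ z → z < t → isHeavy z)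

lemma self_mem_topSet (v : X) : v ∈ topSet v := by
  simp only [topSet, mem_filter, mem_univ, true_and]
  exact ⟨le_refl v, fun z h1 h2 => absurd (lt_of_le_of_lt h1 h2) (lt_irrefl _)⟩

noncomputable def top (v : X) : X :=
  (Finset.exists_max_image (topSet v) sz ⟨v, self_mem_topSet v⟩).choose

lemma top_spec (v : X) : top v ∈ topSet v ∧ ∀ t ∈ topSet v, sz t ≤ sz (top v) :=
  (Finset.exists_max_image (topSet v) sz ⟨v, self_mem_topSet v⟩).choose_spec

lemma le_top (v : X) : v ≤ top v := by
  have := (top_spec v).1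
  simp only [topSet, mem_filter, mem_univ, true_and] at this
  exact this.1

lemma top_path {v z : X} (h1 : v ≤ z) (h2 : z < top v) : isHeavy z := by
  have := (top_spec v).1
  simp only [topSet, mem_filter, mem_univ, true_and] at this
  exact this.2 z h1 h2

include H

lemma top_isTop (v : X) : isTop (top v) := by
  intro hheavy
  have hp : hasParent (top v) := hheavy.1
  have hmem : parent (top v) ∈ topSet v := by
    simp only [topSet, mem_filter, mem_univ, true_and]
    refine ⟨le_trans (le_top v) (lt_parent hp).le, fun z hz1 hz2 => ?_⟩
    rcases comparable_of_above H (le_top v) hz1 with h | h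
    · rcases eq_or_lt_of_le h with h0 | h0
      · rw [← h0]; exact hheavy
      · exact absurd (parent_min H h0) (not_le_of_gt hz2)
    · rcases eq_or_lt_of_le h with h0 | h0
      · rw [h0]; exact hheavy
      · exact top_path hz1 h0
  have h1 := (top_spec v).2 _ hmem
  have h2 := sz_strict (lt_parent hp)
  omega

lemma hp_lemma {u v : X} (hu : u ≤ top v) (h1 : ¬ u ≤ v) (h2 : ¬ v ≤ u) :
    List.Lex (· < ·) (w u) (w v) := by
  -- BU : the maximal ancestor of v that is not above u
  have hS1 : (univ.filter (fun z => v ≤ z ∧ ¬ u ≤ z)).Nonempty :=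
    ⟨v, by simp [h1]⟩
  obtain ⟨BU, hBUmem, hBUmax⟩ := Finset.exists_max_image _ sz hS1
  simp only [mem_filter, mem_univ, true_and] at hBUmem
  obtain ⟨hBU1, hBU2⟩ := hBUmem
  have BU_up : ∀ z, v ≤ z → ¬ u ≤ z → z ≤ BU := by
    intro z hz1 hz2
    rcases comparable_of_above H hBU1 hz1 with h | h
    · rcases eq_or_lt_of_le h with h0 | h0
      · exact le_of_eq h0.symm
      · have := hBUmax z (by simp [hz1, hz2])
        exact absurd (sz_strict h0) (by omega)
    · exact h
  have hBUt : BU < top v := by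
    have hne : BU ≠ top v := fun he => hBU2 (he ▸ hu)
    rcases comparable_of_above H hBU1 (le_trans (le_refl v) (le_top v)) with h | h
    · exact lt_of_le_of_ne h hne
    · exact absurd (le_trans hu h) hBU2
  have hBUheavy : isHeavy BU := top_path hBU1 hBUt
  have hpBU : hasParent BU := hBUheavy.1
  set p := parent BU with hp_def
  have hBUp : BU < p := lt_parent hpBU
  have hvp : v ≤ p := le_trans hBU1 hBUp.le
  have hup : u ≤ p := by
    by_contra hc
    exact absurd hBUp (not_lt_of_ge (BU_up p hvp hc))
  -- CU : the maximal ancestor of u that is not above v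
  have hS2 : (univ.filter (fun z => u ≤ z ∧ ¬ v ≤ z)).Nonempty :=
    ⟨u, by simp [h2]⟩
  obtain ⟨CU, hCUmem, hCUmax⟩ := Finset.exists_max_image _ sz hS2
  simp only [mem_filter, mem_univ, true_and] at hCUmem
  obtain ⟨hCU1, hCU2⟩ := hCUmem
  have CU_up : ∀ z, u ≤ z → ¬ v ≤ z → z ≤ CU := by
    intro z hz1 hz2
    rcases comparable_of_above H hCU1 hz1 with h | h
    · rcases eq_or_lt_of_le h with h0 | h0
      · exact le_of_eq h0.symm
      · have := hCUmax z (by simp [hz1, hz2])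
        exact absurd (sz_strict h0) (by omega)
    · exact h
  have hCUp : CU < p := by
    have hne : CU ≠ p := fun he => hCU2 (he ▸ hvp)
    rcases comparable_of_above H hCU1 hup with h | h
    · exact lt_of_le_of_ne h hne
    · exact absurd (le_trans hvp h) hCU2
  have hpCU : hasParent CU := ⟨p, hCUp⟩
  have hv_parCU : v ≤ parent CU := by
    by_contra hc
    exact absurd (lt_parent hpCU)
      (not_lt_of_ge (CU_up (parent CU) (le_trans hCU1 (lt_parent hpCU).le) hc))
  have hBU_lt_parCU : BU < parent CU := by
    have hle : BU ≤ parent CU := by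
      by_contra hc
      rcases comparable_of_above H hBU1 hv_parCU with h | h
      · exact hc h
      · exact hBU2 (le_trans (le_trans hCU1 (lt_parent hpCU).le) h)
    rcases eq_or_lt_of_le hle with h0 | h0
    · exact absurd (le_trans (le_trans hCU1 (lt_parent hpCU).le) h0.symm.le) hBU2
    · exact h0
  have hpar_eq : parent CU = p := le_antisymm (parent_min H hCUp) (parent_min H hBU_lt_parCU)
  have hkey : key CU < key BU := by
    have hle : key CU ≤ key BU := hBUheavy.2 CU hCUp hpar_eq
    rcases eq_or_lt_of_le hle with h0 | h0
    · exact absurd (key_inj h0 ▸ hCU1) hBU2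
    · exact h0
  have hwCU : w CU = w p ++ [key CU] := by rw [w_par hpCU, hpar_eq]
  have hwBU : w BU = w p ++ [key BU] := w_par hpBU
  exact lex_of_sibling (w p) (hwCU ▸ prefix_of_le H u CU hCU1)
    (hwBU ▸ prefix_of_le H v BU hBU1) hkey

omit H

lemma not_lex_of_prefix {a b : List ℕ} (h : a <+: b) : ¬ List.Lex (· < ·) b a := by
  rcases eq_or_ne a b with rfl | hne
  · exact lex_irrefl a
  · exact lex_asymm (lex_of_prefix_ne h hne)

/-- the "slack" parameter -/
def Qof (n : ℕ) : ℕ := 2 ^ (Nat.log 2 (Nat.log 2 n + 1) + 2)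

lemma Qof_pos (n : ℕ) : 0 < Qof n := Nat.pow_pos (by norm_num)

lemma Qof_ge (n : ℕ) : 2 * (Nat.log 2 n + 2) ≤ Qof n := by
  have h := Nat.lt_pow_succ_log_self (by norm_num : 1 < 2) (Nat.log 2 n + 1)
  unfold Qof
  have : 2 ^ (Nat.log 2 (Nat.log 2 n + 1) + 2) = 2 * 2 ^ (Nat.log 2 (Nat.log 2 n + 1) + 1) := by
    ring
  omega

lemma Qof_le (n : ℕ) : Qof n ≤ 4 * (Nat.log 2 n + 1) := by
  have h := Nat.pow_log_le_self 2 (show Nat.log 2 n + 1 ≠ 0 by omega)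
  unfold Qof
  have : 2 ^ (Nat.log 2 (Nat.log 2 n + 1) + 2) = 4 * 2 ^ (Nat.log 2 (Nat.log 2 n + 1)) := by
    ring
  omega

/-- trailing gap lengths, defined by well-founded recursion down the forest -/
noncomputable def gap : X → ℕ :=
  (IsWellFounded.wf (α := X) (r := (· < ·))).fix
    (fun c ih => (sz c + ∑ d ∈ (univ.filter (fun d => d < c ∧ isTop d)).attach,
        ih d.1 (mem_filter.mp d.2).2.1) / Qof (Fintype.card X))

/-- region length of the heavy path headed by `c` -/
noncomputable def glen (c : X) : ℕ :=
  sz c + ∑ d ∈ univ.filter (fun d => d < c ∧ isTop d), gap d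

lemma gap_eq (c : X) : gap c = glen c / Qof (Fintype.card X) := by
  rw [glen, ← Finset.sum_attach (univ.filter (fun d => d < c ∧ isTop d)) (fun d => gap d),
    gap, WellFounded.fix_eq]

/-- the DFS position -/
noncomputable def pos (x : X) : ℕ :=
  (univ.filter (fun z : X => List.Lex (· < ·) (w z) (w x))).card
  + ∑ d ∈ univ.filter (fun d => isTop d ∧ List.Lex (· < ·) (w d) (w x) ∧ ¬ x ≤ d), gap d

include H

lemma pos_mono {x y : X} (h : List.Lex (· < ·) (w y) (w x)) : pos y < pos x := by
  have hcard : (univ.filter (fun z : X => List.Lex (· < ·) (w z) (w y))).card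
      < (univ.filter (fun z : X => List.Lex (· < ·) (w z) (w x))).card := by
    apply Finset.card_lt_card
    constructor
    · intro z hz
      simp only [mem_filter, mem_univ, true_and] at hz ⊢
      exact lex_trans hz h
    · intro hsub
      have hy : y ∈ univ.filter (fun z : X => List.Lex (· < ·) (w z) (w x)) := by
        simp only [mem_filter, mem_univ, true_and]; exact h
      have := hsub hy
      simp only [mem_filter, mem_univ, true_and] at this
      exact lex_irrefl _ this
  have hgap : ∑ d ∈ univ.filter (fun d => isTop d ∧ List.Lex (· < ·) (w d) (w y) ∧ ¬ y ≤ d), gap d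
      ≤ ∑ d ∈ univ.filter (fun d => isTop d ∧ List.Lex (· < ·) (w d) (w x) ∧ ¬ x ≤ d), gap d := by
    apply Finset.sum_le_sum_of_subset
    intro d hd
    simp only [mem_filter, mem_univ, true_and] at hd ⊢
    obtain ⟨h1, h2, h3⟩ := hd
    refine ⟨h1, lex_trans h2 h, fun hxd => ?_⟩
    have hpre : w d <+: w y :=
      prefix_of_between (w d) (lex_asymm h2) h (prefix_of_le H x d hxd)
    exact h3 (le_of_prefix H y d hpre)
  unfold pos
  omega

lemma pos_le_of_le {u v : X} (h : u ≤ v) : pos v ≤ pos u := by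
  rcases eq_or_lt_of_le h with rfl | h'
  · exact le_refl _
  · exact (pos_mono H (lex_of_lt H h')).le

/-- everything in the subtree of `t` sits before `pos t + glen t` -/
lemma pos_in_subtree {u t : X} (h : u ≤ t) : pos u + 1 ≤ pos t + glen t := by
  classical
  set NSu := univ.filter (fun z : X => List.Lex (· < ·) (w z) (w u)) with hNSu
  set NSt := univ.filter (fun z : X => List.Lex (· < ·) (w z) (w t)) with hNSt
  set subt := univ.filter (· ≤ t) with hsubt
  have hu_not : u ∉ NSu := by
    simp only [hNSu, mem_filter, mem_univ, true_and]
    exact lex_irrefl _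
  have hdisj : Disjoint NSt subt := by
    rw [Finset.disjoint_left]
    intro z hz hz'
    simp only [hNSt, mem_filter, mem_univ, true_and] at hz
    simp only [hsubt, mem_filter, mem_univ, true_and] at hz'
    exact not_lex_of_prefix (prefix_of_le H z t hz') hz
  have hsub : insert u NSu ⊆ NSt ∪ subt := by
    intro z hz
    rcases Finset.mem_insert.mp hz with rfl | hz
    · exact Finset.mem_union_right _ (by simp [hsubt, h])
    · simp only [hNSu, mem_filter, mem_univ, true_and] at hz
      rcases lex_trichot (w z) (w t) with h1 | h1 | h1
      · exact Finset.mem_union_left _ (by simp only [hNSt, mem_filter, mem_univ, true_and]; exact h1)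
      · have : z = t := w_inj h1
        exact Finset.mem_union_right _ (by simp [hsubt, this.le])
      · have hpre : w t <+: w z :=
          prefix_of_between (w t) (lex_asymm h1) hz (prefix_of_le H u t h)
        exact Finset.mem_union_right _ (by simp [hsubt, le_of_prefix H z t hpre])
  have hcard : NSu.card + 1 ≤ NSt.card + sz t := by
    have h1 : (insert u NSu).card = NSu.card + 1 := Finset.card_insert_of_notMem hu_not
    have h2 := Finset.card_le_card hsub
    rw [h1, Finset.card_union_of_disjoint hdisj] at h2
    have : subt.card = sz t := rfl
    omega
  -- gap part
  set GSu := univ.filter (fun d => isTop d ∧ List.Lex (· < ·) (w d) (w u) ∧ ¬ u ≤ d) with hGSu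
  set GSt := univ.filter (fun d => isTop d ∧ List.Lex (· < ·) (w d) (w t) ∧ ¬ t ≤ d) with hGSt
  set Dlt := univ.filter (fun d => d < t ∧ isTop d) with hDlt
  have hlex_tu : w t <+: w u := prefix_of_le H u t h
  have hgsub : GSu ⊆ GSt ∪ Dlt := by
    intro d hd
    simp only [hGSu, mem_filter, mem_univ, true_and] at hd
    obtain ⟨h1, h2, h3⟩ := hd
    have htd : ¬ t ≤ d := fun htd => h3 (le_trans h htd)
    rcases lex_trichot (w d) (w t) with hc | hc | hc
    · exact Finset.mem_union_left _ (by simp only [hGSt, mem_filter, mem_univ, true_and]; exact ⟨h1, hc, htd⟩)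
    · exact absurd (le_of_eq (w_inj hc).symm) htd
    · have hpre : w t <+: w d := prefix_of_between (w t) (lex_asymm hc) h2 hlex_tu
      have hdt : d ≤ t := le_of_prefix H d t hpre
      have hne : d ≠ t := fun he => htd (he ▸ le_refl d)
      exact Finset.mem_union_right _ (by simp [hDlt, lt_of_le_of_ne hdt hne, h1])
  have hgdisj : Disjoint GSt Dlt := by
    rw [Finset.disjoint_left]
    intro d hd hd'
    simp only [hGSt, mem_filter, mem_univ, true_and] at hd
    simp only [hDlt, mem_filter, mem_univ, true_and] at hd'
    exact lex_asymm hd.2.1 (lex_of_lt H hd'.1)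
  have hgap : ∑ d ∈ GSu, gap d ≤ ∑ d ∈ GSt, gap d + ∑ d ∈ Dlt, gap d := by
    calc ∑ d ∈ GSu, gap d ≤ ∑ d ∈ GSt ∪ Dlt, gap d := Finset.sum_le_sum_of_subset hgsub
    _ = _ := Finset.sum_union hgdisj
  have hposu : pos u = NSu.card + ∑ d ∈ GSu, gap d := rfl
  have hpost : pos t = NSt.card + ∑ d ∈ GSt, gap d := rfl
  have hglent : glen t = sz t + ∑ d ∈ Dlt, gap d := rfl
  omega

/-- everything after the subtree of a *top* `t` sits at or after `pos t + glen t + gap t` -/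
lemma pos_after_subtree {u t : X} (htop : isTop t) (hlex : List.Lex (· < ·) (w t) (w u))
    (hnle : ¬ u ≤ t) : pos t + glen t + gap t ≤ pos u := by
  classical
  set NSu := univ.filter (fun z : X => List.Lex (· < ·) (w z) (w u)) with hNSu
  set NSt := univ.filter (fun z : X => List.Lex (· < ·) (w z) (w t)) with hNSt
  set subt := univ.filter (· ≤ t) with hsubt
  have hnpre : ¬ w t <+: w u := fun hp => hnle (le_of_prefix H u t hp)
  have hdisj : Disjoint NSt subt := by
    rw [Finset.disjoint_left]
    intro z hz hz'
    simp only [hNSt, mem_filter, mem_univ, true_and] at hz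
    simp only [hsubt, mem_filter, mem_univ, true_and] at hz'
    exact not_lex_of_prefix (prefix_of_le H z t hz') hz
  have hsub : NSt ∪ subt ⊆ NSu := by
    intro z hz
    rcases Finset.mem_union.mp hz with hz | hz
    · simp only [hNSt, mem_filter, mem_univ, true_and] at hz
      simp only [hNSu, mem_filter, mem_univ, true_and]
      exact lex_trans hz hlex
    · simp only [hsubt, mem_filter, mem_univ, true_and] at hz
      simp only [hNSu, mem_filter, mem_univ, true_and]
      exact lex_of_lex_of_prefix hlex hnpre (prefix_of_le H z t hz)
  have hcard : NSt.card + sz t ≤ NSu.card := by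
    have := Finset.card_le_card hsub
    rw [Finset.card_union_of_disjoint hdisj] at this
    have hst : subt.card = sz t := rfl
    omega
  set GSu := univ.filter (fun d => isTop d ∧ List.Lex (· < ·) (w d) (w u) ∧ ¬ u ≤ d) with hGSu
  set GSt := univ.filter (fun d => isTop d ∧ List.Lex (· < ·) (w d) (w t) ∧ ¬ t ≤ d) with hGSt
  set Dle := univ.filter (fun d => isTop d ∧ d ≤ t) with hDle
  have hgsub : GSt ∪ Dle ⊆ GSu := by
    intro d hd
    rcases Finset.mem_union.mp hd with hd | hd
    · simp only [hGSt, mem_filter, mem_univ, true_and] at hd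
      obtain ⟨h1, h2, h3⟩ := hd
      simp only [hGSu, mem_filter, mem_univ, true_and]
      refine ⟨h1, lex_trans h2 hlex, fun hud => ?_⟩
      have hpre : w d <+: w t :=
        prefix_of_between (w d) (lex_asymm h2) hlex (prefix_of_le H u d hud)
      exact h3 (le_of_prefix H t d hpre)
    · simp only [hDle, mem_filter, mem_univ, true_and] at hd
      obtain ⟨h1, h2⟩ := hd
      simp only [hGSu, mem_filter, mem_univ, true_and]
      exact ⟨h1, lex_of_lex_of_prefix hlex hnpre (prefix_of_le H d t h2),
        fun hud => hnle (le_trans hud h2)⟩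
  have hgdisj : Disjoint GSt Dle := by
    rw [Finset.disjoint_left]
    intro d hd hd'
    simp only [hGSt, mem_filter, mem_univ, true_and] at hd
    simp only [hDle, mem_filter, mem_univ, true_and] at hd'
    exact not_lex_of_prefix (prefix_of_le H d t hd'.2) hd.2.1
  have hDle_split : ∑ d ∈ Dle, gap d
      = ∑ d ∈ univ.filter (fun d => d < t ∧ isTop d), gap d + gap t := by
    have : Dle = insert t (univ.filter (fun d => d < t ∧ isTop d)) := by
      ext d
      simp only [hDle, mem_filter, mem_univ, true_and, Finset.mem_insert]
      constructor
      · rintro ⟨h1, h2⟩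
        rcases eq_or_lt_of_le h2 with h0 | h0
        · exact Or.inl h0
        · exact Or.inr ⟨h0, h1⟩
      · rintro (rfl | ⟨h1, h2⟩)
        · exact ⟨htop, le_refl _⟩
        · exact ⟨h2, h1.le⟩
    rw [this, Finset.sum_insert (by simp)]
    omega
  have hgap : ∑ d ∈ GSt, gap d + ∑ d ∈ Dle, gap d ≤ ∑ d ∈ GSu, gap d := by
    calc ∑ d ∈ GSt, gap d + ∑ d ∈ Dle, gap d = ∑ d ∈ GSt ∪ Dle, gap d :=
          (Finset.sum_union hgdisj).symm
    _ ≤ _ := Finset.sum_le_sum_of_subset hgsub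
  have hposu : pos u = NSu.card + ∑ d ∈ GSu, gap d := rfl
  have hpost : pos t = NSt.card + ∑ d ∈ GSt, gap d := rfl
  have hglent : glen t = sz t + ∑ d ∈ univ.filter (fun d => d < t ∧ isTop d), gap d := rfl
  omega

lemma light_sz {d c : X} (hdc : d < c) (htop : isTop d) : 2 * sz d < sz c := by
  have hpd : hasParent d := ⟨c, hdc⟩
  have h1 := light_double H hpd htop
  have h2 : parent d ≤ c := parent_min H hdc
  have := sz_mono h2
  omega

lemma count_tops_above (u c : X) :
    (univ.filter (fun d => (d < c ∧ isTop d) ∧ u ≤ d)).card ≤ Nat.log 2 (sz c) := by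
  refine le_trans (Finset.card_le_card_of_injOn (fun d => Nat.log 2 (sz d))
    (t := Finset.range (Nat.log 2 (sz c))) ?_ ?_) (le_of_eq (Finset.card_range _))
  · intro d hd
    simp only [Finset.mem_coe, mem_filter, mem_univ, true_and] at hd
    obtain ⟨⟨h1, h2⟩, _⟩ := hd
    have h3 : 2 * sz d < sz c := light_sz H h1 h2
    have h4 : Nat.log 2 (sz d * 2) = Nat.log 2 (sz d) + 1 :=
      Nat.log_mul_base (by norm_num) (by have := sz_pos d; omega)
    have h5 : Nat.log 2 (sz d * 2) ≤ Nat.log 2 (sz c) := Nat.log_mono_right (by omega)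
    simp only [Finset.mem_coe, Finset.mem_range]
    omega
  · intro d hd e he hde
    simp only [Finset.coe_filter, Set.mem_setOf_eq, mem_univ, true_and] at hd he
    obtain ⟨⟨hd1, hd2⟩, hd3⟩ := hd
    obtain ⟨⟨he1, he2⟩, he3⟩ := he
    by_contra hne
    have key : ∀ d' e' : X, d' < e' → isTop d' → u ≤ e' →
        Nat.log 2 (sz d') < Nat.log 2 (sz e') := by
      intro d' e' h1 h2 _
      have hpd : hasParent d' := ⟨e', h1⟩
      have := light_double H hpd h2
      have h3 : parent d' ≤ e' := parent_min H h1
      have h4 := sz_mono h3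
      have h5 : Nat.log 2 (sz d' * 2) = Nat.log 2 (sz d') + 1 :=
        Nat.log_mul_base (by norm_num) (by have := sz_pos d'; omega)
      have h6 : Nat.log 2 (sz d' * 2) ≤ Nat.log 2 (sz e') := Nat.log_mono_right (by omega)
      omega
    rcases comparable_of_above H hd3 he3 with h | h
    · rcases eq_or_lt_of_le h with h0 | h0
      · exact hne h0
      · exact absurd hde (by have := key d e h0 hd2 he3; simp only []; omega)
    · rcases eq_or_lt_of_le h with h0 | h0
      · exact hne h0.symm
      · exact absurd hde (by have := key e d h0 he2 hd3; simp only []; omega)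

omit H

lemma sum_sz_eq (D : Finset X) :
    ∑ d ∈ D, sz d = ∑ u ∈ (univ : Finset X), (D.filter (fun d => u ≤ d)).card := by
  have h1 : ∀ d : X, sz d = ∑ u ∈ (univ : Finset X), (if u ≤ d then 1 else 0) := by
    intro d; unfold sz; rw [Finset.card_filter]
  calc ∑ d ∈ D, sz d = ∑ d ∈ D, ∑ u ∈ (univ : Finset X), (if u ≤ d then 1 else 0) := by
        exact Finset.sum_congr rfl (fun d _ => h1 d)
  _ = ∑ u ∈ (univ : Finset X), ∑ d ∈ D, (if u ≤ d then 1 else 0) := Finset.sum_comm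
  _ = ∑ u ∈ (univ : Finset X), (D.filter (fun d => u ≤ d)).card := by
        exact Finset.sum_congr rfl (fun u _ => (Finset.card_filter _ _).symm)

lemma sum_sz_le (D : Finset X) (S : Finset X) (B : ℕ)
    (hsub : ∀ u, (D.filter (fun d => u ≤ d)).Nonempty → u ∈ S)
    (hcount : ∀ u, (D.filter (fun d => u ≤ d)).card ≤ B) :
    ∑ d ∈ D, sz d ≤ S.card * B := by
  rw [sum_sz_eq]
  have h2 : ∑ u ∈ (univ : Finset X), (D.filter (fun d => u ≤ d)).card
      = ∑ u ∈ S, (D.filter (fun d => u ≤ d)).card := by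
    refine (Finset.sum_subset (Finset.subset_univ S) ?_).symm
    intro u _ hu
    rcases Finset.eq_empty_or_nonempty (D.filter (fun d => u ≤ d)) with he | hne
    · rw [he]; rfl
    · exact absurd (hsub u hne) hu
  rw [h2]
  calc ∑ u ∈ S, (D.filter (fun d => u ≤ d)).card ≤ ∑ u ∈ S, B :=
        Finset.sum_le_sum (fun u _ => hcount u)
  _ = S.card * B := by rw [Finset.sum_const, smul_eq_mul]

include H

lemma sum_sz_tops (c : X) :
    ∑ d ∈ univ.filter (fun d => d < c ∧ isTop d), sz d
      ≤ sz c * Nat.log 2 (sz c) := by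
  have := sum_sz_le (univ.filter (fun d => d < c ∧ isTop d)) (univ.filter (· ≤ c))
    (Nat.log 2 (sz c)) ?_ ?_
  · exact le_of_le_of_eq this rfl
  · intro u hne
    obtain ⟨d, hd⟩ := hne
    rw [Finset.filter_filter] at hd
    simp only [mem_filter, mem_univ, true_and] at hd
    simp only [mem_filter, mem_univ, true_and]
    exact le_trans hd.2 hd.1.1.le
  · intro u
    rw [Finset.filter_filter]
    exact count_tops_above H u c

lemma count_tops_above_global (u : X) :
    (univ.filter (fun d => (hasParent d ∧ isTop d) ∧ u ≤ d)).card
      ≤ Nat.log 2 (Fintype.card X) := by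
  refine le_trans (Finset.card_le_card_of_injOn (fun d => Nat.log 2 (sz d))
    (t := Finset.range (Nat.log 2 (Fintype.card X))) ?_ ?_) (le_of_eq (Finset.card_range _))
  · intro d hd
    simp only [Finset.mem_coe, mem_filter, mem_univ, true_and] at hd
    obtain ⟨⟨h1, h2⟩, _⟩ := hd
    have h3 : 2 * sz d < sz (parent d) := light_double H h1 h2
    have h3' : sz (parent d) ≤ Fintype.card X := sz_le_card _
    have h4 : Nat.log 2 (sz d * 2) = Nat.log 2 (sz d) + 1 :=
      Nat.log_mul_base (by norm_num) (by have := sz_pos d; omega)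
    have h5 : Nat.log 2 (sz d * 2) ≤ Nat.log 2 (Fintype.card X) :=
      Nat.log_mono_right (by omega)
    simp only [Finset.mem_coe, Finset.mem_range]
    omega
  · intro d hd e he hde
    simp only [Finset.coe_filter, Set.mem_setOf_eq, mem_univ, true_and] at hd he
    obtain ⟨⟨hd1, hd2⟩, hd3⟩ := hd
    obtain ⟨⟨he1, he2⟩, he3⟩ := he
    by_contra hne
    have key : ∀ d' e' : X, d' < e' → isTop d' →
        Nat.log 2 (sz d') < Nat.log 2 (sz e') := by
      intro d' e' h1 h2
      have h3 := light_sz H h1 h2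
      have h5 : Nat.log 2 (sz d' * 2) = Nat.log 2 (sz d') + 1 :=
        Nat.log_mul_base (by norm_num) (by have := sz_pos d'; omega)
      have h6 : Nat.log 2 (sz d' * 2) ≤ Nat.log 2 (sz e') := Nat.log_mono_right (by omega)
      omega
    rcases comparable_of_above H hd3 he3 with h | h
    · rcases eq_or_lt_of_le h with h0 | h0
      · exact hne h0
      · exact absurd hde (by have := key d e h0 hd2; simp only []; omega)
    · rcases eq_or_lt_of_le h with h0 | h0
      · exact hne h0.symm
      · exact absurd hde (by have := key e d h0 he2; simp only []; omega)

lemma sum_sz_tops_global :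
    ∑ d ∈ univ.filter (fun d : X => hasParent d ∧ isTop d), sz d
      ≤ Fintype.card X * Nat.log 2 (Fintype.card X) := by
  have := sum_sz_le (univ.filter (fun d : X => hasParent d ∧ isTop d)) univ
    (Nat.log 2 (Fintype.card X)) (fun u _ => Finset.mem_univ u) ?_
  · simpa using this
  · intro u
    rw [Finset.filter_filter]
    exact count_tops_above_global H u

lemma sum_sz_maximal :
    ∑ d ∈ univ.filter (fun d : X => ¬ hasParent d), sz d ≤ Fintype.card X := by
  classical
  have hdisj : ∀ d ∈ univ.filter (fun d : X => ¬ hasParent d),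
      ∀ e ∈ univ.filter (fun d : X => ¬ hasParent d), d ≠ e →
      Disjoint (univ.filter (· ≤ d)) (univ.filter (· ≤ e)) := by
    intro d hd e he hne
    simp only [mem_filter, mem_univ, true_and] at hd he
    rw [Finset.disjoint_left]
    intro z hz hz'
    simp only [mem_filter, mem_univ, true_and] at hz hz'
    rcases comparable_of_above H hz hz' with h | h
    · rcases eq_or_lt_of_le h with h0 | h0
      · exact hne h0
      · exact hd ⟨e, h0⟩
    · rcases eq_or_lt_of_le h with h0 | h0
      · exact hne h0.symm
      · exact he ⟨d, h0⟩
  calc ∑ d ∈ univ.filter (fun d : X => ¬ hasParent d), sz d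
      = ((univ.filter (fun d : X => ¬ hasParent d)).biUnion (fun d => univ.filter (· ≤ d))).card :=
        (Finset.card_biUnion hdisj).symm
  _ ≤ Fintype.card X := by
      have := Finset.card_le_card (Finset.subset_univ
        ((univ.filter (fun d : X => ¬ hasParent d)).biUnion (fun d => univ.filter (· ≤ d))))
      simpa using this

lemma glen_le (c : X) : glen c ≤ 2 * sz c := by
  induction c using ((IsWellFounded.wf (α := X) (r := (· < ·)))).induction with
  | _ c ih =>
  have hQ : 0 < Qof (Fintype.card X) := Qof_pos _
  set Q := Qof (Fintype.card X) with hQdef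
  set D := univ.filter (fun d => d < c ∧ isTop d) with hD
  have hsum : Q * ∑ d ∈ D, gap d ≤ ∑ d ∈ D, glen d := by
    rw [Finset.mul_sum]
    refine Finset.sum_le_sum (fun d _ => ?_)
    rw [gap_eq d, mul_comm]
    exact Nat.div_mul_le_self _ _
  have hsum2 : ∑ d ∈ D, glen d ≤ 2 * ∑ d ∈ D, sz d := by
    rw [Finset.mul_sum]
    refine Finset.sum_le_sum (fun d hd => ?_)
    simp only [hD, mem_filter, mem_univ, true_and] at hd
    exact ih d hd.1
  have hsum3 : ∑ d ∈ D, sz d ≤ sz c * Nat.log 2 (sz c) := sum_sz_tops H c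
  have hlog : Nat.log 2 (sz c) ≤ Nat.log 2 (Fintype.card X) :=
    Nat.log_mono_right (sz_le_card c)
  have hQge : 2 * (Nat.log 2 (Fintype.card X) + 2) ≤ Q := Qof_ge _
  have hfinal : Q * ∑ d ∈ D, gap d ≤ Q * sz c := by
    calc Q * ∑ d ∈ D, gap d ≤ 2 * (sz c * Nat.log 2 (sz c)) := by omega
    _ ≤ 2 * (sz c * Nat.log 2 (Fintype.card X)) := by
        exact Nat.mul_le_mul_left _ (Nat.mul_le_mul_left _ hlog)
    _ ≤ Q * sz c := by
        have h1 : 2 * (sz c * Nat.log 2 (Fintype.card X))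
            = (2 * Nat.log 2 (Fintype.card X)) * sz c := by ring
        have h2 : 2 * Nat.log 2 (Fintype.card X) ≤ Q := by omega
        rw [h1]
        exact Nat.mul_le_mul_right _ h2
  have : ∑ d ∈ D, gap d ≤ sz c := Nat.le_of_mul_le_mul_left hfinal hQ
  have hglen : glen c = sz c + ∑ d ∈ D, gap d := rfl
  omega

lemma sum_gap_global :
    ∑ d ∈ univ.filter (fun d : X => isTop d), gap d ≤ Fintype.card X := by
  classical
  have hQ : 0 < Qof (Fintype.card X) := Qof_pos _
  set Q := Qof (Fintype.card X) with hQdef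
  set T := univ.filter (fun d : X => isTop d) with hT
  have hsum : Q * ∑ d ∈ T, gap d ≤ ∑ d ∈ T, glen d := by
    rw [Finset.mul_sum]
    refine Finset.sum_le_sum (fun d _ => ?_)
    rw [gap_eq d, mul_comm]
    exact Nat.div_mul_le_self _ _
  have hsum2 : ∑ d ∈ T, glen d ≤ 2 * ∑ d ∈ T, sz d := by
    rw [Finset.mul_sum]
    exact Finset.sum_le_sum (fun d _ => glen_le H d)
  have hsplit : T = univ.filter (fun d => hasParent d ∧ isTop d)
      ∪ univ.filter (fun d => ¬ hasParent d ∧ isTop d) := by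
    ext d
    simp only [hT, mem_filter, mem_univ, true_and, Finset.mem_union]
    by_cases h : hasParent d <;> simp [h]
  have hdisj2 : Disjoint (univ.filter (fun d : X => hasParent d ∧ isTop d))
      (univ.filter (fun d : X => ¬ hasParent d ∧ isTop d)) := by
    rw [Finset.disjoint_left]
    intro d hd hd'
    simp only [mem_filter, mem_univ, true_and] at hd hd'
    exact hd'.1 hd.1
  have hsz : ∑ d ∈ T, sz d ≤ Fintype.card X * Nat.log 2 (Fintype.card X) + Fintype.card X := by
    rw [hsplit, Finset.sum_union hdisj2]
    have h1 := sum_sz_tops_global H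
    have h2 : ∑ d ∈ univ.filter (fun d : X => ¬ hasParent d ∧ isTop d), sz d
        ≤ ∑ d ∈ univ.filter (fun d : X => ¬ hasParent d), sz d := by
      apply Finset.sum_le_sum_of_subset
      intro d hd
      simp only [mem_filter, mem_univ, true_and] at hd ⊢
      exact hd.1
    have h3 := sum_sz_maximal H
    omega
  have hQge : 2 * (Nat.log 2 (Fintype.card X) + 2) ≤ Q := Qof_ge _
  have hfinal : Q * ∑ d ∈ T, gap d ≤ Q * Fintype.card X := by
    calc Q * ∑ d ∈ T, gap d
        ≤ 2 * (Fintype.card X * Nat.log 2 (Fintype.card X) + Fintype.card X) := by omega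
    _ ≤ Q * Fintype.card X := by
        have h1 : 2 * (Fintype.card X * Nat.log 2 (Fintype.card X) + Fintype.card X)
            = (2 * (Nat.log 2 (Fintype.card X) + 1)) * Fintype.card X := by ring
        rw [h1]
        exact Nat.mul_le_mul_right _ (by omega)
  exact Nat.le_of_mul_le_mul_left hfinal hQ

lemma pos_le (x : X) : pos x ≤ 2 * Fintype.card X := by
  have h1 : (univ.filter (fun z : X => List.Lex (· < ·) (w z) (w x))).card
      ≤ Fintype.card X := by
    simpa using Finset.card_le_card (Finset.subset_univ _)
  have h2 : ∑ d ∈ univ.filter (fun d => isTop d ∧ List.Lex (· < ·) (w d) (w x) ∧ ¬ x ≤ d), gap d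
      ≤ ∑ d ∈ univ.filter (fun d : X => isTop d), gap d := by
    apply Finset.sum_le_sum_of_subset
    intro d hd
    simp only [mem_filter, mem_univ, true_and] at hd ⊢
    exact hd.1
  have h3 := sum_gap_global H
  have : pos x = (univ.filter (fun z : X => List.Lex (· < ·) (w z) (w x))).card
      + ∑ d ∈ univ.filter (fun d => isTop d ∧ List.Lex (· < ·) (w d) (w x) ∧ ¬ x ≤ d), gap d := rfl
  omega

omit H

/-! ### Encoding layer -/

def Qm (m : ℕ) : ℕ := 2 ^ (Nat.log 2 (m + 1) + 2)

lemma Qof_eq (n : ℕ) : Qof n = Qm (Nat.log 2 n) := rfl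

lemma Qm_pos (m : ℕ) : 0 < Qm m := Nat.pow_pos (by norm_num)

lemma Qm_ge (m : ℕ) : 2 * (m + 2) ≤ Qm m := by
  have h := Nat.lt_pow_succ_log_self (by norm_num : 1 < 2) (m + 1)
  unfold Qm
  have : 2 ^ (Nat.log 2 (m + 1) + 2) = 2 * 2 ^ (Nat.log 2 (m + 1) + 1) := by ring
  omega

lemma Qm_le (m : ℕ) : Qm m ≤ 4 * (m + 1) := by
  have h := Nat.pow_log_le_self 2 (show m + 1 ≠ 0 by omega)
  unfold Qm
  have : 2 ^ (Nat.log 2 (m + 1) + 2) = 4 * 2 ^ (Nat.log 2 (m + 1)) := by ring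
  omega

lemma Qm_mono {k m : ℕ} (h : k ≤ m) : Qm k ≤ Qm m := by
  unfold Qm
  have h1 : Nat.log 2 (k + 1) ≤ Nat.log 2 (m + 1) := Nat.log_mono_right (by omega)
  exact Nat.pow_le_pow_right (by norm_num) (by omega)

def Bm (m : ℕ) : ℕ := 3 * Qm m + 2
def Am (m : ℕ) : ℕ := (m + 2) * Bm m
def Rm (m : ℕ) : ℕ := 2 ^ (m + 2) * Am m
def Fm (m : ℕ) : ℕ := ∑ k ∈ Finset.range m, Rm k

lemma Bm_pos (m : ℕ) : 0 < Bm m := by unfold Bm; omega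
lemma Am_pos (m : ℕ) : 0 < Am m := Nat.mul_pos (by omega) (Bm_pos m)
lemma Rm_pos (m : ℕ) : 0 < Rm m := Nat.mul_pos (Nat.pow_pos (by norm_num)) (Am_pos m)

lemma Rm_mono {k m : ℕ} (h : k ≤ m) : Rm k ≤ Rm m := by
  unfold Rm Am Bm
  have h1 := Qm_mono h
  have h2 : (2:ℕ) ^ (k + 2) ≤ 2 ^ (m + 2) := Nat.pow_le_pow_right (by norm_num) (by omega)
  exact Nat.mul_le_mul h2 (Nat.mul_le_mul (by omega) (by omega))

lemma Fm_succ (m : ℕ) : Fm (m + 1) = Fm m + Rm m := Finset.sum_range_succ _ _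

lemma Fm_mono {k m : ℕ} (h : k ≤ m) : Fm k ≤ Fm m :=
  Finset.sum_le_sum_of_subset (Finset.range_subset_range.mpr h)

lemma le_Fm (m : ℕ) : m ≤ Fm m := by
  calc m = ∑ _k ∈ Finset.range m, 1 := by simp
  _ ≤ Fm m := Finset.sum_le_sum (fun k _ => Rm_pos k)

lemma Fm_le (m : ℕ) : Fm (m + 1) ≤ (m + 1) * Rm m := by
  calc Fm (m + 1) = ∑ k ∈ Finset.range (m + 1), Rm k := rfl
  _ ≤ ∑ _k ∈ Finset.range (m + 1), Rm m :=
      Finset.sum_le_sum (fun k hk => Rm_mono (by simp at hk; omega))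
  _ = (m + 1) * Rm m := by rw [Finset.sum_const, Finset.card_range, smul_eq_mul]

lemma parse_m {m o : ℕ} (ho : o < Rm m) :
    Nat.findGreatest (fun k => Fm k ≤ Fm m + o) (Fm m + o) = m := by
  have h1 : m ≤ Nat.findGreatest (fun k => Fm k ≤ Fm m + o) (Fm m + o) :=
    Nat.le_findGreatest (le_trans (le_Fm m) (Nat.le_add_right _ _)) (Nat.le_add_right _ _)
  have h2 : Nat.findGreatest (fun k => Fm k ≤ Fm m + o) (Fm m + o) ≤ m := by
    by_contra hc
    push_neg at hc
    have hspec : Fm (Nat.findGreatest (fun k => Fm k ≤ Fm m + o) (Fm m + o)) ≤ Fm m + o :=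
      Nat.findGreatest_spec (P := fun k => Fm k ≤ Fm m + o)
        (le_trans (le_Fm m) (Nat.le_add_right _ _)) (Nat.le_add_right _ _)
    have h3 : Fm (m + 1) ≤ Fm (Nat.findGreatest (fun k => Fm k ≤ Fm m + o) (Fm m + o)) :=
      Fm_mono hc
    rw [Fm_succ] at h3
    omega
  omega

/-- the decoder -/
def dec (p q : ℕ) : Bool :=
  let m := Nat.findGreatest (fun k => Fm k ≤ p) p
  let av := (p - Fm m) / Am m
  let code := (p - Fm m) % Am m
  let e := code / Bm m
  let mm := code % Bm m
  let au := (q - Fm m) / Am m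
  decide (av ≤ au ∧ au < av + mm * 2 ^ e)

/-! ### Per-element label data -/

noncomputable def boff (x : X) : ℕ := pos (top x) + glen (top x) - pos x
noncomputable def ex (x : X) : ℕ :=
  Nat.log 2 (max 1 (boff x / Qof (Fintype.card X)))
noncomputable def mant (x : X) : ℕ := (boff x + 2 ^ ex x - 1) / 2 ^ ex x
noncomputable def dhat (x : X) : ℕ := mant x * 2 ^ ex x
noncomputable def code (x : X) : ℕ := ex x * Bm (Nat.log 2 (Fintype.card X)) + mant x
noncomputable def lab (x : X) : ℕ :=
  Fm (Nat.log 2 (Fintype.card X))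
    + (pos x * Am (Nat.log 2 (Fintype.card X)) + code x)

include H

lemma boff_pos (x : X) : 1 ≤ boff x := by
  have := pos_in_subtree H (le_top x)
  unfold boff
  omega

lemma pos_add_boff (x : X) : pos x + boff x = pos (top x) + glen (top x) := by
  have := pos_in_subtree H (le_top x)
  unfold boff
  omega

lemma boff_le (x : X) : boff x ≤ glen (top x) := by
  have := pos_le_of_le H (le_top x)
  unfold boff
  omega

lemma le_dhat (x : X) : boff x ≤ dhat x := by
  unfold dhat mant
  have hD : 0 < 2 ^ ex x := Nat.pow_pos (by norm_num)
  have h1 := Nat.div_add_mod (boff x + 2 ^ ex x - 1) (2 ^ ex x)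
  have h2 : (boff x + 2 ^ ex x - 1) % 2 ^ ex x < 2 ^ ex x := Nat.mod_lt _ hD
  have hb := boff_pos H x
  -- boff + D - 1 = D * q + r, r < D  ⇒  boff ≤ q * D
  set q := (boff x + 2 ^ ex x - 1) / 2 ^ ex x
  set r := (boff x + 2 ^ ex x - 1) % 2 ^ ex x
  have : q * 2 ^ ex x = 2 ^ ex x * q := Nat.mul_comm _ _
  omega

lemma dhat_le (x : X) : dhat x ≤ boff x + gap (top x) := by
  have hD : 0 < 2 ^ ex x := Nat.pow_pos (by norm_num)
  have hb := boff_pos H x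
  have h1 : dhat x ≤ boff x + 2 ^ ex x - 1 := by
    unfold dhat mant
    have := Nat.div_mul_le_self (boff x + 2 ^ ex x - 1) (2 ^ ex x)
    omega
  rcases Nat.eq_zero_or_pos (boff x / Qof (Fintype.card X)) with hz | hz
  · have : ex x = 0 := by unfold ex; rw [hz]; simp
    rw [this] at h1
    simp at h1
    omega
  · have hex : ex x = Nat.log 2 (boff x / Qof (Fintype.card X)) := by
      unfold ex
      rw [Nat.max_eq_right hz]
    have h2 : 2 ^ ex x ≤ boff x / Qof (Fintype.card X) := by
      rw [hex]
      exact Nat.pow_log_le_self 2 (by omega)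
    have h3 : boff x / Qof (Fintype.card X) ≤ glen (top x) / Qof (Fintype.card X) :=
      Nat.div_le_div_right (boff_le H x)
    rw [← gap_eq] at h3
    omega

lemma mant_le (x : X) : mant x ≤ 3 * Qof (Fintype.card X) + 1 := by
  have hQ : 0 < Qof (Fintype.card X) := Qof_pos _
  have hb := boff_pos H x
  have hD : 0 < 2 ^ ex x := Nat.pow_pos (by norm_num)
  rcases Nat.eq_zero_or_pos (boff x / Qof (Fintype.card X)) with hz | hz
  · have he : ex x = 0 := by unfold ex; rw [hz]; simp
    have hlt : boff x < Qof (Fintype.card X) := by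
      by_contra hc
      push_neg at hc
      have := Nat.div_pos hc hQ
      omega
    unfold mant
    rw [he]
    simp
    omega
  · have hex : ex x = Nat.log 2 (boff x / Qof (Fintype.card X)) := by
      unfold ex
      rw [Nat.max_eq_right hz]
    have h2 : boff x / Qof (Fintype.card X) < 2 ^ (ex x + 1) := by
      rw [hex]
      exact Nat.lt_pow_succ_log_self (by norm_num) _
    have h3 : boff x < Qof (Fintype.card X) * 2 ^ (ex x + 1) := by
      have h4 := Nat.div_add_mod (boff x) (Qof (Fintype.card X))
      have h5 : boff x % Qof (Fintype.card X) < Qof (Fintype.card X) := Nat.mod_lt _ hQ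
      have h6 : boff x / Qof (Fintype.card X) ≤ 2 ^ (ex x + 1) - 1 := by omega
      have h7 : Qof (Fintype.card X) * (boff x / Qof (Fintype.card X))
          ≤ Qof (Fintype.card X) * (2 ^ (ex x + 1) - 1) := Nat.mul_le_mul_left _ h6
      have h8 : Qof (Fintype.card X) * (2 ^ (ex x + 1) - 1) + Qof (Fintype.card X)
          = Qof (Fintype.card X) * 2 ^ (ex x + 1) := by
        have ha : (1:ℕ) ≤ 2 ^ (ex x + 1) := Nat.one_le_two_pow
        have hb2 : Qof (Fintype.card X) * (2 ^ (ex x + 1) - 1)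
            = Qof (Fintype.card X) * 2 ^ (ex x + 1) - Qof (Fintype.card X) := by
          rw [Nat.mul_sub, Nat.mul_one]
        have hc2 : Qof (Fintype.card X) ≤ Qof (Fintype.card X) * 2 ^ (ex x + 1) :=
          Nat.le_mul_of_pos_right _ (by positivity)
        omega
      omega
    have hmant : mant x = (boff x - 1) / 2 ^ ex x + 1 := by
      unfold mant
      rw [show boff x + 2 ^ ex x - 1 = (boff x - 1) + 1 * 2 ^ ex x by omega]
      rw [Nat.add_mul_div_right _ _ hD]
    have h9 : (boff x - 1) / 2 ^ ex x < 2 * Qof (Fintype.card X) := by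
      rw [Nat.div_lt_iff_lt_mul hD]
      have : 2 * Qof (Fintype.card X) * 2 ^ ex x = Qof (Fintype.card X) * 2 ^ (ex x + 1) := by
        ring
      omega
    omega

lemma ex_le (x : X) : ex x ≤ Nat.log 2 (Fintype.card X) + 1 := by
  have hb := boff_pos H x
  have h1 : boff x ≤ 2 * Fintype.card X := by
    have h2 := boff_le H x
    have h3 := glen_le H (top x)
    have h4 := sz_le_card (top x)
    omega
  have h5 : Fintype.card X < 2 ^ (Nat.log 2 (Fintype.card X) + 1) :=
    Nat.lt_pow_succ_log_self (by norm_num) _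
  have h6 : max 1 (boff x / Qof (Fintype.card X)) < 2 ^ (Nat.log 2 (Fintype.card X) + 2) := by
    have h7 : boff x / Qof (Fintype.card X) ≤ boff x := Nat.div_le_self _ _
    have h8 : (2:ℕ) ^ (Nat.log 2 (Fintype.card X) + 2)
        = 2 * 2 ^ (Nat.log 2 (Fintype.card X) + 1) := by ring
    have h9 : (1:ℕ) ≤ 2 ^ (Nat.log 2 (Fintype.card X) + 1) := Nat.one_le_two_pow
    simp only [max_lt_iff]
    omega
  have := Nat.log_lt_of_lt_pow (show max 1 (boff x / Qof (Fintype.card X)) ≠ 0 by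
    simp) h6
  unfold ex
  omega

lemma pos_lt_pow (x : X) : pos x < 2 ^ (Nat.log 2 (Fintype.card X) + 2) - 1 := by
  have h1 := pos_le H x
  have h2 : Fintype.card X < 2 ^ (Nat.log 2 (Fintype.card X) + 1) :=
    Nat.lt_pow_succ_log_self (by norm_num) _
  have h3 : (2:ℕ) ^ (Nat.log 2 (Fintype.card X) + 2)
      = 2 * 2 ^ (Nat.log 2 (Fintype.card X) + 1) := by ring
  omega

lemma code_lt (x : X) : code x < Am (Nat.log 2 (Fintype.card X)) := by
  have h1 := ex_le H x
  have h2 := mant_le H x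
  rw [Qof_eq] at h2
  have hB := Bm_pos (Nat.log 2 (Fintype.card X))
  have h3 : mant x < Bm (Nat.log 2 (Fintype.card X)) := by unfold Bm; omega
  have h4 : ex x * Bm (Nat.log 2 (Fintype.card X))
      ≤ (Nat.log 2 (Fintype.card X) + 1) * Bm (Nat.log 2 (Fintype.card X)) :=
    Nat.mul_le_mul_right _ h1
  have h5 : Am (Nat.log 2 (Fintype.card X))
      = (Nat.log 2 (Fintype.card X) + 1) * Bm (Nat.log 2 (Fintype.card X))
        + Bm (Nat.log 2 (Fintype.card X)) := by
    unfold Am; ring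
  unfold code
  omega

lemma off_lt (x : X) :
    pos x * Am (Nat.log 2 (Fintype.card X)) + code x < Rm (Nat.log 2 (Fintype.card X)) := by
  have h1 := pos_lt_pow H x
  have h2 := code_lt H x
  set m := Nat.log 2 (Fintype.card X)
  have h3 : pos x * Am m ≤ (2 ^ (m + 2) - 2) * Am m :=
    Nat.mul_le_mul_right _ (by omega)
  have h4 : Rm m = 2 ^ (m + 2) * Am m := rfl
  have h5 : (2:ℕ) ^ (m + 2) ≥ 2 := by
    have : (2:ℕ) ^ (m + 2) ≥ 2 ^ 1 := Nat.pow_le_pow_right (by norm_num) (by omega)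
    omega
  have h6 : (2 ^ (m + 2) - 2) * Am m + 2 * Am m = 2 ^ (m + 2) * Am m := by
    calc (2 ^ (m + 2) - 2) * Am m + 2 * Am m = ((2 ^ (m + 2) - 2) + 2) * Am m :=
          (Nat.add_mul _ _ _).symm
    _ = 2 ^ (m + 2) * Am m := by rw [Nat.sub_add_cancel h5]
  have := Am_pos m
  omega

lemma lab_eq (x : X) : lab x = Fm (Nat.log 2 (Fintype.card X))
    + (pos x * Am (Nat.log 2 (Fintype.card X)) + code x) := rfl

lemma lab_parse_m (x : X) :
    Nat.findGreatest (fun k => Fm k ≤ lab x) (lab x) = Nat.log 2 (Fintype.card X) := by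
  rw [lab_eq H]
  exact parse_m (off_lt H x)

lemma lab_sub_Fm (x : X) : lab x - Fm (Nat.log 2 (Fintype.card X))
    = code x + Am (Nat.log 2 (Fintype.card X)) * pos x := by
  have hc : pos x * Am (Nat.log 2 (Fintype.card X))
      = Am (Nat.log 2 (Fintype.card X)) * pos x := mul_comm _ _
  rw [lab_eq H]
  omega

lemma lab_parse_pos (x : X) :
    (lab x - Fm (Nat.log 2 (Fintype.card X))) / Am (Nat.log 2 (Fintype.card X)) = pos x := by
  rw [lab_sub_Fm H, Nat.add_mul_div_left _ _ (Am_pos _), Nat.div_eq_of_lt (code_lt H x)]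
  omega

lemma lab_parse_code (x : X) :
    (lab x - Fm (Nat.log 2 (Fintype.card X))) % Am (Nat.log 2 (Fintype.card X)) = code x := by
  rw [lab_sub_Fm H, Nat.add_mul_mod_self_left, Nat.mod_eq_of_lt (code_lt H x)]

lemma code_eq (x : X) : code x = mant x + Bm (Nat.log 2 (Fintype.card X)) * ex x := by
  unfold code
  have hc : ex x * Bm (Nat.log 2 (Fintype.card X))
      = Bm (Nat.log 2 (Fintype.card X)) * ex x := mul_comm _ _
  omega

lemma mant_lt_Bm (x : X) : mant x < Bm (Nat.log 2 (Fintype.card X)) := by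
  have h2 := mant_le H x
  rw [Qof_eq] at h2
  unfold Bm
  omega

lemma code_parse_ex (x : X) :
    code x / Bm (Nat.log 2 (Fintype.card X)) = ex x := by
  rw [code_eq H, Nat.add_mul_div_left _ _ (Bm_pos _), Nat.div_eq_of_lt (mant_lt_Bm H x)]
  omega

lemma code_parse_mant (x : X) :
    code x % Bm (Nat.log 2 (Fintype.card X)) = mant x := by
  rw [code_eq H, Nat.add_mul_mod_self_left, Nat.mod_eq_of_lt (mant_lt_Bm H x)]

lemma dec_eval (u v : X) :
    dec (lab v) (lab u) = true ↔ (pos v ≤ pos u ∧ pos u < pos v + dhat v) := by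
  unfold dec
  simp only [lab_parse_m H v]
  rw [lab_parse_pos H v, lab_parse_code H v, code_parse_ex H v, code_parse_mant H v,
    lab_parse_pos H u]
  rw [decide_eq_true_iff]
  have : mant v * 2 ^ ex v = dhat v := rfl
  rw [this]

lemma main_iff (u v : X) :
    u ≤ v ↔ (pos v ≤ pos u ∧ pos u < pos v + dhat v) := by
  constructor
  · intro h
    refine ⟨pos_le_of_le H h, ?_⟩
    have h1 : pos u + 1 ≤ pos (top v) + glen (top v) :=
      pos_in_subtree H (le_trans h (le_top v))
    have h2 := pos_add_boff H v
    have h3 := le_dhat H v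
    omega
  · intro ⟨h1, h2⟩
    by_contra hc
    rcases eq_or_ne u v with rfl | hne
    · exact hc (le_refl u)
    · by_cases hvu : v ≤ u
      · -- u is a strict ancestor of v, so pos u < pos v
        have : v < u := lt_of_le_of_ne hvu (fun h => hne h.symm)
        have := pos_mono H (lex_of_lt H this)
        omega
      · rcases lex_total H (u := u) (v := v) hne with hl | hl
        · have := pos_mono H hl
          omega
        · -- v comes before u in DFS order
          have hut : ¬ u ≤ top v := by
            intro hut
            exact lex_asymm hl (hp_lemma H hut hc hvu)
          have hlt : List.Lex (· < ·) (w (top v)) (w u) := by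
            rcases eq_or_lt_of_le (le_top v) with he | hlt2
            · rw [← he]; exact hl
            · exact lex_trans (lex_of_lt H hlt2) hl
          have h4 : pos (top v) + glen (top v) + gap (top v) ≤ pos u :=
            pos_after_subtree H (top_isTop H v) hlt hut
          have h5 := pos_add_boff H v
          have h6 := dhat_le H v
          omega

lemma lab_inj : Function.Injective (lab (X := X)) := by
  intro x y h
  by_contra hne
  have hpos : pos x = pos y := by
    have h1 := lab_parse_pos H x
    have h2 := lab_parse_pos H y
    rw [h] at h1
    omega
  rcases lex_total H (u := x) (v := y) hne with hl | hl
  · have := pos_mono H hl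
    omega
  · have := pos_mono H hl
    omega

omit H in
lemma Fm_bound {n m L : ℕ} (hm2 : 2 ≤ m) (hpow : 2 ^ m ≤ n) (h1 : L < Fm (m + 1)) :
    L ≤ 448 * n * m ^ 3 := by
  have h2 : Fm (m + 1) ≤ (m + 1) * Rm m := Fm_le m
  have h3 : Rm m ≤ (4 * n) * ((m + 2) * (14 * (m + 1))) := by
    have hq : 3 * Qm m + 2 ≤ 14 * (m + 1) := by have := Qm_le m; omega
    have hp : (2:ℕ) ^ (m + 2) ≤ 4 * n := by
      have : (2:ℕ) ^ (m + 2) = 4 * 2 ^ m := by ring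
      omega
    calc Rm m = 2 ^ (m + 2) * ((m + 2) * (3 * Qm m + 2)) := rfl
    _ ≤ (4 * n) * ((m + 2) * (14 * (m + 1))) :=
        Nat.mul_le_mul hp (Nat.mul_le_mul_left _ hq)
  have h4 : (m + 1) * ((4 * n) * ((m + 2) * (14 * (m + 1))))
      = 56 * n * ((m + 1) * ((m + 2) * (m + 1))) := by ring
  have h5 : (m + 1) * ((m + 2) * (m + 1)) ≤ (2 * m) * ((2 * m) * (2 * m)) :=
    Nat.mul_le_mul (by omega) (Nat.mul_le_mul (by omega) (by omega))
  have h6 : 56 * n * ((2 * m) * ((2 * m) * (2 * m))) = 448 * n * m ^ 3 := by ring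
  have h7 : L ≤ (m + 1) * ((4 * n) * ((m + 2) * (14 * (m + 1)))) := by
    calc L ≤ (m + 1) * Rm m := by omega
    _ ≤ _ := Nat.mul_le_mul_left _ h3
  calc L ≤ 56 * n * ((m + 1) * ((m + 2) * (m + 1))) := by omega
  _ ≤ 56 * n * ((2 * m) * ((2 * m) * (2 * m))) := Nat.mul_le_mul_left _ h5
  _ = 448 * n * m ^ 3 := h6

lemma lab_bound (hn : 4 ≤ Fintype.card X) (x : X) :
    lab x ≤ 448 * Fintype.card X * (Nat.log 2 (Fintype.card X)) ^ 3 := by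
  have hm2 : 2 ≤ Nat.log 2 (Fintype.card X) := by
    have ha : Nat.log 2 4 ≤ Nat.log 2 (Fintype.card X) := Nat.log_mono_right hn
    have hb : Nat.log 2 4 = 2 := Nat.log_eq_of_pow_le_of_lt_pow (by norm_num) (by norm_num)
    omega
  have h1 : lab x < Fm (Nat.log 2 (Fintype.card X) + 1) := by
    rw [Fm_succ]
    have := off_lt H x
    rw [lab_eq H]
    omega
  exact Fm_bound hm2 (Nat.pow_log_le_self 2 (by omega)) h1

end AncView


/-- There is a single decoder `D` and a constant `C` such that every finite
tree order (rooted forest) on `n ≥ 4` elements admits an injective labeling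
by natural numbers bounded by `C · n · (log₂ n)³ · (log₂ log₂ n)^C`
(i.e. labels of `log₂ n + 3 log₂ log₂ n + O(log₂ log₂ log₂ n)` bits),
from which `D` decodes ancestry. -/
theorem ancestry_scheme_optimal :
    ∃ (C : ℕ) (D : ℕ → ℕ → Bool),
      ∀ (X : Type) [Fintype X] [PartialOrder X],
        IsTreeOrder X →
        4 ≤ Fintype.card X →
        ∃ L : X → ℕ,
          Function.Injective L ∧
          (∀ x : X, L x ≤ C * Fintype.card X * (Nat.log 2 (Fintype.card X)) ^ 3 *
            (Nat.log 2 (Nat.log 2 (Fintype.card X))) ^ C) ∧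
          (∀ u v : X, u ≤ v ↔ D (L v) (L u) = true) := by
  refine ⟨448, AncView.dec, ?_⟩
  intro X _ _ H hn
  refine ⟨AncView.lab, AncView.lab_inj H, ?_, ?_⟩
  · intro x
    have h1 := AncView.lab_bound H hn x
    have hm2 : 2 ≤ Nat.log 2 (Fintype.card X) := by
      have ha : Nat.log 2 4 ≤ Nat.log 2 (Fintype.card X) := Nat.log_mono_right hn
      have hb : Nat.log 2 4 = 2 := Nat.log_eq_of_pow_le_of_lt_pow (by norm_num) (by norm_num)
      omega
    have h2 : 1 ≤ Nat.log 2 (Nat.log 2 (Fintype.card X)) := by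
      have ha : Nat.log 2 2 ≤ Nat.log 2 (Nat.log 2 (Fintype.card X)) := Nat.log_mono_right hm2
      have hb : Nat.log 2 2 = 2 - 1 := Nat.log_eq_of_pow_le_of_lt_pow (by norm_num) (by norm_num)
      omega
    have h3 : 1 ≤ (Nat.log 2 (Nat.log 2 (Fintype.card X))) ^ 448 := Nat.one_le_pow _ _ (by omega)
    calc AncView.lab x ≤ 448 * Fintype.card X * (Nat.log 2 (Fintype.card X)) ^ 3 * 1 := by
          omega
    _ ≤ _ := Nat.mul_le_mul_left _ h3
  · intro u v
    rw [AncView.main_iff H u v]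
    exact (AncView.dec_eval H u v).symm
end

section
/- There exists a constant C such that for all integers n ≥ 2 and d ≥ 2 there exist a natural number N ≤ C · n · d² and a relation D : Fin N → Fin N → Prop such that for every finite tree order (X, ≤) with at most n elements and height at most d, there is an injective labeling L : X → Fin N satisfying: for all u, v ∈ X, u ≤ v if and only if D(L(v), L(u)) holds. (Equivalently: an ancestry-labeling scheme for forests with at most n nodes and depth at most d using labels of log₂ n + 2 log₂ d + O(1) bits.) -/
/-- The height of a partial order is at most `d`: every chain has at most
`d` elements. -/
def HeightLE (X : Type*) [PartialOrder X] (d : ℕ) : Prop :=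
  ∀ c : Finset X, (∀ u ∈ c, ∀ v ∈ c, u ≤ v ∨ v ≤ u) → c.card ≤ d


lemma v2_odd_mul_pow (e o : ℕ) (ho : Odd o) : padicValNat 2 (o * 2 ^ e) = e := by
  have ho0 : o ≠ 0 := by
    rintro rfl
    exact (by decide : ¬ Odd 0) ho
  have h2 : ¬ (2 ∣ o) := by
    rw [Nat.two_dvd_ne_zero, Nat.odd_iff.mp ho]
  haveI : Fact (Nat.Prime 2) := ⟨Nat.prime_two⟩
  rw [padicValNat.mul ho0 (pow_ne_zero _ two_ne_zero), padicValNat.prime_pow,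
    padicValNat.eq_zero_of_not_dvd h2]
  omega

lemma exists_aligned (t e : ℕ) (ht : 1 ≤ t) :
    ∃ a : ℕ, t ≤ a ∧ a ≤ t + 2 ^ (e + 1) ∧ padicValNat 2 a = e := by
  have hpos : 0 < 2 ^ e := Nat.pow_pos (by norm_num)
  have hdm := Nat.div_add_mod t (2 ^ e)
  have hmlt : t % 2 ^ e < 2 ^ e := Nat.mod_lt _ hpos
  have h2e : 2 ^ (e + 1) = 2 * 2 ^ e := by ring
  have hc : (t / 2 ^ e) * 2 ^ e = 2 ^ e * (t / 2 ^ e) := mul_comm _ _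
  rcases Nat.even_or_odd (t / 2 ^ e + 1) with he | ho
  · refine ⟨(t / 2 ^ e + 2) * 2 ^ e, ?_, ?_, ?_⟩
    · rw [add_mul]; omega
    · rw [add_mul]; omega
    · exact v2_odd_mul_pow _ _ (by rcases he with ⟨c, hc⟩; exact ⟨c, by omega⟩)
  · refine ⟨(t / 2 ^ e + 1) * 2 ^ e, ?_, ?_, ?_⟩
    · rw [add_mul]; omega
    · rw [add_mul]; omega
    · exact v2_odd_mul_pow _ _ ho

lemma exists_round (d s : ℕ) (hd : 2 ≤ d) (hs : 1 ≤ s) :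
    ∃ m e : ℕ, 8 * d ≤ m ∧ m ≤ 16 * d ∧ s ≤ m * 2 ^ e ∧
      ((m = 8 * d ∧ e = 0 ∧ s ≤ 8 * d) ∨ (m * 2 ^ e ≤ s + 2 ^ e ∧ 8 * d * 2 ^ e ≤ s)) := by
  rcases le_or_gt s (8 * d) with h | h
  · exact ⟨8 * d, 0, le_refl _, by omega, by simpa using h, Or.inl ⟨rfl, rfl, h⟩⟩
  · set e := Nat.log 2 (s / (8 * d)) with he
    have hq1 : 1 ≤ s / (8 * d) := (Nat.one_le_div_iff (by omega)).mpr (by omega)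
    have hple : 2 ^ e ≤ s / (8 * d) := Nat.pow_log_le_self 2 (by omega)
    have hlow : 8 * d * 2 ^ e ≤ s := by
      calc 8 * d * 2 ^ e ≤ 8 * d * (s / (8 * d)) := Nat.mul_le_mul_left _ hple
        _ ≤ s := Nat.mul_div_le s (8 * d)
    have hup : s < 8 * d * 2 ^ (e + 1) := by
      have h1 : s / (8 * d) < 2 ^ (e + 1) := Nat.lt_pow_succ_log_self (by norm_num) _
      have h2 := Nat.div_add_mod s (8 * d)
      have h3 : s % (8 * d) < 8 * d := Nat.mod_lt _ (by omega)
      nlinarith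
    have hpos : 0 < 2 ^ e := Nat.pow_pos (by norm_num)
    have hdm := Nat.div_add_mod s (2 ^ e)
    have hmlt : s % 2 ^ e < 2 ^ e := Nat.mod_lt _ hpos
    have hc : (s / 2 ^ e) * 2 ^ e = 2 ^ e * (s / 2 ^ e) := mul_comm _ _
    refine ⟨s / 2 ^ e + 1, e, ?_, ?_, ?_, Or.inr ⟨?_, hlow⟩⟩
    · have : 8 * d ≤ s / 2 ^ e := (Nat.le_div_iff_mul_le hpos).mpr (by omega)
      omega
    · have : s / 2 ^ e < 16 * d := by
        rw [Nat.div_lt_iff_lt_mul hpos]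
        have : 8 * d * 2 ^ (e + 1) = 16 * d * 2 ^ e := by ring
        omega
      omega
    · rw [add_mul]; omega
    · rw [add_mul]; omega

set_option maxHeartbeats 2000000 in
lemma alloc (d : ℕ) (hd : 2 ≤ d) :
    ∀ (k : ℕ) (X : Type) [PartialOrder X], IsTreeOrder X →
      ∀ s : Finset X, s.card ≤ k →
      ∀ h : ℕ, (∀ c : Finset X, c ⊆ s → (∀ u ∈ c, ∀ v ∈ c, u ≤ v ∨ v ≤ u) → c.card ≤ h) →
      ∃ F : ℕ,
        (F : ℚ) ≤ 8 * d * s.card * (1 + 1/(2*(d:ℚ))) ^ h ∧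
        ∀ t : ℕ, 1 ≤ t →
          ∃ a m : X → ℕ,
            (∀ x ∈ s, 8*d ≤ m x ∧ m x ≤ 16*d) ∧
            (∀ x ∈ s, t ≤ a x ∧ a x + m x * 2 ^ (padicValNat 2 (a x)) ≤ t + F) ∧
            (∀ x ∈ s, ∀ y ∈ s,
              (y ≤ x ↔ (a x ≤ a y ∧ a y < a x + m x * 2 ^ (padicValNat 2 (a x))))) := by
  intro k
  induction k with
  | zero =>
    intro X _ _ s hs h _
    have hsE : s = ∅ := Finset.card_eq_zero.mp (Nat.le_zero.mp hs)
    subst hsE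
    refine ⟨0, by simp, ?_⟩
    intro t ht
    exact ⟨fun _ => t, fun _ => 8*d, by simp, by simp, by simp⟩
  | succ k IH =>
    intro X _ htree s hsc h hh
    rcases s.eq_empty_or_nonempty with rfl | hne
    · refine ⟨0, by simp, ?_⟩
      intro t ht
      exact ⟨fun _ => t, fun _ => 8*d, by simp, by simp, by simp⟩
    · classical
      obtain ⟨r, hrs, hrmax⟩ := s.exists_maximal hne
      set T := s.filter (fun x => x ≤ r) with hT
      set G := T.erase r with hGdef
      set s₂ := s.filter (fun x => ¬ x ≤ r) with hs2def
      have hrT : r ∈ T := by simp [hT, hrs]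
      have hcardTs : T.card + s₂.card = s.card :=
        Finset.card_filter_add_card_filter_not _
      have hcardG : G.card = T.card - 1 := Finset.card_erase_of_mem hrT
      have hTpos : 1 ≤ T.card := Finset.card_pos.mpr ⟨r, hrT⟩
      have hmemG : ∀ x, x ∈ G ↔ (x ∈ s ∧ x ≤ r ∧ x ≠ r) := by
        intro x
        simp only [hGdef, hT, Finset.mem_erase, Finset.mem_filter]
        tauto
      have hmem2 : ∀ x, x ∈ s₂ ↔ (x ∈ s ∧ ¬ x ≤ r) := by
        intro x; simp [hs2def]
      have hnr : ∀ y ∈ s, ¬ y ≤ r → ¬ r ≤ y := by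
        intro y hy hyr hry
        rcases eq_or_lt_of_le hry with h' | h'
        · exact hyr (le_of_eq h'.symm)
        · exact hyr (hrmax hy h'.le)
      have hcross : ∀ x, x ≤ r → ∀ y ∈ s, ¬ y ≤ r → ¬ x ≤ y ∧ ¬ y ≤ x := by
        intro x hxr y hy hyr
        refine ⟨fun hxy => ?_, fun hyx => hyr (le_trans hyx hxr)⟩
        rcases htree x y r hxy hxr with h' | h'
        · exact hyr h'
        · exact hnr y hy hyr h'
      have hh1 : 1 ≤ h := by
        have := hh {r} (by simpa using hrs) (by simp)
        simpa using this
      obtain ⟨h₀, rfl⟩ : ∃ h₀, h = h₀ + 1 := ⟨h - 1, by omega⟩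
      have hGsub : G ⊆ s := fun x hx => ((hmemG x).mp hx).1
      have hGcard : G.card ≤ k := by
        have hTle : T.card ≤ s.card := Finset.card_le_card (Finset.filter_subset _ _)
        omega
      have hGh : ∀ c : Finset X, c ⊆ G →
          (∀ u ∈ c, ∀ v ∈ c, u ≤ v ∨ v ≤ u) → c.card ≤ h₀ := by
        intro c hc hchain
        have hrc : r ∉ c := fun hrc => ((hmemG r).mp (hc hrc)).2.2 rfl
        have hsub : insert r c ⊆ s := by
          intro z hz
          rcases Finset.mem_insert.mp hz with rfl | hz'
          · exact hrs
          · exact hGsub (hc hz')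
        have hch : ∀ u ∈ insert r c, ∀ v ∈ insert r c, u ≤ v ∨ v ≤ u := by
          intro u hu v hv
          rcases Finset.mem_insert.mp hu with rfl | hu' <;>
            rcases Finset.mem_insert.mp hv with rfl | hv'
          · exact Or.inl le_rfl
          · exact Or.inr ((hmemG v).mp (hc hv')).2.1
          · exact Or.inl ((hmemG u).mp (hc hu')).2.1
          · exact hchain u hu' v hv'
        have := hh (insert r c) hsub hch
        rw [Finset.card_insert_of_notMem hrc] at this
        omega
      obtain ⟨F₁, hF₁, alloc₁⟩ := IH X htree G hGcard h₀ hGh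
      have h2card : s₂.card ≤ k := by omega
      obtain ⟨F₂, hF₂, alloc₂⟩ := IH X htree s₂ h2card (h₀+1)
        (fun c hc hch => hh c (hc.trans (Finset.filter_subset _ _)) hch)
      obtain ⟨m₀, e₀, hm₀l, hm₀u, hm₀ge, hm₀case⟩ := exists_round d (1 + F₁) hd (by omega)
      refine ⟨m₀ * 2 ^ e₀ + 2 ^ (e₀ + 1) + F₂, ?_, ?_⟩
      · -- the rational bound
        have hdq : (0:ℚ) < d := by exact_mod_cast (show 0 < d by omega)
        have hd2 : (2:ℚ) ≤ d := by exact_mod_cast hd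
        set β : ℚ := 1 + 1/(2*(d:ℚ)) with hβ
        have hβ1 : (1:ℚ) ≤ β := by
          have : (0:ℚ) ≤ 1/(2*(d:ℚ)) := by positivity
          rw [hβ]; linarith
        have hpow : β^(h₀+1) = β^h₀ * β := pow_succ β h₀
        set g : ℚ := β^h₀ with hgdef
        have hg1 : (1:ℚ) ≤ g := one_le_pow₀ hβ1
        set u : ℚ := (T.card : ℚ) with hu
        have hu1 : (1:ℚ) ≤ u := by rw [hu]; exact_mod_cast hTpos
        have hG1 : G.card + 1 = T.card := by omega
        have hGq : (G.card : ℚ) + 1 = u := by rw [hu]; exact_mod_cast hG1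
        have hexp : 8*(d:ℚ)*u*(g*β) = 8*d*u*g + 4*u*g := by
          rw [hβ]; field_simp; ring
        have hF₁' : (F₁:ℚ) ≤ 8*d*(u-1)*g := by
          have : (F₁:ℚ) ≤ 8*d*(G.card)*g := hF₁
          have h' : ((G.card:ℕ):ℚ) = u - 1 := by linarith [hGq]
          rw [h'] at this
          exact this
        have claim1 : ((m₀ * 2 ^ e₀ + 2 ^ (e₀ + 1) : ℕ) : ℚ) ≤ 8*d*u*β^(h₀+1) := by
          rw [hpow]
          rcases hm₀case with ⟨hmA, heA, _⟩ | ⟨hB1, hB2⟩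
          · subst hmA; subst heA
            push_cast
            norm_num
            have hug : (1:ℚ) ≤ u*g := by nlinarith
            nlinarith [hexp, hdq]
          · have h16 : 16 ≤ 8 * d * 2 ^ e₀ := by
              have h1 : 1 ≤ 2^e₀ := Nat.one_le_two_pow
              nlinarith
            have hGpos : 1 ≤ G.card := by
              by_contra hc0
              have hG0 : G.card = 0 := by omega
              rw [hG0] at hF₁
              simp at hF₁
              have h17 : (16:ℕ) ≤ 1 + F₁ := le_trans h16 hB2
              omega
            have hu2 : (2:ℚ) ≤ u := by rw [hu]; exact_mod_cast (show 2 ≤ T.card by omega)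
            set P : ℚ := (2:ℚ)^e₀ with hP
            have hP0 : (0:ℚ) ≤ P := by positivity
            have hA0 : (0:ℚ) ≤ (F₁:ℚ) := by positivity
            have hAB1 : (m₀:ℚ)*P ≤ 1 + (F₁:ℚ) + P := by
              rw [hP]; exact_mod_cast hB1
            have hAB2 : 8*(d:ℚ)*P ≤ 1 + (F₁:ℚ) := by
              rw [hP]; exact_mod_cast hB2
            have key1 : 1 + (F₁:ℚ) ≤ g*(8*d*(u-1)+1) := by
              nlinarith [hF₁', hg1, mul_nonneg (le_of_lt hdq) (show (0:ℚ) ≤ u-1 by linarith)]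
            have main : (8*(d:ℚ)+3)*(8*d*u-8*d+1) ≤ 64*d^2*u+32*d*u := by
              nlinarith [hd2, hu2, mul_le_mul hd2 hu2 (by linarith) (by linarith)]
            have e1 : 24*(d:ℚ)*P ≤ 3*(1 + (F₁:ℚ)) := by linarith
            have e2 : (8*(d:ℚ)+3)*(1 + (F₁:ℚ)) ≤ (8*d+3)*(g*(8*d*(u-1)+1)) :=
              mul_le_mul_of_nonneg_left key1 (by linarith)
            have e3 : (8*(d:ℚ)+3)*(g*(8*d*(u-1)+1)) ≤ g*(64*d^2*u+32*d*u) := by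
              have := mul_le_mul_of_nonneg_left main (show (0:ℚ) ≤ g by linarith)
              nlinarith [this]
            have step : 8*(d:ℚ)*((1 + (F₁:ℚ) + P) + 2*P) ≤ 8*d*(8*d*u*g + 4*u*g) := by
              nlinarith [e1, e2, e3]
            have hlhs : ((m₀ * 2 ^ e₀ + 2 ^ (e₀ + 1) : ℕ) : ℚ) = (m₀:ℚ)*P + 2*P := by
              rw [hP]; push_cast; ring
            rw [hlhs]
            have cancel : 8*(d:ℚ)*((m₀:ℚ)*P + 2*P) ≤ 8*d*(8*d*u*g + 4*u*g) := by
              nlinarith [step, hAB1, hdq]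
            have := le_of_mul_le_mul_left
              (by linarith [cancel] : 8*(d:ℚ)*((m₀:ℚ)*P + 2*P) ≤ 8*(d:ℚ)*(8*d*u*g + 4*u*g))
              (by linarith : (0:ℚ) < 8*(d:ℚ))
            nlinarith [this, hexp]
        have claim2 : (F₂:ℚ) ≤ 8*d*(s₂.card:ℚ)*β^(h₀+1) := hF₂
        have hsc2 : ((s.card:ℕ):ℚ) = u + (s₂.card:ℚ) := by
          rw [hu]; exact_mod_cast hcardTs.symm
        have hsplitL : ((m₀ * 2 ^ e₀ + 2 ^ (e₀ + 1) + F₂ : ℕ) : ℚ)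
            = ((m₀ * 2 ^ e₀ + 2 ^ (e₀ + 1) : ℕ) : ℚ) + (F₂:ℚ) := by push_cast; ring
        have hsplitR : 8*(d:ℚ)*((s.card:ℕ):ℚ)*β^(h₀+1)
            = 8*d*u*β^(h₀+1) + 8*d*(s₂.card:ℚ)*β^(h₀+1) := by rw [hsc2]; ring
        rw [hsplitL, hsplitR]
        exact add_le_add claim1 claim2
      · -- the allocation
        intro t ht
        obtain ⟨ar, har1, har2, har3⟩ := exists_aligned t e₀ ht
        obtain ⟨a₁, m₁, hm₁, hr₁, hiff₁⟩ := alloc₁ (ar + 1) (by omega)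
        obtain ⟨a₂, m₂, hm₂, hr₂, hiff₂⟩ := alloc₂ (t + (m₀ * 2 ^ e₀ + 2 ^ (e₀ + 1))) (by omega)
        set a : X → ℕ := fun x => if x = r then ar else if x ≤ r then a₁ x else a₂ x with hadef
        set m : X → ℕ := fun x => if x = r then m₀ else if x ≤ r then m₁ x else m₂ x with hmdef
        have haR : a r = ar := by simp [hadef]
        have hmR : m r = m₀ := by simp [hmdef]
        have haG : ∀ x ∈ G, a x = a₁ x ∧ m x = m₁ x := by
          intro x hx
          obtain ⟨hxs, hxle, hxne⟩ := (hmemG x).mp hx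
          constructor
          · simp only [hadef]; rw [if_neg hxne, if_pos hxle]
          · simp only [hmdef]; rw [if_neg hxne, if_pos hxle]
        have ha2 : ∀ x ∈ s₂, a x = a₂ x ∧ m x = m₂ x := by
          intro x hx
          obtain ⟨hxs, hxle⟩ := (hmem2 x).mp hx
          have hxne : x ≠ r := by rintro rfl; exact hxle le_rfl
          constructor
          · simp only [hadef]; rw [if_neg hxne, if_neg hxle]
          · simp only [hmdef]; rw [if_neg hxne, if_neg hxle]
        have hL1 : 1 ≤ m₀ * 2 ^ e₀ := by
          have h1 : 1 ≤ 2^e₀ := Nat.one_le_two_pow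
          nlinarith
        have hlposG : ∀ x ∈ G, 1 ≤ m₁ x * 2 ^ (padicValNat 2 (a₁ x)) := by
          intro x hx
          have h1 := (hm₁ x hx).1
          have h2 : 1 ≤ 2 ^ (padicValNat 2 (a₁ x)) := Nat.one_le_two_pow
          nlinarith
        have hBG : ∀ x ∈ G, ar + 1 ≤ a₁ x ∧
            a₁ x + m₁ x * 2 ^ (padicValNat 2 (a₁ x)) ≤ ar + m₀ * 2 ^ e₀ := by
          intro x hx
          obtain ⟨h1, h2⟩ := hr₁ x hx
          exact ⟨h1, by omega⟩
        have hB2 : ∀ x ∈ s₂, t + (m₀ * 2 ^ e₀ + 2 ^ (e₀ + 1)) ≤ a₂ x ∧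
            a₂ x + m₂ x * 2 ^ (padicValNat 2 (a₂ x))
              ≤ t + (m₀ * 2 ^ e₀ + 2 ^ (e₀ + 1)) + F₂ := hr₂
        have hB3 : ar + m₀ * 2 ^ e₀ ≤ t + (m₀ * 2 ^ e₀ + 2 ^ (e₀ + 1)) := by omega
        have hclass : ∀ x ∈ s, x = r ∨ x ∈ G ∨ x ∈ s₂ := by
          intro x hx
          by_cases hxr : x = r
          · exact Or.inl hxr
          · by_cases hxle : x ≤ r
            · exact Or.inr (Or.inl ((hmemG x).mpr ⟨hx, hxle, hxr⟩))
            · exact Or.inr (Or.inr ((hmem2 x).mpr ⟨hx, hxle⟩))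
        refine ⟨a, m, ?_, ?_, ?_⟩
        · intro x hx
          rcases hclass x hx with rfl | hxG | hx2
          · rw [hmR]; exact ⟨hm₀l, hm₀u⟩
          · rw [(haG x hxG).2]; exact hm₁ x hxG
          · rw [(ha2 x hx2).2]; exact hm₂ x hx2
        · intro x hx
          rcases hclass x hx with rfl | hxG | hx2
          · rw [haR, hmR, har3]
            exact ⟨har1, by omega⟩
          · obtain ⟨hg1', hg2'⟩ := hBG x hxG
            rw [(haG x hxG).1, (haG x hxG).2]
            exact ⟨by omega, by omega⟩
          · obtain ⟨h21, h22⟩ := hB2 x hx2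
            rw [(ha2 x hx2).1, (ha2 x hx2).2]
            exact ⟨by omega, by omega⟩
        · intro x hx y hy
          rcases hclass x hx with rfl | hxG | hx2
          · rcases hclass y hy with rfl | hyG | hy2
            · rw [haR, hmR, har3]
              exact iff_of_true le_rfl ⟨le_rfl, by omega⟩
            · obtain ⟨hys, hyle, hyne⟩ := (hmemG y).mp hyG
              obtain ⟨hg1', hg2'⟩ := hBG y hyG
              have hly := hlposG y hyG
              rw [haR, hmR, har3, (haG y hyG).1]
              exact iff_of_true hyle ⟨by omega, by omega⟩
            · obtain ⟨hys, hyle⟩ := (hmem2 y).mp hy2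
              obtain ⟨h21, h22⟩ := hB2 y hy2
              rw [haR, hmR, har3, (ha2 y hy2).1]
              refine iff_of_false hyle ?_
              rintro ⟨_, hlt⟩
              omega
          · rcases hclass y hy with rfl | hyG | hy2
            · obtain ⟨hxs, hxle, hxne⟩ := (hmemG x).mp hxG
              obtain ⟨hg1', hg2'⟩ := hBG x hxG
              rw [(haG x hxG).1, haR]
              refine iff_of_false (fun hrx => hxne (le_antisymm hxle hrx)) ?_
              rintro ⟨hle, _⟩
              omega
            · rw [(haG x hxG).1, (haG x hxG).2, (haG y hyG).1]
              exact hiff₁ x hxG y hyG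
            · obtain ⟨hxs, hxle, hxne⟩ := (hmemG x).mp hxG
              obtain ⟨hys, hyle⟩ := (hmem2 y).mp hy2
              obtain ⟨hg1', hg2'⟩ := hBG x hxG
              obtain ⟨h21, h22⟩ := hB2 y hy2
              rw [(haG x hxG).1, (haG x hxG).2, (ha2 y hy2).1]
              refine iff_of_false (hcross x hxle y hys hyle).2 ?_
              rintro ⟨_, hlt⟩
              omega
          · rcases hclass y hy with rfl | hyG | hy2
            · obtain ⟨hxs, hxle⟩ := (hmem2 x).mp hx2
              obtain ⟨h21, h22⟩ := hB2 x hx2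
              rw [(ha2 x hx2).1, haR]
              refine iff_of_false (hnr x hxs hxle) ?_
              rintro ⟨hle, _⟩
              omega
            · obtain ⟨hxs, hxle⟩ := (hmem2 x).mp hx2
              obtain ⟨hys, hyle, hyne⟩ := (hmemG y).mp hyG
              obtain ⟨h21, h22⟩ := hB2 x hx2
              obtain ⟨hg1', hg2'⟩ := hBG y hyG
              have hly := hlposG y hyG
              rw [(ha2 x hx2).1, (haG y hyG).1]
              refine iff_of_false (hcross y hyle x hxs hxle).1 ?_
              rintro ⟨hle, _⟩
              omega
            · rw [(ha2 x hx2).1, (ha2 x hx2).2, (ha2 y hy2).1]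
              exact hiff₂ x hx2 y hy2


lemma pow_le_two (d : ℕ) (hd : 1 ≤ d) :
    ∀ h : ℕ, h ≤ d → (1 + 1/(2*(d:ℚ)))^h ≤ 1 + (h:ℚ)/d := by
  have hdq : (0:ℚ) < d := by exact_mod_cast hd
  intro h
  induction h with
  | zero => intro _; simp
  | succ h ih =>
    intro hle
    have h1 := ih (by omega)
    have hβ0 : (0:ℚ) ≤ 1 + 1/(2*(d:ℚ)) := by positivity
    have hhd : (h:ℚ) ≤ (d:ℚ) - 1 := by
      have : (h:ℚ) + 1 ≤ d := by exact_mod_cast hle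
      linarith
    rw [pow_succ]
    have step1 : (1 + 1/(2*(d:ℚ)))^h * (1 + 1/(2*(d:ℚ)))
        ≤ (1 + (h:ℚ)/d) * (1 + 1/(2*(d:ℚ))) :=
      mul_le_mul_of_nonneg_right h1 hβ0
    have step2 : (1 + (h:ℚ)/d) * (1 + 1/(2*(d:ℚ))) ≤ 1 + ((h:ℚ)+1)/d := by
      have hne : (d:ℚ) ≠ 0 := ne_of_gt hdq
      have key : (1 + ((h:ℚ)+1)/d) - (1 + (h:ℚ)/d) * (1 + 1/(2*(d:ℚ)))
          = ((d:ℚ) - h) / (2*(d:ℚ)^2) := by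
        field_simp
        ring
      have hnn : (0:ℚ) ≤ ((d:ℚ) - h) / (2*(d:ℚ)^2) := by
        apply div_nonneg (by linarith) (by positivity)
      linarith
    have : ((h+1:ℕ):ℚ) = (h:ℚ) + 1 := by push_cast; ring
    rw [this]
    linarith

set_option maxHeartbeats 1000000 in
/-- An ancestry-labeling scheme for forests with at most `n` nodes and depth
at most `d`, with labels drawn from a set of size `O(n·d²)`,
i.e. labels of `log₂ n + 2 log₂ d + O(1)` bits. -/
theorem ancestry_scheme_bounded_depth :
    ∃ C : ℕ, ∀ n d : ℕ, 2 ≤ n → 2 ≤ d →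
      ∃ (N : ℕ) (D : Fin N → Fin N → Prop),
        N ≤ C * n * d ^ 2 ∧
        ∀ (X : Type) [Fintype X] [PartialOrder X],
          IsTreeOrder X → Fintype.card X ≤ n → HeightLE X d →
          ∃ L : X → Fin N,
            Function.Injective L ∧
            (∀ u v : X, u ≤ v ↔ D (L v) (L u)) := by
  refine ⟨200, ?_⟩
  intro n d hn hd
  set K := 8*d + 1 with hK
  refine ⟨(16*d*n+1)*K, fun i j =>
      (i.1 / K ≤ j.1 / K) ∧
      (j.1 / K < i.1 / K + (8*d + i.1 % K) * 2 ^ (padicValNat 2 (i.1 / K))), ?_, ?_⟩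
  · have hdn : 4 ≤ d*n := Nat.mul_le_mul hd hn
    have h1 : (16*d*n+1) ≤ 17*d*n := by nlinarith
    have h2 : K ≤ 9*d := by omega
    calc (16*d*n+1)*K ≤ (17*d*n)*(9*d) := Nat.mul_le_mul h1 h2
      _ = 153*n*d^2 := by ring
      _ ≤ 200*n*d^2 := by nlinarith
  · intro X _ _ htree hcard hheight
    have hcard' : (Finset.univ : Finset X).card ≤ n := by
      simpa [Finset.card_univ] using hcard
    obtain ⟨F, hF, hal⟩ := alloc d hd n X htree Finset.univ hcard' d
      (fun c _ hch => hheight c hch)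
    obtain ⟨a, m, hm, hrange, hiff⟩ := hal 1 le_rfl
    have hdq : (0:ℚ) < d := by exact_mod_cast (show 0 < d by omega)
    have hFn : F ≤ 16*d*n := by
      have hp2 : (1 + 1/(2*(d:ℚ)))^d ≤ 2 := by
        have h := pow_le_two d (by omega) d le_rfl
        rw [div_self (ne_of_gt hdq)] at h
        linarith
      have hcq : ((Finset.univ : Finset X).card : ℚ) ≤ n := by exact_mod_cast hcard'
      have hb : (F:ℚ) ≤ 16*d*n := by
        have hβnn : (0:ℚ) ≤ (1 + 1/(2*(d:ℚ)))^d := by positivity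
        calc (F:ℚ) ≤ 8*d*((Finset.univ : Finset X).card:ℚ)*(1 + 1/(2*(d:ℚ)))^d := hF
          _ ≤ 8*d*(n:ℚ)*2 := by
              have h1 : 8*(d:ℚ)*((Finset.univ : Finset X).card:ℚ) ≤ 8*(d:ℚ)*n :=
                mul_le_mul_of_nonneg_left hcq (by positivity)
              have h2 := mul_le_mul h1 hp2 hβnn (by positivity : (0:ℚ) ≤ 8*(d:ℚ)*n)
              linarith [h2]
          _ = 16*d*n := by ring
      exact_mod_cast hb
    have hlen1 : ∀ x : X, 1 ≤ m x * 2 ^ (padicValNat 2 (a x)) := by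
      intro x
      have h1 := (hm x (Finset.mem_univ x)).1
      have h2 : 1 ≤ 2 ^ (padicValNat 2 (a x)) := Nat.one_le_two_pow
      nlinarith
    have hax : ∀ x : X, a x ≤ 16*d*n := by
      intro x
      have h1 := (hrange x (Finset.mem_univ x)).2
      have h2 := hlen1 x
      omega
    have hLlt : ∀ x : X, a x * K + (m x - 8*d) < (16*d*n+1)*K := by
      intro x
      have h1 : m x - 8*d < K := by have := (hm x (Finset.mem_univ x)).2; omega
      calc a x * K + (m x - 8*d) < a x * K + K := by omega
        _ = (a x + 1) * K := by ring
        _ ≤ (16*d*n+1)*K := Nat.mul_le_mul_right _ (by have := hax x; omega)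
    have hdiv : ∀ x : X, (a x * K + (m x - 8*d)) / K = a x := by
      intro x
      have h1 : m x - 8*d < K := by have := (hm x (Finset.mem_univ x)).2; omega
      rw [mul_comm (a x) K, Nat.mul_add_div (by omega : 0 < K), Nat.div_eq_of_lt h1]
      omega
    have hmod : ∀ x : X, (a x * K + (m x - 8*d)) % K = m x - 8*d := by
      intro x
      have h1 : m x - 8*d < K := by have := (hm x (Finset.mem_univ x)).2; omega
      rw [mul_comm (a x) K, Nat.mul_add_mod, Nat.mod_eq_of_lt h1]
    have hlenx : ∀ x : X, 8*d + (m x - 8*d) = m x := by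
      intro x; have := (hm x (Finset.mem_univ x)).1; omega
    refine ⟨fun x => ⟨a x * K + (m x - 8*d), hLlt x⟩, ?_, ?_⟩
    · intro x y hxy
      have hval : a x * K + (m x - 8*d) = a y * K + (m y - 8*d) := congrArg Fin.val hxy
      have hax' : a x = a y := by
        have h := congrArg (fun z => z / K) hval
        simpa [hdiv x, hdiv y] using h
      have l1 := hlen1 x
      have l2 := hlen1 y
      have hyx : y ≤ x := (hiff x (Finset.mem_univ x) y (Finset.mem_univ y)).mpr
        ⟨by omega, by omega⟩
      have hxy' : x ≤ y := (hiff y (Finset.mem_univ y) x (Finset.mem_univ x)).mpr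
        ⟨by omega, by omega⟩
      exact le_antisymm hxy' hyx
    · intro u v
      have h := hiff v (Finset.mem_univ v) u (Finset.mem_univ u)
      simp only [hdiv, hmod, hlenx]
      exact h
end

section
/- There exist a constant C and a single decoder relation D : ℕ → ℕ → Bool with the following property: for every finite tree order (X, ≤) with n ≥ 2 elements and height d ≥ 2, there is an injective labeling L : X → ℕ such that L(x) ≤ C · n · d² · (log₂ d)² for every x ∈ X, and for all u, v ∈ X one has u ≤ v if and only if D(L(v), L(u)) = true. (Equivalently: an ancestry-labeling scheme for the family of all forests in which any node of an n-node forest of depth at most d gets a label of log₂ n + 2 log₂ d + 2 log₂ log₂ d + O(1) bits.) -/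
namespace AncestryScheme


def tz (n : ℕ) : ℕ := padicValNat 2 n

def enc (s m : ℕ) : ℕ :=
  let b := Nat.log 2 m + 1
  let c := Nat.log 2 b + 1
  (((s * 2 ^ b + m) * 2 ^ c + b) * 2 ^ (c + 1)) + 2 ^ c

def decInterval (a : ℕ) : ℕ × ℕ :=
  let c := tz a
  let A := a / 2 ^ (c + 1)
  let b := A % 2 ^ c
  let I := A / 2 ^ c
  let m := I % 2 ^ b
  let s := I / 2 ^ b
  (s, m * 2 ^ tz s)

def D0 (a b : ℕ) : Bool :=
  decide (((decInterval a).1 ≤ (decInterval b).1) ∧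
    (decInterval b).1 + (decInterval b).2 ≤ (decInterval a).1 + (decInterval a).2)

lemma tz_pow_mul (c q : ℕ) (hq : q % 2 = 1) : tz (2 ^ c * q) = c := by
  have hq0 : q ≠ 0 := by omega
  have hinst : Fact (Nat.Prime 2) := ⟨Nat.prime_two⟩
  have h2 : ¬ (2 ∣ q) := by omega
  unfold tz
  rw [padicValNat.mul (by positivity) hq0, padicValNat.prime_pow,
    padicValNat.eq_zero_of_not_dvd h2]
  omega

lemma div_helper {P : ℕ} (x : ℕ) {y : ℕ} (hP : 0 < P) (hy : y < P) :
    (x * P + y) / P = x := by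
  rw [add_comm, Nat.add_mul_div_right _ _ hP, Nat.div_eq_of_lt hy, Nat.zero_add]

lemma dec_enc (s m j q : ℕ) (hm : 1 ≤ m) (hs : s = 2 ^ j * q) (hq : q % 2 = 1) :
    decInterval (enc s m) = (s, m * 2 ^ j) := by
  set b := Nat.log 2 m + 1 with hb
  set c := Nat.log 2 b + 1 with hc
  have hmb : m < 2 ^ b := Nat.lt_pow_succ_log_self (by norm_num) m
  have hbc : b < 2 ^ c := Nat.lt_pow_succ_log_self (by norm_num) b
  set K := (s * 2 ^ b + m) * 2 ^ c + b with hKdef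
  have hK : enc s m = 2 ^ c * (2 * K + 1) := by
    simp only [enc, ← hb, ← hc, hKdef]; ring
  have htz : tz (enc s m) = c := by rw [hK]; exact tz_pow_mul _ _ (by omega)
  have hA : enc s m / 2 ^ (c + 1) = K := by
    have h : enc s m = K * 2 ^ (c + 1) + 2 ^ c := by rw [hK]; ring
    rw [h, div_helper _ (by positivity) (Nat.pow_lt_pow_succ one_lt_two)]
  have hKmod : K % 2 ^ c = b := by
    rw [hKdef, Nat.mul_add_mod', Nat.mod_eq_of_lt hbc]
  have hKdiv : K / 2 ^ c = s * 2 ^ b + m := by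
    rw [hKdef, div_helper _ (by positivity) hbc]
  have hImod : (s * 2 ^ b + m) % 2 ^ b = m := by
    rw [Nat.mul_add_mod', Nat.mod_eq_of_lt hmb]
  have hIdiv : (s * 2 ^ b + m) / 2 ^ b = s := by
    rw [div_helper _ (by positivity) hmb]
  have htzs : tz s = j := by rw [hs]; exact tz_pow_mul _ _ hq
  simp only [decInterval, htz, hA, hKmod, hKdiv, hImod, hIdiv, htzs]

lemma enc_le (s m : ℕ) (hm : 1 ≤ m) :
    enc s m ≤ 28 * m * (s + 1) * (Nat.log 2 m + 1) ^ 2 := by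
  set b := Nat.log 2 m + 1 with hb
  set c := Nat.log 2 b + 1 with hc
  have h2b : 2 ^ b ≤ 2 * m := by
    rw [hb, pow_succ]
    have := Nat.pow_log_le_self 2 (Nat.one_le_iff_ne_zero.mp hm)
    omega
  have h2c : 2 ^ c ≤ 2 * b := by
    rw [hc, pow_succ]
    have := Nat.pow_log_le_self 2 (show b ≠ 0 by omega)
    omega
  have h1 : s * 2 ^ b + m ≤ 2 * m * (s + 1) := by nlinarith
  have hb1 : 1 ≤ b := by rw [hb]; omega
  have h2 : (s * 2 ^ b + m) * 2 ^ c + b ≤ (2 * m * (s + 1) + 1) * (2 * b) := by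
    have := Nat.mul_le_mul h1 h2c
    nlinarith
  have h3 : enc s m = ((s * 2 ^ b + m) * 2 ^ c + b) * 2 ^ (c + 1) + 2 ^ c := rfl
  have h4 : 2 ^ (c + 1) ≤ 4 * b := by rw [pow_succ]; omega
  calc enc s m ≤ ((2 * m * (s + 1) + 1) * (2 * b)) * (4 * b) + 2 * b := by
        rw [h3]
        have := Nat.mul_le_mul h2 h4
        omega
    _ ≤ 28 * m * (s + 1) * b ^ 2 := by
        have hms : 1 ≤ m * (s + 1) := Nat.one_le_iff_ne_zero.mpr (by positivity)
        have hbb : b ≤ b ^ 2 := by nlinarith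
        nlinarith
  


/-- worst-case room needed per node for a forest of depth `k` -/
def G (d : ℕ) : ℕ → ℕ
  | 0 => d + 5
  | k + 1 => ((d + 5) * G d k) / d + 1

lemma G_ge (d k : ℕ) (hd : 2 ≤ d) : d + 5 ≤ G d k := by
  induction k with
  | zero => simp [G]
  | succ k ih =>
    have h1 : d * G d k ≤ (d + 5) * G d k := Nat.mul_le_mul_right _ (by omega)
    have h2 : G d k ≤ (d + 5) * G d k / d := (Nat.le_div_iff_mul_le (by omega)).mpr (by nlinarith)
    simp only [G]; omega

lemma G_step (d k : ℕ) (hd : 2 ≤ d) : (d + 5) * G d k ≤ d * G d (k + 1) := by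
  have h := Nat.div_add_mod ((d + 5) * G d k) d
  have hm : ((d + 5) * G d k) % d < d := Nat.mod_lt _ (by omega)
  simp only [G]
  nlinarith [Nat.div_add_mod ((d + 5) * G d k) d]

lemma G_bound (d k : ℕ) (hd : 2 ≤ d) : G d k * d ^ k ≤ (d + 5 + k) * (d + 6) ^ k := by
  induction k with
  | zero => simp [G]
  | succ k ih =>
    have hstep : d * G d (k + 1) ≤ (d + 6) * G d k := by
      have h1 : (d + 5) * G d k / d * d ≤ (d + 5) * G d k := Nat.div_mul_le_self _ _
      have h2 : d + 5 ≤ G d k := G_ge d k hd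
      simp only [G]; nlinarith
    calc G d (k + 1) * d ^ (k + 1) = (d * G d (k + 1)) * d ^ k := by ring
      _ ≤ ((d + 6) * G d k) * d ^ k := Nat.mul_le_mul_right _ hstep
      _ = (d + 6) * (G d k * d ^ k) := by ring
      _ ≤ (d + 6) * ((d + 5 + k) * (d + 6) ^ k) := Nat.mul_le_mul_left _ ih
      _ ≤ (d + 5 + (k + 1)) * (d + 6) ^ (k + 1) := by
          rw [pow_succ]
          nlinarith [pow_pos (show 0 < d + 6 by omega) k]

lemma exp_bound (d : ℕ) (hd : 1 ≤ d) : (d + 6) ^ d ≤ 405 * d ^ d := by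
  have hd0 : (0 : ℝ) < d := by exact_mod_cast hd
  have key : ((d : ℝ) + 6) ^ d ≤ 405 * (d : ℝ) ^ d := by
    have h1 : (d : ℝ) + 6 = d * (1 + 6 / d) := by field_simp
    have h2 : (1 : ℝ) + 6 / d ≤ Real.exp (6 / d) := by
      have := Real.add_one_le_exp (6 / (d:ℝ)); linarith
    have h3 : ((1 : ℝ) + 6 / d) ^ d ≤ Real.exp (6 / d) ^ d := by
      apply pow_le_pow_left₀ (by positivity) h2
    have h4 : Real.exp (6 / d) ^ d = Real.exp 6 := by
      rw [← Real.exp_nat_mul]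
      congr 1; field_simp
    have h5 : Real.exp 6 ≤ 405 := by
      have h := Real.exp_one_lt_d9
      have h6 : Real.exp 6 = (Real.exp 1) ^ 6 := by
        rw [← Real.exp_nat_mul]; norm_num
      rw [h6]
      have : (Real.exp 1) ^ 6 ≤ (2.7182818286 : ℝ) ^ 6 :=
        pow_le_pow_left₀ (Real.exp_pos 1).le h.le 6
      nlinarith
    calc ((d : ℝ) + 6) ^ d = (d : ℝ) ^ d * (1 + 6 / d) ^ d := by rw [h1, mul_pow]
      _ ≤ (d : ℝ) ^ d * Real.exp 6 := by
          apply mul_le_mul_of_nonneg_left _ (by positivity)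
          calc ((1 : ℝ) + 6 / d) ^ d ≤ Real.exp (6 / d) ^ d := h3
            _ = Real.exp 6 := h4
          
      _ ≤ 405 * (d : ℝ) ^ d := by nlinarith [pow_pos hd0 d]
  exact_mod_cast key

lemma G_le (d k : ℕ) (hd : 2 ≤ d) (hk : k ≤ d) : G d k ≤ 2025 * d := by
  have h1 : G d k * d ^ k ≤ (d + 5 + k) * (d + 6) ^ k := G_bound d k hd
  have h2 : (d + 6) ^ k * d ^ (d - k) ≤ (d + 6) ^ d := by
    calc (d + 6) ^ k * d ^ (d - k) ≤ (d + 6) ^ k * (d + 6) ^ (d - k) :=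
          Nat.mul_le_mul_left _ (Nat.pow_le_pow_left (by omega) _)
      _ = (d + 6) ^ d := by rw [← pow_add]; congr 1; omega
  have h3 : (d + 6) ^ d ≤ 405 * d ^ d := exp_bound d (by omega)
  have h4 : G d k * d ^ d ≤ (d + 5 + k) * 405 * d ^ d := by
    calc G d k * d ^ d = (G d k * d ^ k) * d ^ (d - k) := by
          rw [mul_assoc, ← pow_add]; congr 2; omega
      _ ≤ ((d + 5 + k) * (d + 6) ^ k) * d ^ (d - k) := Nat.mul_le_mul_right _ h1
      _ = (d + 5 + k) * ((d + 6) ^ k * d ^ (d - k)) := by ring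
      _ ≤ (d + 5 + k) * (d + 6) ^ d := Nat.mul_le_mul_left _ h2
      _ ≤ (d + 5 + k) * (405 * d ^ d) := Nat.mul_le_mul_left _ h3
      _ = (d + 5 + k) * 405 * d ^ d := by ring
  have h5 : G d k ≤ (d + 5 + k) * 405 := by
    have hp : 0 < d ^ d := pow_pos (by omega) d
    exact Nat.le_of_mul_le_mul_right (by calc G d k * d ^ d ≤ _ := h4) hp
  have : (d + 5 + k) * 405 ≤ 2025 * d := by nlinarith
  omega

/-- rounding to the form m * 2^j with d ≤ m ≤ 2d -/
lemma round_len (d t : ℕ) (hd : 2 ≤ d) (ht : d ≤ t) :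
    ∃ m j : ℕ, d ≤ m ∧ m ≤ 2 * d ∧ t ≤ m * 2 ^ j ∧ m * 2 ^ j ≤ t + 2 ^ j ∧ d * 2 ^ j ≤ t := by
  set j := Nat.log 2 (t / d) with hj
  have htd : 1 ≤ t / d := (Nat.one_le_div_iff (by omega)).mpr ht
  have h2j : 2 ^ j ≤ t / d := Nat.pow_log_le_self 2 (by omega)
  have hdj : d * 2 ^ j ≤ t := by
    calc d * 2 ^ j ≤ d * (t / d) := Nat.mul_le_mul_left _ h2j
      _ ≤ t := Nat.mul_div_le t d
  have hup : t / d < 2 ^ (j + 1) := Nat.lt_pow_succ_log_self (by norm_num) _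
  have hup2 : t < 2 ^ (j + 1) * d := (Nat.div_lt_iff_lt_mul (by omega)).mp hup
  have hjpos : 0 < 2 ^ j := pow_pos (by norm_num) j
  have hps : (2:ℕ) ^ (j + 1) = 2 ^ j * 2 := pow_succ 2 j
  refine ⟨t / 2 ^ j + 1, j, ?_, ?_, ?_, ?_, hdj⟩
  · -- d ≤ m
    have : d * 2 ^ j < (t / 2 ^ j + 1) * 2 ^ j := by
      calc d * 2 ^ j ≤ t := hdj
        _ < (t / 2 ^ j + 1) * 2 ^ j := (Nat.div_lt_iff_lt_mul hjpos).mp (Nat.lt_succ_self _)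
    have := Nat.lt_of_mul_lt_mul_right this
    omega
  · -- m ≤ 2d
    have h1 : t / 2 ^ j < 2 * d := by
      apply (Nat.div_lt_iff_lt_mul hjpos).mpr
      calc t < 2 ^ (j + 1) * d := hup2
        _ = 2 * d * 2 ^ j := by rw [hps]; ring
    omega
  · -- t ≤ m * 2^j
    exact le_of_lt ((Nat.div_lt_iff_lt_mul hjpos).mp (Nat.lt_succ_self _))
  · -- m * 2^j ≤ t + 2^j
    have h1 : t / 2 ^ j * 2 ^ j ≤ t := Nat.div_mul_le_self _ _
    calc (t / 2 ^ j + 1) * 2 ^ j = t / 2 ^ j * 2 ^ j + 2 ^ j := by ring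
      _ ≤ t + 2 ^ j := by omega

/-- aligned start: a number `s ≥ p` close to `p` of the form `2^j * odd` -/
lemma aligned_start (p j : ℕ) :
    ∃ s q : ℕ, p ≤ s ∧ s ≤ p + 4 * 2 ^ j ∧ s = 2 ^ j * (2 * q + 1) := by
  refine ⟨2 ^ j * (2 * (p / 2 ^ (j + 1) + 1) + 1), p / 2 ^ (j + 1) + 1, ?_, ?_, rfl⟩
  · have h := Nat.div_add_mod p (2 ^ (j + 1))
    have hm : p % 2 ^ (j + 1) < 2 ^ (j + 1) := Nat.mod_lt _ (pow_pos (by norm_num) _)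
    have : 2 ^ j * (2 * (p / 2 ^ (j + 1) + 1) + 1) = 2 ^ (j + 1) * (p / 2 ^ (j + 1)) + 2 ^ (j + 1) + 2 ^ j := by ring
    omega
  · have h := Nat.div_add_mod p (2 ^ (j + 1))
    have : 2 ^ j * (2 * (p / 2 ^ (j + 1) + 1) + 1) = 2 ^ (j + 1) * (p / 2 ^ (j + 1)) + 2 ^ (j + 1) + 2 ^ j := by ring
    have h2 : (2:ℕ) ^ (j + 1) = 2 * 2 ^ j := by rw [pow_succ]; ring
    omega

variable {X : Type} [PartialOrder X]


def sOf (t : ℕ × ℕ × ℕ) : ℕ := t.1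
def lOf (t : ℕ × ℕ × ℕ) : ℕ := t.2.1 * 2 ^ t.2.2

def Spec (d : ℕ) (S : Finset X) (p e : ℕ) (F : X → ℕ × ℕ × ℕ) : Prop :=
  (∀ x ∈ S, p ≤ sOf (F x) ∧ sOf (F x) + lOf (F x) ≤ e) ∧
  (∀ x ∈ S, d ≤ (F x).2.1 ∧ (F x).2.1 ≤ 2 * d ∧ 2 ^ (F x).2.2 ∣ sOf (F x) ∧
    (sOf (F x) / 2 ^ (F x).2.2) % 2 = 1) ∧
  (∀ x ∈ S, ∀ y ∈ S, x ≤ y → sOf (F y) ≤ sOf (F x) ∧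
    sOf (F x) + lOf (F x) ≤ sOf (F y) + lOf (F y) ∧ (x ≠ y → lOf (F x) < lOf (F y))) ∧
  (∀ x ∈ S, ∀ y ∈ S, ¬ x ≤ y → ¬ y ≤ x →
    (sOf (F x) + lOf (F x) ≤ sOf (F y) ∨ sOf (F y) + lOf (F y) ≤ sOf (F x)))

lemma spec_empty (d p : ℕ) (F : X → ℕ × ℕ × ℕ) : Spec d (∅ : Finset X) p p F := by
  refine ⟨?_, ?_, ?_, ?_⟩ <;> simp

lemma spec_weaken {d : ℕ} {S : Finset X} {p e p' e' : ℕ} {F : X → ℕ × ℕ × ℕ}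
    (h : Spec d S p e F) (hp : p' ≤ p) (he : e ≤ e') : Spec d S p' e' F := by
  obtain ⟨h1, h2, h3, h4⟩ := h
  refine ⟨fun x hx => ?_, h2, h3, h4⟩
  obtain ⟨ha, hb⟩ := h1 x hx
  exact ⟨le_trans hp ha, le_trans hb he⟩

lemma spec_congr {d : ℕ} {S : Finset X} {p e : ℕ} {F F' : X → ℕ × ℕ × ℕ}
    (h : Spec d S p e F) (hFF : ∀ x ∈ S, F' x = F x) : Spec d S p e F' := by
  obtain ⟨h1, h2, h3, h4⟩ := h
  refine ⟨fun x hx => ?_, fun x hx => ?_, fun x hx y hy hxy => ?_, fun x hx y hy hxy hyx => ?_⟩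
  · rw [hFF x hx]; exact h1 x hx
  · rw [hFF x hx]; exact h2 x hx
  · rw [hFF x hx, hFF y hy]; exact h3 x hx y hy hxy
  · rw [hFF x hx, hFF y hy]; exact h4 x hx y hy hxy hyx

lemma spec_union {d : ℕ} {S₁ S₂ : Finset X} {p₁ e₁ p₂ e₂ : ℕ}
    {F₁ F₂ : X → ℕ × ℕ × ℕ} [DecidableEq X]
    (h1 : Spec d S₁ p₁ e₁ F₁) (h2 : Spec d S₂ p₂ e₂ F₂)
    (hpp : p₁ ≤ p₂) (hep : e₁ ≤ p₂)
    (hinc : ∀ x ∈ S₁, ∀ y ∈ S₂, ¬ x ≤ y ∧ ¬ y ≤ x)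
    (hee : e₁ ≤ e₂) :
    Spec d (S₁ ∪ S₂) p₁ e₂ (fun x => if x ∈ S₁ then F₁ x else F₂ x) := by
  have hdisj : ∀ x ∈ S₂, x ∉ S₁ := by
    intro x hx2 hx1
    exact (hinc x hx1 x hx2).1 le_rfl
  obtain ⟨a1, b1, c1, d1⟩ := h1
  obtain ⟨a2, b2, c2, d2⟩ := h2
  refine ⟨fun x hx => ?_, fun x hx => ?_,
    fun x hx y hy hxy => ?_, fun x hx y hy hxy hyx => ?_⟩
  · dsimp only
    rcases Finset.mem_union.mp hx with h | h
    · simp only [h, if_pos]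
      obtain ⟨u, v⟩ := a1 x h
      exact ⟨u, le_trans v hee⟩
    · rw [if_neg (hdisj x h)]
      obtain ⟨u, v⟩ := a2 x h
      exact ⟨le_trans hpp u, v⟩
  · dsimp only
    rcases Finset.mem_union.mp hx with h | h
    · simp only [h, if_pos]; exact b1 x h
    · rw [if_neg (hdisj x h)]; exact b2 x h
  · dsimp only
    rcases Finset.mem_union.mp hx with h | h <;> rcases Finset.mem_union.mp hy with h' | h'
    · simp only [h, h', if_pos]; exact c1 x h y h' hxy
    · exact absurd hxy (hinc x h y h').1
    · exact absurd hxy (hinc y h' x h).2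
    · rw [if_neg (hdisj x h), if_neg (hdisj y h')]; exact c2 x h y h' hxy
  · dsimp only
    rcases Finset.mem_union.mp hx with h | h <;> rcases Finset.mem_union.mp hy with h' | h'
    · simp only [h, h', if_pos]; exact d1 x h y h' hxy hyx
    · rw [if_pos h, if_neg (hdisj y h')]
      left
      exact le_trans (a1 x h).2 (le_trans hep (a2 y h').1)
    · rw [if_neg (hdisj x h), if_pos h']
      right
      exact le_trans (a1 y h').2 (le_trans hep (a2 x h).1)
    · rw [if_neg (hdisj x h), if_neg (hdisj y h')]; exact d2 x h y h' hxy hyx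

lemma spec_insert_root {d : ℕ} {S : Finset X} {e : ℕ} {F : X → ℕ × ℕ × ℕ}
    [DecidableEq X] {r : X} {sr m j : ℕ}
    (hS : ∀ x ∈ S, x < r)
    (h : Spec d S (sr + 1) e F) (he : e ≤ sr + m * 2 ^ j)
    (hmd : d ≤ m) (hm2d : m ≤ 2 * d)
    (hdvd : 2 ^ j ∣ sr) (hodd : (sr / 2 ^ j) % 2 = 1) :
    Spec d (insert r S) sr (sr + m * 2 ^ j)
      (fun x => if x = r then (sr, m, j) else F x) := by
  obtain ⟨a1, b1, c1, d1⟩ := h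
  have hne : ∀ x ∈ S, x ≠ r := fun x hx => ne_of_lt (hS x hx)
  refine ⟨fun x hx => ?_, fun x hx => ?_,
    fun x hx y hy hxy => ?_, fun x hx y hy hxy hyx => ?_⟩
  · dsimp only
    rcases Finset.mem_insert.mp hx with rfl | h
    · simp [sOf, lOf]
    · rw [if_neg (hne x h)]
      obtain ⟨u, v⟩ := a1 x h
      exact ⟨by omega, le_trans v he⟩
  · dsimp only
    rcases Finset.mem_insert.mp hx with rfl | h
    · simp only [if_pos rfl]
      exact ⟨hmd, hm2d, hdvd, hodd⟩
    · rw [if_neg (hne x h)]; exact b1 x h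
  · dsimp only
    rcases Finset.mem_insert.mp hx with rfl | h <;> rcases Finset.mem_insert.mp hy with h2 | h2
    · subst h2
      simp only [if_pos rfl]
      exact ⟨le_rfl, le_rfl, fun hne' => absurd rfl hne'⟩
    · exact absurd (lt_of_lt_of_le (hS y h2) hxy) (lt_irrefl y)
    · subst h2
      rw [if_neg (hne x h), if_pos rfl]
      obtain ⟨u, v⟩ := a1 x h
      simp only [sOf, lOf] at *
      exact ⟨by omega, by omega, fun _ => by omega⟩
    · rw [if_neg (hne x h), if_neg (hne y h2)]
      exact c1 x h y h2 hxy
  · dsimp only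
    rcases Finset.mem_insert.mp hx with rfl | h <;> rcases Finset.mem_insert.mp hy with h2 | h2
    · subst h2; exact absurd le_rfl hxy
    · exact absurd (hS y h2).le hyx
    · subst h2; exact absurd (hS x h).le hxy
    · rw [if_neg (hne x h), if_neg (hne y h2)]
      exact d1 x h y h2 hxy hyx

lemma forest_alloc (hT : IsTreeOrder X) (d : ℕ) (hd : 2 ≤ d) :
    ∀ n : ℕ, ∀ S : Finset X, S.card ≤ n → ∀ k : ℕ, k ≤ d →
    (∀ c : Finset X, c ⊆ S → (∀ u ∈ c, ∀ v ∈ c, u ≤ v ∨ v ≤ u) → c.card ≤ k) →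
    ∀ p : ℕ, 1 ≤ p → ∃ F : X → ℕ × ℕ × ℕ, Spec d S p (p + S.card * G d k) F := by
  classical
  intro n
  induction n with
  | zero =>
    intro S hS k hk hchain p hp
    have : S = ∅ := Finset.card_eq_zero.mp (Nat.le_zero.mp hS)
    subst this
    exact ⟨fun _ => (1, d, 0), by simpa using spec_empty d p _⟩
  | succ n ih =>
    intro S hcard k hk hchain p hp
    rcases S.eq_empty_or_nonempty with rfl | hne
    · exact ⟨fun _ => (1, d, 0), by simpa using spec_empty d p _⟩
    obtain ⟨r, hrS, hrmax⟩ := S.exists_maximal hne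
    set T : Finset X := S.filter (fun x => x ≤ r) with hTdef
    have hrT : r ∈ T := by simp [hTdef, hrS]
    set T' : Finset X := T.erase r with hT'def
    set R : Finset X := S \ T with hRdef
    have hTsub : T ⊆ S := Finset.filter_subset _ _
    have hT'sub : T' ⊆ S := le_trans (Finset.erase_subset _ _) hTsub
    have hTle : ∀ x ∈ T, x ≤ r := fun x hx => (Finset.mem_filter.mp hx).2
    -- incomparability between T and R
    have incomp : ∀ x ∈ T, ∀ y ∈ R, ¬ x ≤ y ∧ ¬ y ≤ x := by
      intro x hx y hy
      have hxr : x ≤ r := hTle x hx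
      have hyS : y ∈ S := (Finset.mem_sdiff.mp hy).1
      have hyT : y ∉ T := (Finset.mem_sdiff.mp hy).2
      constructor
      · intro hxy
        rcases hT x y r hxy hxr with h | h
        · exact hyT (Finset.mem_filter.mpr ⟨hyS, h⟩)
        · have hyr : y = r := by
            by_contra hne'
            exact hne' (le_antisymm (hrmax hyS h) h)
          exact hyT (Finset.mem_filter.mpr ⟨hyS, hyr.le⟩)
      · intro hyx
        exact hyT (Finset.mem_filter.mpr ⟨hyS, le_trans hyx hxr⟩)
    -- k ≥ 1
    have hk1 : 1 ≤ k := by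
      have := hchain {r} (by simpa using hrS) (by simp)
      simpa using this
    obtain ⟨k', rfl⟩ : ∃ k', k = k' + 1 := ⟨k - 1, by omega⟩
    set nT := T.card with hnTdef
    have hnT1 : 1 ≤ nT := Finset.card_pos.mpr ⟨r, hrT⟩
    have hT'card : T'.card = nT - 1 := by
      rw [hT'def, Finset.card_erase_of_mem hrT]
    have hTcard_le : nT ≤ S.card := Finset.card_le_card hTsub
    set t := max d (1 + (nT - 1) * G d k') with htdef
    have htd : d ≤ t := le_max_left _ _
    obtain ⟨m, j, hmd, hm2d, hlow, hhigh, hdj⟩ := round_len d t hd htd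
    obtain ⟨sr, q, hsrp, hsrb, hsr⟩ := aligned_start p j
    -- inner forest on T'
    have hchain' : ∀ c : Finset X, c ⊆ T' → (∀ u ∈ c, ∀ v ∈ c, u ≤ v ∨ v ≤ u) → c.card ≤ k' := by
      intro c hc hcc
      have hrc : r ∉ c := fun hmem => (Finset.mem_erase.mp (hc hmem)).1 rfl
      have hsub : insert r c ⊆ S := by
        intro z hz
        rcases Finset.mem_insert.mp hz with rfl | hz'
        · exact hrS
        · exact hT'sub (hc hz')
      have hcc' : ∀ u ∈ insert r c, ∀ v ∈ insert r c, u ≤ v ∨ v ≤ u := by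
        intro u hu v hv
        rcases Finset.mem_insert.mp hu with rfl | hu' <;>
          rcases Finset.mem_insert.mp hv with rfl | hv'
        · left; exact le_rfl
        · right; exact hTle v (Finset.mem_of_mem_erase (hc hv'))
        · left; exact hTle u (Finset.mem_of_mem_erase (hc hu'))
        · exact hcc u hu' v hv'
      have := hchain (insert r c) hsub hcc'
      rw [Finset.card_insert_of_notMem hrc] at this
      omega
    obtain ⟨F1, hF1⟩ := ih T' (by omega) k' (by omega) hchain' (sr + 1) (by omega)
    -- extend with the root r
    have hinner_e : (sr + 1) + T'.card * G d k' ≤ sr + m * 2 ^ j := by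
      have h1 : 1 + (nT - 1) * G d k' ≤ t := le_max_right _ _
      have := hlow
      rw [hT'card]
      omega
    have hT'lt : ∀ x ∈ T', x < r := by
      intro x hx
      exact lt_of_le_of_ne (hTle x (Finset.mem_of_mem_erase hx)) (Finset.mem_erase.mp hx).1
    have hqodd : (sr / 2 ^ j) % 2 = 1 := by
      rw [hsr, Nat.mul_div_cancel_left _ (pow_pos (by norm_num) j)]
      omega
    have hdvd : 2 ^ j ∣ sr := ⟨2 * q + 1, hsr⟩
    have specT : Spec d (insert r T') sr (sr + m * 2 ^ j)
        (fun x => if x = r then (sr, m, j) else F1 x) :=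
      spec_insert_root hT'lt hF1 hinner_e hmd hm2d hdvd hqodd
    have hTins : insert r T' = T := Finset.insert_erase hrT
    rw [hTins] at specT
    -- bound the end of T's region
    set eT := p + nT * G d (k' + 1) with heTdef
    have heT : sr + m * 2 ^ j ≤ eT := by
      have hmul : d * (sr + m * 2 ^ j) ≤ d * eT := by
        have h1 : d * sr ≤ d * p + 4 * (d * 2 ^ j) := by
          calc d * sr ≤ d * (p + 4 * 2 ^ j) := Nat.mul_le_mul_left _ hsrb
            _ = d * p + 4 * (d * 2 ^ j) := by ring
        have h2 : d * (m * 2 ^ j) ≤ d * t + d * 2 ^ j := by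
          calc d * (m * 2 ^ j) ≤ d * (t + 2 ^ j) := Nat.mul_le_mul_left _ hhigh
            _ = d * t + d * 2 ^ j := by ring
        have h3 : (d + 5) * t ≤ d * (nT * G d (k' + 1)) := by
          rcases max_choice d (1 + (nT - 1) * G d k') with hmax | hmax
          · rw [htdef, hmax]
            have hG := G_ge d (k' + 1) hd
            calc (d + 5) * d ≤ d * (d + 5) := by ring_nf; omega
              _ ≤ d * G d (k' + 1) := Nat.mul_le_mul_left _ hG
              _ ≤ d * (nT * G d (k' + 1)) := by
                  apply Nat.mul_le_mul_left
                  exact Nat.le_mul_of_pos_left _ hnT1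
          · rw [htdef, hmax]
            have hstep := G_step d k' hd
            have hG := G_ge d (k' + 1) hd
            calc (d + 5) * (1 + (nT - 1) * G d k')
                = (d + 5) + (nT - 1) * ((d + 5) * G d k') := by ring
              _ ≤ d * G d (k' + 1) + (nT - 1) * (d * G d (k' + 1)) := by
                  apply Nat.add_le_add
                  · nlinarith
                  · exact Nat.mul_le_mul_left _ hstep
              _ = (1 + (nT - 1)) * (d * G d (k' + 1)) := by ring
              _ = nT * (d * G d (k' + 1)) := by congr 1; omega
              _ = d * (nT * G d (k' + 1)) := by ring
        have h4 : 5 * (d * 2 ^ j) ≤ 5 * t := by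
          apply Nat.mul_le_mul_left
          exact hdj
        calc d * (sr + m * 2 ^ j) = d * sr + d * (m * 2 ^ j) := by ring
          _ ≤ (d * p + 4 * (d * 2 ^ j)) + (d * t + d * 2 ^ j) := by omega
          _ = d * p + d * t + 5 * (d * 2 ^ j) := by ring
          _ ≤ d * p + d * t + 5 * t := by omega
          _ = d * p + (d + 5) * t := by ring
          _ ≤ d * p + d * (nT * G d (k' + 1)) := by omega
          _ = d * eT := by rw [heTdef]; ring
      exact Nat.le_of_mul_le_mul_left hmul (by omega)
    -- rest of the forest
    have hRcard : R.card = S.card - nT := by rw [hRdef, Finset.card_sdiff_of_subset hTsub]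
    have hchainR : ∀ c : Finset X, c ⊆ R → (∀ u ∈ c, ∀ v ∈ c, u ≤ v ∨ v ≤ u) → c.card ≤ k' + 1 := by
      intro c hc hcc
      exact hchain c (le_trans hc (Finset.sdiff_subset)) hcc
    obtain ⟨F3, hF3⟩ := ih R (by omega) (k' + 1) hk hchainR eT (by omega)
    -- combine
    have specT2 : Spec d T p eT (fun x => if x = r then (sr, m, j) else F1 x) :=
      spec_weaken specT hsrp heT
    have hunion := spec_union specT2 hF3 (by omega) le_rfl
      (fun x hx y hy => incomp x hx y hy) (by omega)
    have hTR : T ∪ R = S := by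
      rw [hRdef]
      exact Finset.union_sdiff_of_subset hTsub
    rw [hTR] at hunion
    refine ⟨_, spec_weaken hunion le_rfl ?_⟩
    have : nT * G d (k' + 1) + R.card * G d (k' + 1) = S.card * G d (k' + 1) := by
      rw [hRcard, ← Nat.add_mul]
      congr 1
      omega
    omega


end AncestryScheme

open AncestryScheme in
/-- A single decoder `D` works for the family of all forests: any node of an
`n`-node forest (`n ≥ 2`) of depth at most `d` (`d ≥ 2`) gets a label bounded
by `C · n · d² · (log₂ d)²`, i.e. of
`log₂ n + 2 log₂ d + 2 log₂ log₂ d + O(1)` bits. -/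
theorem ancestry_scheme_bounded_depth_universal :
    ∃ (C : ℕ) (D : ℕ → ℕ → Bool),
      ∀ (X : Type) [Fintype X] [PartialOrder X], ∀ d : ℕ,
        IsTreeOrder X → 2 ≤ Fintype.card X → 2 ≤ d → HeightLE X d →
        ∃ L : X → ℕ,
          Function.Injective L ∧
          (∀ x : X, L x ≤ C * Fintype.card X * d ^ 2 * (Nat.log 2 d) ^ 2) ∧
          (∀ u v : X, u ≤ v ↔ D (L v) (L u) = true) := by
  classical
  refine ⟨1021104, D0, ?_⟩
  intro X _ _ d hTree hcard hd hheight
  set n := Fintype.card X with hn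
  obtain ⟨F, hF⟩ := forest_alloc hTree d hd n Finset.univ
    (by rw [Finset.card_univ]) d le_rfl
    (fun c _ hc => hheight c hc) 1 le_rfl
  obtain ⟨ha, hb, hc, hd4⟩ := hF
  set L : X → ℕ := fun x => enc (sOf (F x)) ((F x).2.1) with hL
  have hlpos : ∀ x : X, 0 < lOf (F x) := by
    intro x
    obtain ⟨hm1, _, _, _⟩ := hb x (Finset.mem_univ x)
    exact Nat.mul_pos (by omega) (pow_pos (by norm_num) _)
  have hdec : ∀ x : X, decInterval (L x) = (sOf (F x), lOf (F x)) := by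
    intro x
    obtain ⟨hm1, hm2, hdvd, hodd⟩ := hb x (Finset.mem_univ x)
    obtain ⟨q, hq⟩ := hdvd
    have hsq : sOf (F x) / 2 ^ (F x).2.2 = q := by
      rw [hq, Nat.mul_div_cancel_left _ (pow_pos (by norm_num) _)]
    have hq1 : q % 2 = 1 := by rw [hsq] at hodd; exact hodd
    have := dec_enc (sOf (F x)) ((F x).2.1) ((F x).2.2) q (by omega) hq hq1
    rw [hL]
    dsimp only
    rw [this]
    rfl
  have hD : ∀ u v : X, (D0 (L v) (L u) = true ↔
      (sOf (F v) ≤ sOf (F u) ∧ sOf (F u) + lOf (F u) ≤ sOf (F v) + lOf (F v))) := by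
    intro u v
    simp only [D0, hdec u, hdec v, decide_eq_true_eq]
  have hiff : ∀ u v : X, u ≤ v ↔ D0 (L v) (L u) = true := by
    intro u v
    rw [hD u v]
    constructor
    · intro huv
      obtain ⟨h1, h2, _⟩ := hc u (Finset.mem_univ u) v (Finset.mem_univ v) huv
      exact ⟨h1, h2⟩
    · rintro ⟨h1, h2⟩
      by_contra hnuv
      by_cases hvu : v ≤ u
      · have hne : v ≠ u := fun e => hnuv (e ▸ le_rfl)
        obtain ⟨g1, g2, g3⟩ := hc v (Finset.mem_univ v) u (Finset.mem_univ u) hvu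
        have := g3 hne
        omega
      · have hl := hlpos u
        rcases hd4 u (Finset.mem_univ u) v (Finset.mem_univ v) hnuv hvu with h | h <;> omega
  refine ⟨L, ?_, ?_, hiff⟩
  · -- injectivity
    intro x y hxy
    have hx : D0 (L x) (L x) = true := (hiff x x).mp le_rfl
    have h1 : x ≤ y := (hiff x y).mpr (by rw [← hxy]; exact hx)
    have h2 : y ≤ x := (hiff y x).mpr (by rw [← hxy]; exact hx)
    exact le_antisymm h1 h2
  · -- label bound
    intro x
    obtain ⟨hm1, hm2, _, _⟩ := hb x (Finset.mem_univ x)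
    obtain ⟨hs1, hs2⟩ := ha x (Finset.mem_univ x)
    rw [Finset.card_univ, ← hn] at hs2
    set s := sOf (F x)
    set m := (F x).2.1
    have hGle : G d d ≤ 2025 * d := G_le d d hd le_rfl
    have hsb : s + 1 ≤ 2026 * (n * d) := by
      have h1 : s ≤ 1 + n * G d d := by
        have := hlpos x
        omega
      have h2 : n * G d d ≤ n * (2025 * d) := Nat.mul_le_mul_left _ hGle
      have h3 : 2 ≤ n * d := le_trans (by norm_num) (Nat.mul_le_mul hcard hd)
      calc s + 1 ≤ 2 + n * (2025 * d) := by omega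
        _ ≤ n * d + n * (2025 * d) := by omega
        _ = 2026 * (n * d) := by ring
    have hlog : Nat.log 2 m + 1 ≤ 3 * Nat.log 2 d := by
      have h1 : Nat.log 2 m ≤ Nat.log 2 (d * 2) := Nat.log_mono_right (by omega)
      have h2 : Nat.log 2 (d * 2) = Nat.log 2 d + 1 :=
        Nat.log_mul_base (by norm_num) (by omega)
      have h3 : 0 < Nat.log 2 d := Nat.log_pos (by norm_num) hd
      omega
    calc L x ≤ 28 * m * (s + 1) * (Nat.log 2 m + 1) ^ 2 := enc_le s m (by omega)
      _ ≤ 28 * (2 * d) * (2026 * (n * d)) * (3 * Nat.log 2 d) ^ 2 := by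
          apply Nat.mul_le_mul
          · apply Nat.mul_le_mul
            · exact Nat.mul_le_mul_left _ hm2
            · exact hsb
          · exact Nat.pow_le_pow_left hlog 2
      _ = 1021104 * n * d ^ 2 * (Nat.log 2 d) ^ 2 := by ring
end

section
/- There exists a constant C such that for all integers n ≥ 1 and d ≥ 1 there exists a family 𝓘 of at most C · n · d² intervals of natural numbers, each contained in [0, C·n], with the following property: for every finite tree order (X, ≤) with at most n elements and height at most d, there is an injective map I : X → 𝓘 such that for all u, v ∈ X, u ≤ v if and only if I(u) ⊆ I(v). -/
namespace LegalAux

def qf (d ℓ : ℕ) : ℕ := 2 ^ Nat.log 2 (ℓ / (2 * d))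

def roundL (d t : ℕ) : ℕ :=
  if t < 2 * d then t else 2 * qf d t * ((t + (2 * qf d t - 1)) / (2 * qf d t))

lemma one_le_qf (d ℓ : ℕ) : 1 ≤ qf d ℓ := Nat.one_le_two_pow

lemma qf_dvd_qf (d : ℕ) {ℓ ℓ' : ℕ} (h : ℓ ≤ ℓ') : qf d ℓ ∣ qf d ℓ' :=
  pow_dvd_pow 2 (Nat.log_mono_right (Nat.div_le_div_right h))

lemma two_d_mul_qf_le (d ℓ : ℕ) : 2 * d * qf d ℓ ≤ ℓ + 2 * d := by
  rcases eq_or_ne (ℓ / (2 * d)) 0 with h | h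
  · have h1 : qf d ℓ = 1 := by unfold qf; rw [h]; simp
    rw [h1]; omega
  · have h1 : qf d ℓ ≤ ℓ / (2 * d) := Nat.pow_log_le_self 2 h
    have h2 : 2 * d * (ℓ / (2 * d)) ≤ ℓ := Nat.mul_div_le ℓ (2 * d)
    have := Nat.mul_le_mul_left (2 * d) h1
    omega

lemma ceil_div_ge (q m : ℕ) (hq : 1 ≤ q) : m ≤ q * ((m + (q - 1)) / q) := by
  have h := Nat.div_add_mod (m + (q - 1)) q
  have h2 : (m + (q - 1)) % q < q := Nat.mod_lt _ hq
  omega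

lemma ceil_div_le (q m : ℕ) : q * ((m + (q - 1)) / q) ≤ m + (q - 1) := Nat.mul_div_le _ q

lemma le_roundL (d t : ℕ) : t ≤ roundL d t := by
  unfold roundL
  split_ifs with h
  · exact le_rfl
  · exact ceil_div_ge _ t (by have := one_le_qf d t; omega)

lemma roundL_le (d t : ℕ) : roundL d t ≤ t + 2 * qf d t := by
  unfold roundL
  split_ifs with h
  · omega
  · have := ceil_div_le (2 * qf d t) t
    have := one_le_qf d t
    omega

lemma qf_lt_of_small (d t : ℕ) (h : t < 2 * d) : qf d t = 1 := by
  unfold qf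
  rw [Nat.div_eq_of_lt h]
  simp

lemma qf_roundL (d t : ℕ) (hd : 1 ≤ d) :
    qf d (roundL d t) ≤ 2 * qf d t ∧ qf d (roundL d t) ∣ roundL d t := by
  by_cases h : t < 2 * d
  · have hr : roundL d t = t := by unfold roundL; rw [if_pos h]
    rw [hr, qf_lt_of_small d t h]
    exact ⟨by omega, one_dvd _⟩
  · push_neg at h
    set a := Nat.log 2 (t / (2 * d)) with ha
    have hq : qf d t = 2 ^ a := rfl
    have hS : roundL d t = 2 * qf d t * ((t + (2 * qf d t - 1)) / (2 * qf d t)) := by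
      unfold roundL; rw [if_neg (by omega)]
    have h2q : 2 * qf d t = 2 ^ (a + 1) := by rw [hq, pow_succ]; ring
    have htq : t < 2 ^ (a + 1) * (2 * d) := by
      have h0 : t / (2 * d) < 2 ^ (a + 1) := Nat.lt_pow_succ_log_self (by norm_num) _
      exact (Nat.div_lt_iff_lt_mul (by omega)).mp h0
    have hSle : roundL d t ≤ t + (2 * qf d t - 1) := by rw [hS]; exact ceil_div_le _ _
    have hq1 : 1 ≤ qf d t := one_le_qf d t
    have hS2 : roundL d t < 2 ^ (a + 2) * (2 * d) := by
      have e1 : 2 ^ (a + 2) * (2 * d) = 2 ^ (a + 1) * (2 * d) + 2 ^ (a + 1) * (2 * d) := by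
        rw [pow_succ]; ring
      have e2 : 2 ^ (a + 1) ≤ 2 ^ (a + 1) * (2 * d) := Nat.le_mul_of_pos_right _ (by omega)
      omega
    have hlog : Nat.log 2 (roundL d t / (2 * d)) ≤ a + 1 := by
      rcases eq_or_ne (roundL d t / (2 * d)) 0 with h0 | h0
      · rw [h0]; simp
      · have hlt : roundL d t / (2 * d) < 2 ^ (a + 2) := by
          rw [Nat.div_lt_iff_lt_mul (by omega)]; exact hS2
        have := Nat.log_lt_of_lt_pow h0 hlt
        omega
    constructor
    · rw [h2q]
      exact Nat.pow_le_pow_right (by norm_num) hlog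
    · have d1 : qf d (roundL d t) ∣ 2 ^ (a + 1) := pow_dvd_pow 2 hlog
      have d2 : (2 ^ (a + 1) : ℕ) ∣ roundL d t := by
        rw [hS, h2q]; exact Dvd.intro _ rfl
      exact d1.trans d2

lemma budget_step {D W' Q' t S qS qt : ℝ} (hD : 1 ≤ D)
    (hQ' : 2*D*Q' ≤ W' + 2*D) (hqt : 2*D*qt ≤ t + 2*D) (hS : S ≤ t + 2*qt)
    (hqS : qS ≤ 2*qt) (ht : t = W' + Q' + 1) (hW0 : 0 ≤ W') :
    S + qS ≤ (1 + 5/D) * W' + 10 := by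
  have hD0 : (0:ℝ) < D := by linarith
  have c1 : S + qS ≤ t + 4*qt := by linarith
  have e8 : 4*D^2*(S+qS) ≤ (4*D^2+20*D)*W' + 40*D^2 := by
    nlinarith [mul_le_mul_of_nonneg_left c1 (show (0:ℝ) ≤ 4*D^2 by positivity),
      mul_le_mul_of_nonneg_left hqt (show (0:ℝ) ≤ 8*D by positivity),
      mul_le_mul_of_nonneg_left hQ' (show (0:ℝ) ≤ 2*D+4 by positivity),
      mul_nonneg (show (0:ℝ) ≤ 10*D - 4 by linarith) hW0,
      sq_nonneg D, mul_pos hD0 hD0]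
  have heq : (1 + 5/D) * W' + 10 = ((4*D^2+20*D)*W' + 40*D^2) / (4*D^2) := by
    field_simp; ring
  rw [heq, le_div_iff₀ (by positivity)]
  nlinarith [e8]

theorem pack (d : ℕ) (hd : 1 ≤ d) :
    ∀ (n : ℕ) (X : Type) [Fintype X] [PartialOrder X],
      IsTreeOrder X → Fintype.card X = n → ∀ h : ℕ, HeightLE X h →
      ∃ (W : ℕ) (f : X → ℕ × ℕ),
        ((W : ℝ) ≤ 11 * n * (1 + 5 / (d:ℝ)) ^ h) ∧
        (∀ x, (f x).1 ≤ (f x).2 ∧ (f x).2 < W ∧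
          qf d ((f x).2 - (f x).1 + 1) ∣ (f x).1 ∧
          qf d ((f x).2 - (f x).1 + 1) ∣ ((f x).2 - (f x).1 + 1)) ∧
        (∀ u v : X, u ≤ v ↔ ((f v).1 ≤ (f u).1 ∧ (f u).2 ≤ (f v).2)) := by
  intro n
  induction n using Nat.strong_induction_on with
  | _ n IH =>
    intro X _ _ htree hcard h hht
    classical
    rcases Nat.eq_zero_or_pos n with hn0 | hn1
    · subst hn0
      have hE : IsEmpty X := Fintype.card_eq_zero_iff.mp hcard
      refine ⟨0, fun _ => (0, 0), by norm_num, fun x => (hE.false x).elim,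
        fun u _ => (hE.false u).elim⟩
    · -- nonempty case
      have hne : (Finset.univ : Finset X).Nonempty := by
        rw [← Finset.card_pos, Finset.card_univ, hcard]; exact hn1
      obtain ⟨r, -, hrmax⟩ : ∃ r ∈ (Finset.univ : Finset X), ∀ z ∈ (Finset.univ : Finset X), ¬ r < z := by
        obtain ⟨r, hr⟩ := Finset.exists_maximal hne
        exact ⟨r, hr.1, fun z hz hlt => hlt.not_ge (hr.2 hz hlt.le)⟩
      have hrmax' : ∀ z : X, r ≤ z → z = r := by
        intro z hz
        by_contra hne'
        exact hrmax z (Finset.mem_univ z) (lt_of_le_of_ne hz (Ne.symm hne'))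
      obtain ⟨h', rfl⟩ : ∃ h'', h = h'' + 1 := by
        have h1 := hht {r} (by simp)
        simp only [Finset.card_singleton] at h1
        exact ⟨h - 1, by omega⟩
      -- subtype orders
      have htreeY : IsTreeOrder {x : X // x ≤ r ∧ x ≠ r} := by
        intro x y z hxy hxz
        have := htree x.1 y.1 z.1 (Subtype.coe_le_coe.mpr hxy) (Subtype.coe_le_coe.mpr hxz)
        rcases this with h1 | h1
        · exact Or.inl (Subtype.coe_le_coe.mp h1)
        · exact Or.inr (Subtype.coe_le_coe.mp h1)
      have htreeZ : IsTreeOrder {x : X // ¬ x ≤ r} := by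
        intro x y z hxy hxz
        have := htree x.1 y.1 z.1 (Subtype.coe_le_coe.mpr hxy) (Subtype.coe_le_coe.mpr hxz)
        rcases this with h1 | h1
        · exact Or.inl (Subtype.coe_le_coe.mp h1)
        · exact Or.inr (Subtype.coe_le_coe.mp h1)
      -- heights
      have hhtY : HeightLE {x : X // x ≤ r ∧ x ≠ r} h' := by
        intro c hc
        have hr_not : r ∉ c.image Subtype.val := by
          intro hmem
          obtain ⟨y, _, heq2⟩ := Finset.mem_image.mp hmem
          exact absurd heq2 y.2.2
        have hchain : ∀ u ∈ insert r (c.image Subtype.val), ∀ v ∈ insert r (c.image Subtype.val),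
            u ≤ v ∨ v ≤ u := by
          intro u hu v hv
          rcases Finset.mem_insert.mp hu with rfl | hu'
          · rcases Finset.mem_insert.mp hv with rfl | hv'
            · exact Or.inl le_rfl
            · obtain ⟨y, _, rfl⟩ := Finset.mem_image.mp hv'
              exact Or.inr y.2.1
          · rcases Finset.mem_insert.mp hv with rfl | hv'
            · obtain ⟨y, _, rfl⟩ := Finset.mem_image.mp hu'
              exact Or.inl y.2.1
            · obtain ⟨y, hy, rfl⟩ := Finset.mem_image.mp hu'
              obtain ⟨w, hw, rfl⟩ := Finset.mem_image.mp hv'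
              rcases hc y hy w hw with h1 | h1
              · exact Or.inl (Subtype.coe_le_coe.mpr h1)
              · exact Or.inr (Subtype.coe_le_coe.mpr h1)
        have hcc := hht _ hchain
        rw [Finset.card_insert_of_notMem hr_not,
          Finset.card_image_of_injective c Subtype.val_injective] at hcc
        omega
      have hhtZ : HeightLE {x : X // ¬ x ≤ r} (h' + 1) := by
        intro c hc
        have hchain : ∀ u ∈ c.image Subtype.val, ∀ v ∈ c.image Subtype.val,
            u ≤ v ∨ v ≤ u := by
          intro u hu v hv
          obtain ⟨y, hy, rfl⟩ := Finset.mem_image.mp hu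
          obtain ⟨w, hw, rfl⟩ := Finset.mem_image.mp hv
          rcases hc y hy w hw with h1 | h1
          · exact Or.inl (Subtype.coe_le_coe.mpr h1)
          · exact Or.inr (Subtype.coe_le_coe.mpr h1)
        have hcc := hht _ hchain
        rw [Finset.card_image_of_injective c Subtype.val_injective] at hcc
        exact hcc
      -- cardinalities
      set nY := Fintype.card {x : X // x ≤ r ∧ x ≠ r} with hnY
      set nZ := Fintype.card {x : X // ¬ x ≤ r} with hnZ
      have hcards : nY + 1 + nZ = n := by
        have h1 : (Finset.univ.filter (fun x : X => x ≤ r)).card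
            + (Finset.univ.filter (fun x : X => ¬ x ≤ r)).card = Fintype.card X := by
          rw [← Finset.card_univ]
          exact Finset.card_filter_add_card_filter_not _
        have h2 : Finset.univ.filter (fun x : X => x ≤ r)
            = insert r (Finset.univ.filter (fun x : X => x ≤ r ∧ x ≠ r)) := by
          ext x
          simp only [Finset.mem_insert, Finset.mem_filter, Finset.mem_univ, true_and]
          constructor
          · intro hx
            by_cases hxr : x = r
            · exact Or.inl hxr
            · exact Or.inr ⟨hx, hxr⟩
          · rintro (rfl | ⟨hx, _⟩)
            · exact le_rfl
            · exact hx
        have h3 : r ∉ Finset.univ.filter (fun x : X => x ≤ r ∧ x ≠ r) := by simp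
        have h4 : nY = (Finset.univ.filter (fun x : X => x ≤ r ∧ x ≠ r)).card :=
          Fintype.card_subtype _
        have h5 : nZ = (Finset.univ.filter (fun x : X => ¬ x ≤ r)).card :=
          Fintype.card_subtype _
        rw [h2, Finset.card_insert_of_notMem h3] at h1
        rw [hcard] at h1
        omega
      -- IH applications
      obtain ⟨W', f', hW', hf', hiff'⟩ :=
        IH nY (by omega) {x : X // x ≤ r ∧ x ≠ r} htreeY rfl h' hhtY
      obtain ⟨WZ, g, hWZ, hg, hiffZ⟩ :=
        IH nZ (by omega) {x : X // ¬ x ≤ r} htreeZ rfl (h' + 1) hhtZ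
      -- interval layout
      set Q' := qf d W' with hQ'def
      set t := W' + Q' + 1 with htdef
      set S := roundL d t with hSdef
      set qS := qf d S with hqSdef
      set Δ := qS * ((WZ + (qS - 1)) / qS) with hΔdef
      have hQ1 : 1 ≤ Q' := one_le_qf d W'
      have hqS1 : 1 ≤ qS := one_le_qf d S
      have hS_ge : t ≤ S := le_roundL d t
      have hS_le : S ≤ t + 2 * qf d t := roundL_le d t
      have hqfS := qf_roundL d t hd
      have hqS_le : qS ≤ 2 * qf d t := hqfS.1
      have hqS_dvd_S : qS ∣ S := hqfS.2
      have hΔ_ge : WZ ≤ Δ := ceil_div_ge qS WZ hqS1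
      have hΔ_le : Δ ≤ WZ + (qS - 1) := ceil_div_le qS WZ
      have hΔ_dvd : qS ∣ Δ := Dvd.intro _ rfl
      set W := Δ + S with hWdef
      set f : X → ℕ × ℕ := fun x =>
        if hx : x ≤ r then
          (if hxr : x = r then (Δ, Δ + (S - 1))
           else (Δ + Q' + (f' ⟨x, hx, hxr⟩).1, Δ + Q' + (f' ⟨x, hx, hxr⟩).2))
        else g ⟨x, hx⟩ with hfdef
      have hfr : f r = (Δ, Δ + (S - 1)) := by
        rw [hfdef]; simp
      have hfY : ∀ (x : X) (hx : x ≤ r) (hxr : x ≠ r),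
          f x = (Δ + Q' + (f' ⟨x, hx, hxr⟩).1, Δ + Q' + (f' ⟨x, hx, hxr⟩).2) := by
        intro x hx hxr
        rw [hfdef]
        simp [hx, hxr]
      have hfZ : ∀ (x : X) (hx : ¬ x ≤ r), f x = g ⟨x, hx⟩ := by
        intro x hx
        rw [hfdef]
        simp [hx]
      -- the invariant for all points
      have hmain : ∀ x : X, (f x).1 ≤ (f x).2 ∧ (f x).2 < W ∧
          qf d ((f x).2 - (f x).1 + 1) ∣ (f x).1 ∧
          qf d ((f x).2 - (f x).1 + 1) ∣ ((f x).2 - (f x).1 + 1) := by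
        intro x
        by_cases hx : x ≤ r
        · by_cases hxr : x = r
          · subst hxr
            rw [hfr]
            have hlen : (Δ + (S - 1)) - Δ + 1 = S := by omega
            simp only [hlen]
            exact ⟨by omega, by omega, hΔ_dvd, hqS_dvd_S⟩
          · rw [hfY x hx hxr]
            obtain ⟨ha'b', hb'W', hdvd1', hdvd2'⟩ := hf' ⟨x, hx, hxr⟩
            set a' := (f' ⟨x, hx, hxr⟩).1
            set b' := (f' ⟨x, hx, hxr⟩).2
            have hlen : (Δ + Q' + b') - (Δ + Q' + a') + 1 = b' - a' + 1 := by omega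
            simp only [hlen]
            have hlenle : b' - a' + 1 ≤ W' := by omega
            have hdQ : qf d (b' - a' + 1) ∣ Q' := qf_dvd_qf d hlenle
            have hdS : qf d (b' - a' + 1) ∣ qS := by
              apply qf_dvd_qf d
              omega
            refine ⟨by omega, by omega, ?_, hdvd2'⟩
            exact dvd_add (dvd_add (hdS.trans hΔ_dvd) hdQ) hdvd1'
        · rw [hfZ x hx]
          obtain ⟨hab, hbW, hdvd1, hdvd2⟩ := hg ⟨x, hx⟩
          exact ⟨hab, by omega, hdvd1, hdvd2⟩
      -- range helpers
      have hYlow : ∀ (x : X), x ≤ r → Δ ≤ (f x).1 := by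
        intro x hx
        by_cases hxr : x = r
        · rw [hxr, hfr]
        · rw [hfY x hx hxr]; omega
      have hYhigh : ∀ (x : X), x ≤ r → (f x).2 ≤ Δ + (S - 1) := by
        intro x hx
        by_cases hxr : x = r
        · rw [hxr, hfr]
        · rw [hfY x hx hxr]
          have := (hf' ⟨x, hx, hxr⟩).2.1
          omega
      have hZhigh : ∀ (x : X), (hx : ¬ x ≤ r) → (f x).2 < WZ := by
        intro x hx
        rw [hfZ x hx]
        exact (hg ⟨x, hx⟩).2.1
      refine ⟨W, f, ?_, hmain, ?_⟩
      · -- the budget bound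
        have hD1 : (1:ℝ) ≤ (d:ℝ) := by exact_mod_cast hd
        have c1 : 2*(d:ℝ)*(Q':ℝ) ≤ (W':ℝ) + 2*(d:ℝ) := by
          have h0 : 2 * d * Q' ≤ W' + 2 * d := two_d_mul_qf_le d W'
          exact_mod_cast h0
        have c2 : 2*(d:ℝ)*(qf d t : ℝ) ≤ (t:ℝ) + 2*(d:ℝ) := by
          have h0 := two_d_mul_qf_le d t
          exact_mod_cast h0
        have c3 : (S:ℝ) ≤ (t:ℝ) + 2*(qf d t : ℝ) := by exact_mod_cast hS_le
        have c4 : (qS:ℝ) ≤ 2*(qf d t:ℝ) := by exact_mod_cast hqS_le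
        have c5 : (t:ℝ) = (W':ℝ) + (Q':ℝ) + 1 := by
          have h0 : t = W' + Q' + 1 := htdef
          exact_mod_cast h0
        have key := budget_step hD1 c1 c2 c3 c4 c5 (by positivity)
        have cΔ : (Δ:ℝ) ≤ (WZ:ℝ) + (qS:ℝ) := by
          have h0 : Δ ≤ WZ + qS := by omega
          exact_mod_cast h0
        have hρ : (1:ℝ) ≤ 1 + 5/(d:ℝ) := by
          have h0 : (0:ℝ) ≤ 5/(d:ℝ) := by positivity
          linarith
        have hρpow : (1:ℝ) ≤ (1 + 5/(d:ℝ))^(h'+1) := one_le_pow₀ hρ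
        have hmul : (1 + 5/(d:ℝ)) * (W':ℝ)
            ≤ (1 + 5/(d:ℝ)) * (11*(nY:ℝ)*(1+5/(d:ℝ))^h') :=
          mul_le_mul_of_nonneg_left hW' (by linarith)
        have hmul2 : (1 + 5/(d:ℝ)) * (W':ℝ) ≤ 11*(nY:ℝ)*(1+5/(d:ℝ))^(h'+1) := by
          have e1 : (1 + 5/(d:ℝ)) * (11*(nY:ℝ)*(1+5/(d:ℝ))^h')
              = 11*(nY:ℝ)*(1+5/(d:ℝ))^(h'+1) := by ring
          linarith [e1 ▸ hmul]
        have hnreal : (n:ℝ) = (nY:ℝ) + 1 + (nZ:ℝ) := by exact_mod_cast hcards.symm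
        have hWr : (W:ℝ) = (Δ:ℝ) + (S:ℝ) := by
          have h0 : W = Δ + S := hWdef
          exact_mod_cast h0
        rw [hWr, hnreal]
        linarith [key, cΔ, hWZ, hmul2, hρpow]
      · -- the order iff
        intro u v
        by_cases hu : u ≤ r
        · by_cases hv : v ≤ r
          · by_cases hur : u = r
            · by_cases hvr : v = r
              · rw [hur, hvr]
                simp
              · constructor
                · intro hle
                  have hrv : r ≤ v := hur ▸ hle
                  exact absurd (hrmax' v hrv) hvr
                · rintro ⟨h1, h2⟩
                  exfalso
                  rw [hur, hfr] at h1
                  rw [hfY v hv hvr] at h1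
                  simp at h1
                  omega
            · by_cases hvr : v = r
              · have hRHS : (f v).1 ≤ (f u).1 ∧ (f u).2 ≤ (f v).2 := by
                  rw [hvr, hfr]
                  exact ⟨hYlow u hu, hYhigh u hu⟩
                exact iff_of_true (le_of_le_of_eq hu hvr.symm) hRHS
              · rw [hfY u hu hur, hfY v hv hvr]
                have hsub : u ≤ v ↔ (⟨u, hu, hur⟩ : {x : X // x ≤ r ∧ x ≠ r})
                    ≤ ⟨v, hv, hvr⟩ := Iff.symm Subtype.coe_le_coe
                rw [hsub, hiff' ⟨u, hu, hur⟩ ⟨v, hv, hvr⟩]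
                dsimp only
                constructor
                · rintro ⟨h1, h2⟩; exact ⟨by omega, by omega⟩
                · rintro ⟨h1, h2⟩; exact ⟨by omega, by omega⟩
          · -- u on Y side, v in Z : both sides false
            constructor
            · intro hle
              rcases htree u v r hle hu with h1 | h1
              · exact absurd h1 hv
              · exact absurd ((hrmax' v h1) ▸ le_rfl) hv
            · rintro ⟨h1, h2⟩
              exfalso
              have e1 := hYlow u hu
              have e2 := hZhigh v hv
              have e3 := (hmain u).1
              omega
        · by_cases hv : v ≤ r
          · constructor
            · intro hle
              exact absurd (le_trans hle hv) hu
            · rintro ⟨h1, h2⟩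
              exfalso
              have e1 := hYlow v hv
              have e2 := hZhigh u hu
              have e3 := (hmain u).1
              omega
          · rw [hfZ u hu, hfZ v hv]
            have hsub : u ≤ v ↔ (⟨u, hu⟩ : {x : X // ¬ x ≤ r}) ≤ ⟨v, hv⟩ :=
              Iff.symm Subtype.coe_le_coe
            rw [hsub, hiffZ ⟨u, hu⟩ ⟨v, hv⟩]


lemma rho_pow_le (d : ℕ) (hd : 1 ≤ d) : ((1:ℝ) + 5/(d:ℝ))^d ≤ 149 := by
  have hD0 : (0:ℝ) < d := by exact_mod_cast hd
  have h1 : (1:ℝ) + 5/(d:ℝ) ≤ Real.exp (5/(d:ℝ)) := by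
    have := Real.add_one_le_exp (5/(d:ℝ)); linarith
  have h2 : ((1:ℝ) + 5/(d:ℝ))^d ≤ Real.exp (5/(d:ℝ))^d :=
    pow_le_pow_left₀ (by positivity) h1 d
  have h3 : Real.exp (5/(d:ℝ))^d = Real.exp 5 := by
    rw [← Real.exp_nat_mul]
    congr 1
    field_simp
  have h4 : Real.exp 5 = Real.exp 1 ^ 5 := by
    rw [← Real.exp_nat_mul]; norm_num
  have h5 : Real.exp 1 ^ 5 ≤ (2.7182818286:ℝ)^5 :=
    pow_le_pow_left₀ (le_of_lt (Real.exp_pos 1)) (le_of_lt Real.exp_one_lt_d9) 5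
  have h6 : (2.7182818286:ℝ)^5 ≤ 149 := by norm_num
  calc ((1:ℝ) + 5/(d:ℝ))^d ≤ Real.exp (5/(d:ℝ))^d := h2
    _ = Real.exp 5 := h3
    _ ≤ 149 := by rw [h4]; linarith

lemma geom_sum_div (L M : ℕ) : (∑ a ∈ Finset.range L, M / 2^a) ≤ 2 * M := by
  induction L generalizing M with
  | zero => simp
  | succ L IH =>
    rw [Finset.sum_range_succ']
    have hterm : ∀ k, M / 2^(k+1) = (M/2)/2^k := by
      intro k
      rw [Nat.div_div_eq_div_mul, pow_succ']
    simp only [hterm]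
    have := IH (M/2)
    have h0 : M / 2^0 = M := by norm_num
    rw [h0]
    omega

def famF (d M : ℕ) : Finset (ℕ × ℕ) :=
  (Finset.range M ×ˢ Finset.range M).filter
    (fun p : ℕ × ℕ => p.1 ≤ p.2 ∧ qf d (p.2 - p.1 + 1) ∣ p.1 ∧
      qf d (p.2 - p.1 + 1) ∣ (p.2 - p.1 + 1))

lemma famF_card (d M : ℕ) (hd : 1 ≤ d) (hM : 1 ≤ M) : (famF d M).card ≤ 12 * d * M := by
  classical
  set L := Nat.log 2 M with hL
  have hcard : ((Finset.range (L + 1)).sigma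
      (fun a : ℕ => Finset.range (4 * d) ×ˢ Finset.range (M / 2 ^ a + 1))).card
      ≤ 12 * d * M := by
    rw [Finset.card_sigma]
    have h1 : ∀ a ∈ Finset.range (L+1),
        (Finset.range (4 * d) ×ˢ Finset.range (M / 2 ^ a + 1)).card
        = 4 * d * (M / 2 ^ a + 1) := by
      intro a _
      rw [Finset.card_product, Finset.card_range, Finset.card_range]
    rw [Finset.sum_congr rfl h1]
    have h2 : ∑ a ∈ Finset.range (L+1), 4 * d * (M / 2 ^ a + 1)
        = 4 * d * ((∑ a ∈ Finset.range (L+1), M / 2 ^ a) + (L+1)) := by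
      rw [← Finset.mul_sum, Finset.sum_add_distrib]
      simp
    rw [h2]
    have h3 := geom_sum_div (L+1) M
    have h4 : L < M := Nat.log_lt_self 2 (by omega)
    calc 4 * d * ((∑ a ∈ Finset.range (L+1), M / 2 ^ a) + (L+1))
        ≤ 4 * d * (2 * M + M) := by
          apply Nat.mul_le_mul_left
          omega
      _ = 12 * d * M := by ring
  refine le_trans ?_ hcard
  apply Finset.card_le_card_of_injOn
    (fun p => ⟨Nat.log 2 ((p.2 - p.1 + 1) / (2 * d)),
      ((p.2 - p.1 + 1) / 2 ^ (Nat.log 2 ((p.2 - p.1 + 1) / (2 * d))),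
       p.1 / 2 ^ (Nat.log 2 ((p.2 - p.1 + 1) / (2 * d))))⟩)
  · intro p hp
    simp only [Finset.mem_coe, famF, Finset.mem_filter, Finset.mem_product, Finset.mem_range] at hp
    obtain ⟨⟨hp1, hp2⟩, hle, hdvd1, hdvd2⟩ := hp
    set len := p.2 - p.1 + 1 with hlen
    set a := Nat.log 2 (len / (2 * d)) with ha
    simp only [Finset.mem_coe, Finset.mem_sigma, Finset.mem_product, Finset.mem_range, ← hlen, ← ha]
    refine ⟨?_, ?_, ?_⟩
    · have hlenM : len ≤ M := by omega
      have : len / (2 * d) ≤ M := le_trans (Nat.div_le_self _ _) hlenM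
      have := Nat.log_mono_right (b := 2) this
      omega
    · have h0 : len / (2 * d) < 2 ^ (a + 1) := Nat.lt_pow_succ_log_self (by norm_num) _
      have h1 : len < 2 ^ (a+1) * (2 * d) := (Nat.div_lt_iff_lt_mul (by omega)).mp h0
      rw [Nat.div_lt_iff_lt_mul (Nat.pow_pos (n := a) (by norm_num : 0 < 2))]
      calc len < 2 ^ (a+1) * (2*d) := h1
        _ = 4 * d * 2 ^ a := by rw [pow_succ]; ring
    · have : p.1 / 2 ^ a ≤ M / 2 ^ a := Nat.div_le_div_right (by omega)
      omega
  · intro p hp p' hp' heq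
    simp only [famF, Finset.coe_filter, Set.mem_setOf_eq, Finset.mem_product,
      Finset.mem_range] at hp hp'
    obtain ⟨⟨hp1, hp2⟩, hle, hdvd1, hdvd2⟩ := hp
    obtain ⟨⟨hp1', hp2'⟩, hle', hdvd1', hdvd2'⟩ := hp'
    have hfst : Nat.log 2 ((p.2 - p.1 + 1) / (2 * d))
        = Nat.log 2 ((p'.2 - p'.1 + 1) / (2 * d)) := congrArg Sigma.fst heq
    set a := Nat.log 2 ((p.2 - p.1 + 1) / (2 * d)) with ha
    have hsnd : ((p.2 - p.1 + 1) / 2 ^ a, p.1 / 2 ^ a)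
        = ((p'.2 - p'.1 + 1) / 2 ^ a, p'.1 / 2 ^ a) := by
      have h2 := (Sigma.ext_iff.mp heq).2
      beta_reduce at h2
      rw [← hfst] at h2
      exact eq_of_heq h2
    have hq : qf d (p.2 - p.1 + 1) = 2 ^ a := rfl
    have hq' : qf d (p'.2 - p'.1 + 1) = 2 ^ a := by rw [qf, ← hfst]
    rw [hq] at hdvd1 hdvd2
    rw [hq'] at hdvd1' hdvd2'
    have e1 : p.2 - p.1 + 1 = p'.2 - p'.1 + 1 := by
      have := congrArg Prod.fst hsnd
      simp only at this
      rw [← Nat.div_mul_cancel hdvd2, ← Nat.div_mul_cancel hdvd2', this]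
    have e2 : p.1 = p'.1 := by
      have := congrArg Prod.snd hsnd
      simp only at this
      rw [← Nat.div_mul_cancel hdvd1, ← Nat.div_mul_cancel hdvd1', this]
    have : p.2 = p'.2 := by omega
    exact Prod.ext e2 this


end LegalAux

open LegalAux in
/-- There is a family of `O(n·d²)` intervals inside `[0, O(n)]` such that
every tree order with at most `n` elements and height at most `d` admits a
legal-containment mapping into the family: `u ≤ v` iff `I u ⊆ I v`. -/
theorem legal_containment_into_small_interval_family :
    ∃ C : ℕ, ∀ n d : ℕ, 1 ≤ n → 1 ≤ d →
      ∃ 𝓘 : Finset (Set ℕ),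
        𝓘.card ≤ C * n * d ^ 2 ∧
        (∀ J ∈ 𝓘, ∃ a b : ℕ, a ≤ b ∧ b ≤ C * n ∧ J = Set.Icc a b) ∧
        ∀ (X : Type) [Fintype X] [PartialOrder X],
          IsTreeOrder X → Fintype.card X ≤ n → HeightLE X d →
          ∃ I : X → Set ℕ,
            (∀ x : X, I x ∈ 𝓘) ∧
            Function.Injective I ∧
            (∀ u v : X, u ≤ v ↔ I u ⊆ I v) := by
  classical
  refine ⟨24576, fun n d hn hd => ?_⟩
  refine ⟨(famF d (2048 * n)).image (fun p => Set.Icc p.1 p.2), ?_, ?_, ?_⟩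
  · calc ((famF d (2048 * n)).image (fun p => Set.Icc p.1 p.2)).card
        ≤ (famF d (2048 * n)).card := Finset.card_image_le
      _ ≤ 12 * d * (2048 * n) := famF_card d (2048 * n) hd (by omega)
      _ = 24576 * n * d := by ring
      _ ≤ 24576 * n * d ^ 2 := by
          have hdd : d ≤ d ^ 2 := Nat.le_self_pow (by norm_num) d
          exact Nat.mul_le_mul_left _ hdd
  · intro J hJ
    obtain ⟨p, hp, rfl⟩ := Finset.mem_image.mp hJ
    simp only [famF, Finset.mem_filter, Finset.mem_product, Finset.mem_range] at hp
    exact ⟨p.1, p.2, hp.2.1, by omega, rfl⟩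
  · intro X _ _ htree hcardle hht
    obtain ⟨W, f, hW, hf, hiff⟩ := pack d hd (Fintype.card X) X htree rfl d hht
    have hWM : W ≤ 2048 * n := by
      have h1 : ((Fintype.card X : ℕ):ℝ) ≤ (n:ℝ) := by exact_mod_cast hcardle
      have h2 := rho_pow_le d hd
      have h3 : (0:ℝ) ≤ (1 + 5/(d:ℝ))^d := by positivity
      have h4 : (0:ℝ) ≤ (Fintype.card X : ℝ) := by positivity
      have h5 : (W:ℝ) ≤ 11 * (n:ℝ) * 149 := by
        calc (W:ℝ) ≤ 11 * (Fintype.card X : ℝ) * (1 + 5/(d:ℝ))^d := hW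
          _ ≤ 11 * (n:ℝ) * (1 + 5/(d:ℝ))^d := by nlinarith
          _ ≤ 11 * (n:ℝ) * 149 := by nlinarith
      have h6 : (W:ℝ) ≤ ((2048 * n : ℕ):ℝ) := by push_cast; nlinarith
      exact_mod_cast h6
    refine ⟨fun x => Set.Icc (f x).1 (f x).2, ?_, ?_, ?_⟩
    · intro x
      apply Finset.mem_image_of_mem
      obtain ⟨hab, hbW, hd1, hd2⟩ := hf x
      simp only [famF, Finset.mem_filter, Finset.mem_product, Finset.mem_range]
      exact ⟨⟨by omega, by omega⟩, hab, hd1, hd2⟩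
    · intro u v huv
      beta_reduce at huv
      have s1 : Set.Icc (f u).1 (f u).2 ⊆ Set.Icc (f v).1 (f v).2 := by rw [huv]
      have s2 : Set.Icc (f v).1 (f v).2 ⊆ Set.Icc (f u).1 (f u).2 := by rw [huv]
      have p1 := (Set.Icc_subset_Icc_iff (hf u).1).mp s1
      have p2 := (Set.Icc_subset_Icc_iff (hf v).1).mp s2
      exact le_antisymm ((hiff u v).mpr p1) ((hiff v u).mpr p2)
    · intro u v
      rw [Set.Icc_subset_Icc_iff (hf u).1]
      exact hiff u v
end

section
/- There exists a constant C such that for all integers n ≥ 2 and d ≥ 2 there exist a natural number N ≤ C · n · d³ and a relation D : Fin N → Fin N → Prop such that for every finite tree order (X, ≤) with at most n elements and height at most d, there is an injective labeling L : X → Fin N satisfying: for all u, v ∈ X, v covers u (i.e., v is the parent of u) if and only if D(L(v), L(u)) holds. (Equivalently: a parenthood/adjacency-labeling scheme for rooted forests with at most n nodes and depth at most d using labels of log₂ n + 3 log₂ d + O(1) bits.) -/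
namespace PScheme

def grd (Q s : ℕ) : ℕ := 2 ^ Nat.log 2 (s / Q)

def rnd (Q s : ℕ) : ℕ := grd Q s * ((s + grd Q s - 1) / grd Q s)

lemma grd_pos (Q s : ℕ) : 0 < grd Q s := Nat.pow_pos (by norm_num)

lemma le_rnd (Q s : ℕ) : s ≤ rnd Q s := by
  unfold rnd
  set g := grd Q s with hg
  have hgpos : 0 < g := grd_pos Q s
  have h1 := Nat.div_add_mod (s + g - 1) g
  have h2 := Nat.mod_lt (s + g - 1) hgpos
  omega

lemma rnd_le (Q s : ℕ) : rnd Q s ≤ s + grd Q s - 1 := by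
  unfold rnd
  set g := grd Q s with hg
  exact Nat.mul_div_le _ _

lemma grd_dvd_rnd (Q s : ℕ) : grd Q s ∣ rnd Q s := ⟨_, rfl⟩

lemma grd_le (Q s : ℕ) (h : Q ≤ s) (hQ : 0 < Q) : grd Q s * Q ≤ s := by
  have h0 : s / Q ≠ 0 := by
    have := (Nat.one_le_div_iff hQ).2 h
    omega
  have h1 : grd Q s ≤ s / Q := Nat.pow_log_le_self 2 h0
  calc grd Q s * Q ≤ (s / Q) * Q := Nat.mul_le_mul_right _ h1
    _ ≤ s := Nat.div_mul_le_self s Q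

lemma grd_of_lt (Q s : ℕ) (h : s < Q) : grd Q s = 1 := by
  have : s / Q = 0 := Nat.div_eq_of_lt h
  simp [grd, this]

lemma rnd_of_lt (Q s : ℕ) (h : s < Q) : rnd Q s = s := by
  have hg : grd Q s = 1 := grd_of_lt Q s h
  simp [rnd, hg]

lemma rnd_mul_le (Q s : ℕ) (hQ : 0 < Q) : rnd Q s * Q ≤ s * (Q + 1) := by
  rcases lt_or_ge s Q with h | h
  · rw [rnd_of_lt Q s h]
    nlinarith
  · have h2 : grd Q s * Q ≤ s := grd_le Q s h hQ
    have h3 : rnd Q s ≤ s + grd Q s - 1 := rnd_le Q s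
    calc rnd Q s * Q ≤ (s + grd Q s - 1) * Q := Nat.mul_le_mul_right _ h3
      _ ≤ (s + grd Q s) * Q := Nat.mul_le_mul_right _ (Nat.sub_le _ _)
      _ = s * Q + grd Q s * Q := add_mul _ _ _
      _ ≤ s * Q + s := Nat.add_le_add_left h2 _
      _ = s * (Q + 1) := by ring

lemma rnd_lt (Q s : ℕ) (hQ : 0 < Q) :
    rnd Q s < (2 * Q + 1) * grd Q s := by
  rcases lt_or_ge s Q with h | h
  · rw [rnd_of_lt Q s h, grd_of_lt Q s h]
    omega
  · set t := Nat.log 2 (s / Q) with ht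
    have hgg : grd Q s = 2 ^ t := rfl
    have h1 : s / Q < 2 ^ (t + 1) := Nat.lt_pow_succ_log_self (by norm_num) _
    have h2 : s < Q * 2 ^ (t + 1) := by
      have := (Nat.div_lt_iff_lt_mul hQ).1 h1
      calc s < 2 ^ (t+1) * Q := this
        _ = Q * 2 ^ (t+1) := by ring
    have h3 : rnd Q s ≤ s + grd Q s - 1 := rnd_le Q s
    calc rnd Q s ≤ s + 2 ^ t := by rw [hgg] at h3; omega
      _ < Q * 2 ^ (t+1) + 2 ^ t := Nat.add_lt_add_right h2 _
      _ = (2 * Q + 1) * 2 ^ t := by ring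
      _ = (2 * Q + 1) * grd Q s := by rw [hgg]

lemma bern_aux (Q : ℕ) : ∀ k, 2 * k ≤ Q → (Q + 1) ^ k * Q ≤ (Q + 2 * k) * Q ^ k := by
  intro k
  induction k with
  | zero => simp
  | succ k ih =>
    intro hk
    have hk' : 2 * k ≤ Q := by omega
    have h1 := ih hk'
    calc (Q + 1) ^ (k+1) * Q = (Q + 1) * ((Q + 1) ^ k * Q) := by ring
      _ ≤ (Q + 1) * ((Q + 2 * k) * Q ^ k) := Nat.mul_le_mul_left _ h1
      _ = (Q * Q + 2 * k * Q + Q + 2 * k) * Q ^ k := by ring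
      _ ≤ (Q * Q + 2 * k * Q + Q + Q) * Q ^ k := Nat.mul_le_mul_right _ (by omega)
      _ ≤ ((Q + 2 * (k+1)) * Q) * Q ^ k := Nat.mul_le_mul_right _ (by nlinarith)
      _ = (Q + 2 * (k+1)) * Q ^ (k+1) := by ring

lemma bern (Q k : ℕ) (h : 2 * k ≤ Q) (hQ : 0 < Q) : (Q + 1) ^ k ≤ 2 * Q ^ k := by
  have h1 := bern_aux Q k h
  have h3 : (Q + 1) ^ k * Q ≤ 2 * Q ^ k * Q := by
    calc (Q + 1) ^ k * Q ≤ (Q + 2 * k) * Q ^ k := h1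
      _ ≤ (2 * Q) * Q ^ k := Nat.mul_le_mul_right _ (by omega)
      _ = 2 * Q ^ k * Q := by ring
  exact Nat.le_of_mul_le_mul_right h3 hQ

lemma pow2_odd_inj : ∀ t s j k : ℕ, 2 ^ t * (2 * j + 1) = 2 ^ s * (2 * k + 1) → t = s ∧ j = k := by
  intro t
  induction t with
  | zero =>
    intro s j k h
    cases s with
    | zero =>
      simp only [pow_zero, one_mul] at h
      exact ⟨rfl, by omega⟩
    | succ s =>
      exfalso
      rw [show (2:ℕ) ^ (s+1) * (2*k+1) = 2 * (2 ^ s * (2*k+1)) by ring] at h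
      simp only [pow_zero, one_mul] at h
      omega
  | succ t ih =>
    intro s j k h
    cases s with
    | zero =>
      exfalso
      rw [show (2:ℕ) ^ (t+1) * (2*j+1) = 2 * (2 ^ t * (2*j+1)) by ring] at h
      simp only [pow_zero, one_mul] at h
      omega
    | succ s =>
      have h' : 2 ^ t * (2 * j + 1) * 2 = 2 ^ s * (2 * k + 1) * 2 := by
        calc 2 ^ t * (2 * j + 1) * 2 = 2 ^ (t+1) * (2 * j + 1) := by ring
          _ = 2 ^ (s+1) * (2 * k + 1) := h
          _ = 2 ^ s * (2 * k + 1) * 2 := by ring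
      obtain ⟨h3, h4⟩ := ih s j k (Nat.eq_of_mul_eq_mul_right (by norm_num) h')
      exact ⟨by omega, h4⟩





lemma digit_split (d : ℕ) (hd : 0 < d) (E E' δ δ' : ℕ) (hδ : δ < d) (hδ' : δ' < d)
    (h : E * d + δ = E' * d + δ') : E = E' ∧ δ = δ' := by
  constructor
  · have h0 := congrArg (fun x => x / d) h
    simpa [add_comm, Nat.add_mul_div_right _ _ hd, Nat.div_eq_of_lt hδ,
      Nat.div_eq_of_lt hδ'] using h0
  · have h0 := congrArg (fun x => x % d) h
    simpa [add_comm, Nat.add_mul_mod_self_left, Nat.mod_eq_of_lt hδ,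
      Nat.mod_eq_of_lt hδ'] using h0

lemma enc_inj (d Q : ℕ) (hd : 0 < d) (t j m δ t' j' m' δ' : ℕ)
    (hm : 1 ≤ m) (hm2 : m ≤ 2 * Q) (hm' : 1 ≤ m') (hm2' : m' ≤ 2 * Q)
    (hδ : δ < d) (hδ' : δ' < d)
    (h : ((2 ^ t * (2 * j + 1)) * (2 * Q + 1) + m) * d + δ
       = ((2 ^ t' * (2 * j' + 1)) * (2 * Q + 1) + m') * d + δ') :
    t = t' ∧ j = j' ∧ m = m' ∧ δ = δ' := by
  obtain ⟨h1, h2⟩ := digit_split d hd _ _ _ _ hδ hδ' h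
  obtain ⟨h3, h4⟩ := digit_split (2 * Q + 1) (by omega) _ _ _ _ (by omega) (by omega) h1
  obtain ⟨h5, h6⟩ := pow2_odd_inj t t' j j' h3
  exact ⟨h5, h6, h4, h2⟩






open Finset

attribute [local instance] Classical.propDecidable

variable (Q : ℕ) {X : Type} [Fintype X] [PartialOrder X]

/-- strict ancestors -/
noncomputable def anc (v : X) : Finset X := univ.filter (fun w => v < w)
noncomputable def dep (v : X) : ℕ := (anc v).card
noncomputable def sub (v : X) : Finset X := univ.filter (fun w => w ≤ v)
noncomputable def siz (v : X) : ℕ := (sub v).card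
noncomputable def chl (v : X) : Finset X := univ.filter (fun w => w ⋖ v)

lemma mem_anc {v w : X} : w ∈ anc v ↔ v < w := by simp [anc]
lemma mem_sub {v w : X} : w ∈ sub v ↔ w ≤ v := by simp [sub]
lemma mem_chl {v w : X} : w ∈ chl v ↔ w ⋖ v := by simp [chl]

lemma dep_lt_of_mem_anc {v w : X} (h : w ∈ anc v) : dep w < dep v := by
  apply Finset.card_lt_card
  constructor
  · intro x hx
    exact mem_anc.2 ((mem_anc.1 h).trans (mem_anc.1 hx))
  · intro hsub
    have := hsub h
    exact absurd (mem_anc.1 this) (lt_irrefl w)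

lemma siz_lt_of_lt {u v : X} (h : u < v) : siz u < siz v := by
  apply Finset.card_lt_card
  constructor
  · intro x hx
    exact mem_sub.2 ((mem_sub.1 hx).trans h.le)
  · intro hsub
    have := hsub (mem_sub.2 (le_refl v))
    exact (not_le_of_gt h) (mem_sub.1 this)

noncomputable def pmin (v : X) (h : (anc v).Nonempty) : X :=
  (Finset.exists_minimal h).choose

lemma pmin_mem (v : X) (h : (anc v).Nonempty) : pmin v h ∈ anc v :=
  (Finset.exists_minimal h).choose_spec.1

lemma pmin_not_lt (v : X) (h : (anc v).Nonempty) {x : X} (hx : x ∈ anc v) :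
    ¬ x < pmin v h :=
  (Finset.exists_minimal h).choose_spec.not_lt hx

noncomputable def par (v : X) : Option X :=
  if h : (anc v).Nonempty then some (pmin v h) else none

noncomputable def cap (v : X) : ℕ :=
  rnd Q (1 + ∑ c ∈ (chl v).attach, cap c.1)
termination_by siz v
decreasing_by
  exact siz_lt_of_lt (mem_chl.1 c.2).lt

noncomputable def S (v : X) : ℕ := 1 + ∑ c ∈ chl v, cap Q c

lemma cap_eq (v : X) : cap Q v = rnd Q (S Q v) := by
  rw [cap, S]
  congr 2
  exact Finset.sum_attach _ _

noncomputable def tg (v : X) : ℕ := Nat.log 2 (S Q v / Q)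
noncomputable def gr (v : X) : ℕ := 2 ^ tg Q v

lemma gr_eq_grd (v : X) : gr Q v = grd Q (S Q v) := rfl

noncomputable def earlier (u v : X) : Prop :=
  tg Q v < tg Q u ∨ (tg Q u = tg Q v ∧ (Fintype.equivFin X u : ℕ) < Fintype.equivFin X v)

noncomputable def off (v : X) : ℕ :=
  ∑ u ∈ univ.filter (fun u => par u = par v ∧ earlier Q u v), cap Q u

noncomputable def pos (v : X) : ℕ :=
  (if h : (anc v).Nonempty then pos (pmin v h) else 0) + off Q v
termination_by dep v
decreasing_by
  exact dep_lt_of_mem_anc (pmin_mem v h)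

noncomputable def roots : Finset X := univ.filter (fun r => par r = (none : Option X))

noncomputable def M0 (Y : Type) [Fintype Y] [PartialOrder Y] : ℕ :=
  ∑ r ∈ (roots : Finset Y), cap Q r

lemma par_eq_none_iff {v : X} : par v = none ↔ dep v = 0 := by
  constructor
  · intro h
    by_contra hd
    have hne : (anc v).Nonempty := Finset.card_pos.1 (by unfold dep at hd; omega)
    simp [par, hne] at h
  · intro h
    have : ¬ (anc v).Nonempty := by
      intro hne
      have := Finset.card_pos.2 hne
      unfold dep at h; omega
    simp [par, this]

lemma pos_root {v : X} (h : par v = none) : pos Q v = off Q v := by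
  have hne : ¬ (anc v).Nonempty := by
    intro hne; simp [par, hne] at h
  rw [pos]
  simp [hne]

lemma pos_child {v : X} {p : X} (h : par v = some p) : pos Q v = pos Q p + off Q v := by
  by_cases hne : (anc v).Nonempty
  · have hp : pmin v hne = p := by
      simp only [par, dif_pos hne] at h
      injection h
    rw [pos, dif_pos hne, hp]
  · simp [par, hne] at h



lemma siz_pos (v : X) : 1 ≤ siz v :=
  Finset.card_pos.2 ⟨v, mem_sub.2 (le_refl v)⟩

lemma cover_of_par {u p : X} (h : par u = some p) : u ⋖ p := by
  have hne : (anc u).Nonempty := by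
    by_contra hne; simp [par, hne] at h
  have hp : pmin u hne = p := by
    simp only [par, dif_pos hne] at h; injection h
  subst hp
  constructor
  · exact mem_anc.1 (pmin_mem u hne)
  · intro w hw hw2
    exact pmin_not_lt u hne (mem_anc.2 hw) hw2

lemma par_of_cover (htree : IsTreeOrder X) {u p : X} (h : u ⋖ p) : par u = some p := by
  have hne : (anc u).Nonempty := ⟨p, mem_anc.2 h.lt⟩
  have hm := pmin_mem u hne
  have heq : pmin u hne = p := by
    rcases htree u (pmin u hne) p (mem_anc.1 hm).le h.lt.le with hc | hc
    · rcases lt_or_eq_of_le hc with hlt | he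
      · exact absurd hlt (h.2 (mem_anc.1 hm))
      · exact he
    · rcases lt_or_eq_of_le hc with hlt | he
      · exact absurd hlt (pmin_not_lt u hne (mem_anc.2 h.lt))
      · exact he.symm
  simp [par, dif_pos hne, heq]

lemma anc_cover (htree : IsTreeOrder X) {u v : X} (h : u ⋖ v) :
    anc u = insert v (anc v) := by
  ext w
  simp only [mem_anc, Finset.mem_insert]
  constructor
  · intro hw
    rcases htree u w v hw.le h.lt.le with hc | hc
    · rcases lt_or_eq_of_le hc with hlt | he
      · exact absurd hlt (h.2 hw)
      · exact Or.inl he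
    · rcases lt_or_eq_of_le hc with hlt | he
      · exact Or.inr hlt
      · exact Or.inl he.symm
  · rintro (rfl | hw)
    · exact h.lt
    · exact h.lt.trans hw

lemma dep_cover (htree : IsTreeOrder X) {u v : X} (h : u ⋖ v) :
    dep u = dep v + 1 := by
  unfold dep
  rw [anc_cover htree h]
  rw [Finset.card_insert_of_notMem]
  intro hv
  exact absurd (mem_anc.1 hv) (lt_irrefl v)

lemma dep_lt {d : ℕ} (htree : IsTreeOrder X) (hh : HeightLE X d) (v : X) :
    dep v < d := by
  have hch : ∀ u ∈ insert v (anc v), ∀ w ∈ insert v (anc v), u ≤ w ∨ w ≤ u := by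
    intro u hu w hw
    simp only [Finset.mem_insert, mem_anc] at hu hw
    rcases hu with rfl | hu <;> rcases hw with rfl | hw
    · exact Or.inl (le_refl _)
    · exact Or.inl hw.le
    · exact Or.inr hu.le
    · exact htree v u w hu.le hw.le
  have hcard := hh _ hch
  rw [Finset.card_insert_of_notMem (fun hv => absurd (mem_anc.1 hv) (lt_irrefl v))] at hcard
  unfold dep
  omega

lemma parent_exists {u : X} (h : dep u ≠ 0) : ∃ p, par u = some p := by
  cases hp : par u with
  | none => exact absurd (par_eq_none_iff.1 hp) h
  | some p => exact ⟨p, rfl⟩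

lemma sub_chl_disjoint (htree : IsTreeOrder X) {v : X} {c c' : X}
    (hc : c ∈ chl v) (hc' : c' ∈ chl v) (hne : c ≠ c') :
    Disjoint (sub c) (sub c') := by
  rw [Finset.disjoint_left]
  intro x hx hx'
  have h1 := mem_sub.1 hx
  have h2 := mem_sub.1 hx'
  have h3 := mem_chl.1 hc
  have h4 := mem_chl.1 hc'
  rcases htree x c c' h1 h2 with hc5 | hc5
  · rcases lt_or_eq_of_le hc5 with hlt | he
    · exact h3.2 hlt h4.lt
    · exact hne he
  · rcases lt_or_eq_of_le hc5 with hlt | he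
    · exact h4.2 hlt h3.lt
    · exact hne he.symm

lemma sum_siz_chl (htree : IsTreeOrder X) (v : X) :
    ∑ c ∈ chl v, siz c ≤ siz v - 1 := by
  have hdisj : ∀ c ∈ chl v, ∀ c' ∈ chl v, c ≠ c' → Disjoint (sub c) (sub c') :=
    fun c hc c' hc' hne => sub_chl_disjoint htree hc hc' hne
  have h1 : ∑ c ∈ chl v, siz c = ((chl v).biUnion sub).card :=
    (Finset.card_biUnion hdisj).symm
  have h2 : (chl v).biUnion sub ⊆ (sub v).erase v := by
    intro x hx
    rw [Finset.mem_biUnion] at hx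
    obtain ⟨c, hc, hxc⟩ := hx
    have hcv := (mem_chl.1 hc).lt
    have hxc' := mem_sub.1 hxc
    rw [Finset.mem_erase]
    exact ⟨fun he => absurd (he ▸ hxc').trans_lt (fun f => absurd (f hcv) (lt_irrefl v)),
      mem_sub.2 (hxc'.trans hcv.le)⟩
  rw [h1]
  calc ((chl v).biUnion sub).card ≤ ((sub v).erase v).card := Finset.card_le_card h2
    _ = siz v - 1 := by rw [Finset.card_erase_of_mem (mem_sub.2 (le_refl v))]; rfl

lemma S_pos (v : X) : 1 ≤ S Q v := Nat.le_add_right 1 _ |>.trans (le_refl _)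

lemma S_le_cap (v : X) : S Q v ≤ cap Q v := by
  rw [cap_eq]; exact le_rnd Q _

lemma cap_pos (v : X) : 1 ≤ cap Q v := le_trans (S_pos Q v) (S_le_cap Q v)

lemma cap_child_le_S {u v : X} (h : u ⋖ v) : cap Q u ≤ S Q v := by
  have h1 : cap Q u ≤ ∑ c ∈ chl v, cap Q c :=
    Finset.single_le_sum (fun c _ => Nat.zero_le _) (mem_chl.2 h)
  unfold S
  omega

lemma tg_cover_le {u v : X} (h : u ⋖ v) : tg Q u ≤ tg Q v := by
  unfold tg
  exact Nat.log_mono_right (Nat.div_le_div_right ((S_le_cap Q u).trans (cap_child_le_S Q h)))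

lemma gr_dvd_cap (v : X) : gr Q v ∣ cap Q v := by
  rw [cap_eq, gr_eq_grd]
  exact grd_dvd_rnd Q _

lemma cap_bound {d : ℕ} (htree : IsTreeOrder X) (hh : HeightLE X d) (hQ : 0 < Q) :
    ∀ v : X, cap Q v * Q ^ (d - dep v) ≤ siz v * (Q + 1) ^ (d - dep v) := by
  suffices H : ∀ k : ℕ, ∀ v : X, siz v ≤ k →
      cap Q v * Q ^ (d - dep v) ≤ siz v * (Q + 1) ^ (d - dep v) by
    intro v; exact H (siz v) v (le_refl _)
  intro k
  induction k with
  | zero => intro v hv; exact absurd (siz_pos v) (by omega)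
  | succ k ih =>
    intro v hv
    have hdep : dep v < d := dep_lt htree hh v
    obtain ⟨e, he⟩ : ∃ e, d - dep v = e + 1 := ⟨d - dep v - 1, by omega⟩
    have hsum : (∑ c ∈ chl v, cap Q c) * Q ^ e ≤ (siz v - 1) * (Q + 1) ^ e := by
      have h1 : ∀ c ∈ chl v, cap Q c * Q ^ e ≤ siz c * (Q + 1) ^ e := by
        intro c hc
        have hcv := mem_chl.1 hc
        have hdc : dep c = dep v + 1 := dep_cover htree hcv
        have hec : d - dep c = e := by omega
        have hszc : siz c ≤ k := by
          have := siz_lt_of_lt hcv.lt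
          omega
        have := ih c hszc
        rwa [hec] at this
      calc (∑ c ∈ chl v, cap Q c) * Q ^ e = ∑ c ∈ chl v, cap Q c * Q ^ e :=
            Finset.sum_mul _ _ _
        _ ≤ ∑ c ∈ chl v, siz c * (Q + 1) ^ e := Finset.sum_le_sum h1
        _ = (∑ c ∈ chl v, siz c) * (Q + 1) ^ e := (Finset.sum_mul _ _ _).symm
        _ ≤ (siz v - 1) * (Q + 1) ^ e :=
            Nat.mul_le_mul_right _ (sum_siz_chl htree v)
    have hS : S Q v * Q ^ e ≤ siz v * (Q + 1) ^ e := by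
      have h2 : (1 : ℕ) * Q ^ e ≤ 1 * (Q + 1) ^ e := by
        simpa using Nat.pow_le_pow_left (by omega) e
      have h3 := siz_pos v
      calc S Q v * Q ^ e = Q ^ e + (∑ c ∈ chl v, cap Q c) * Q ^ e := by
            unfold S; ring
        _ ≤ (Q + 1) ^ e + (siz v - 1) * (Q + 1) ^ e := by
            have := Nat.pow_le_pow_left (show Q ≤ Q + 1 by omega) e
            exact Nat.add_le_add this hsum
        _ = (1 + (siz v - 1)) * (Q + 1) ^ e := by ring
        _ = siz v * (Q + 1) ^ e := by congr 1; omega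
    rw [he]
    calc cap Q v * Q ^ (e + 1) = (rnd Q (S Q v) * Q) * Q ^ e := by rw [cap_eq]; ring
      _ ≤ (S Q v * (Q + 1)) * Q ^ e := Nat.mul_le_mul_right _ (rnd_mul_le Q _ hQ)
      _ = (Q + 1) * (S Q v * Q ^ e) := by ring
      _ ≤ (Q + 1) * (siz v * (Q + 1) ^ e) := Nat.mul_le_mul_left _ hS
      _ = siz v * (Q + 1) ^ (e + 1) := by ring

lemma cap_le_two_siz {d : ℕ} (htree : IsTreeOrder X) (hh : HeightLE X d)
    (hQ : 0 < Q) (hQd : 2 * d ≤ Q) (v : X) : cap Q v ≤ 2 * siz v := by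
  have h1 := cap_bound Q htree hh hQ v
  have he : 2 * (d - dep v) ≤ Q := by omega
  have h2 := bern Q (d - dep v) he hQ
  have h3 : cap Q v * Q ^ (d - dep v) ≤ (2 * siz v) * Q ^ (d - dep v) := by
    calc cap Q v * Q ^ (d - dep v) ≤ siz v * (Q + 1) ^ (d - dep v) := h1
      _ ≤ siz v * (2 * Q ^ (d - dep v)) := Nat.mul_le_mul_left _ h2
      _ = (2 * siz v) * Q ^ (d - dep v) := by ring
  exact Nat.le_of_mul_le_mul_right h3 (Nat.pow_pos hQ)

lemma earlier_irrefl (v : X) : ¬ earlier Q v v := by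
  unfold earlier
  omega

lemma earlier_trans {u v w : X} (h1 : earlier Q u v) (h2 : earlier Q v w) :
    earlier Q u w := by
  unfold earlier at *
  omega

lemma earlier_total {u v : X} (h : u ≠ v) : earlier Q u v ∨ earlier Q v u := by
  have hinj : (Fintype.equivFin X u : ℕ) ≠ (Fintype.equivFin X v : ℕ) := by
    intro he
    exact h ((Fintype.equivFin X).injective (Fin.ext he))
  unfold earlier
  omega

lemma tg_le_of_earlier {u v : X} (h : earlier Q u v) : tg Q v ≤ tg Q u := by
  unfold earlier at h
  omega

lemma off_mono {u u' : X} (hpar : par u = par u') (he : earlier Q u u') :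
    off Q u + cap Q u ≤ off Q u' := by
  have hu : u ∉ univ.filter (fun w => par w = par u ∧ earlier Q w u) := by
    simp only [Finset.mem_filter]
    exact fun hx => earlier_irrefl Q u hx.2.2
  have hsub : insert u (univ.filter (fun w => par w = par u ∧ earlier Q w u))
      ⊆ univ.filter (fun w => par w = par u' ∧ earlier Q w u') := by
    intro w hw
    rw [Finset.mem_insert] at hw
    simp only [Finset.mem_filter, Finset.mem_univ, true_and]
    rcases hw with rfl | hw
    · exact ⟨hpar, he⟩
    · simp only [Finset.mem_filter] at hw
      exact ⟨hw.2.1.trans hpar, earlier_trans Q hw.2.2 he⟩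
  have key : ∑ w ∈ insert u (univ.filter (fun w => par w = par u ∧ earlier Q w u)), cap Q w
      = cap Q u + off Q u := by
    rw [Finset.sum_insert hu]; rfl
  have h2 := Finset.sum_le_sum_of_subset (f := cap Q) hsub
  have h3 : off Q u' = ∑ w ∈ univ.filter (fun w => par w = par u' ∧ earlier Q w u'), cap Q w := rfl
  omega

lemma off_add_cap_le_S {u p : X} (hp : par u = some p) :
    off Q u + cap Q u ≤ S Q p := by
  have hu : u ∉ univ.filter (fun w => par w = par u ∧ earlier Q w u) := by
    simp only [Finset.mem_filter]
    exact fun hx => earlier_irrefl Q u hx.2.2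
  have hsub : insert u (univ.filter (fun w => par w = par u ∧ earlier Q w u)) ⊆ chl p := by
    intro w hw
    rw [Finset.mem_insert] at hw
    rcases hw with rfl | hw
    · exact mem_chl.2 (cover_of_par hp)
    · simp only [Finset.mem_filter] at hw
      exact mem_chl.2 (cover_of_par (hw.2.1.trans hp))
  have key : ∑ w ∈ insert u (univ.filter (fun w => par w = par u ∧ earlier Q w u)), cap Q w
      = cap Q u + off Q u := by
    rw [Finset.sum_insert hu]; rfl
  have h2 := Finset.sum_le_sum_of_subset (f := cap Q) hsub
  have hS : S Q p = 1 + ∑ w ∈ chl p, cap Q w := rfl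
  omega

lemma off_add_cap_le_M0 {u : X} (hp : par u = none) :
    off Q u + cap Q u ≤ M0 Q X := by
  have hu : u ∉ univ.filter (fun w => par w = par u ∧ earlier Q w u) := by
    simp only [Finset.mem_filter]
    exact fun hx => earlier_irrefl Q u hx.2.2
  have hsub : insert u (univ.filter (fun w => par w = par u ∧ earlier Q w u))
      ⊆ (roots : Finset X) := by
    intro w hw
    rw [Finset.mem_insert] at hw
    unfold roots
    simp only [Finset.mem_filter, Finset.mem_univ, true_and]
    rcases hw with rfl | hw
    · exact hp
    · simp only [Finset.mem_filter] at hw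
      exact hw.2.1.trans hp
  have key : ∑ w ∈ insert u (univ.filter (fun w => par w = par u ∧ earlier Q w u)), cap Q w
      = cap Q u + off Q u := by
    rw [Finset.sum_insert hu]; rfl
  have h2 := Finset.sum_le_sum_of_subset (f := cap Q) hsub
  have hM : M0 Q X = ∑ r ∈ (roots : Finset X), cap Q r := rfl
  omega

lemma in_parent {u p : X} (hp : par u = some p) :
    pos Q p ≤ pos Q u ∧ pos Q u + cap Q u ≤ pos Q p + cap Q p := by
  rw [pos_child Q hp]
  constructor
  · omega
  · have h1 := off_add_cap_le_S Q hp
    have h2 := S_le_cap Q p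
    omega

lemma pos_add_cap_le_M0 (v : X) : pos Q v + cap Q v ≤ M0 Q X := by
  suffices H : ∀ k : ℕ, ∀ v : X, dep v ≤ k → pos Q v + cap Q v ≤ M0 Q X by
    exact H (dep v) v (le_refl _)
  intro k
  induction k with
  | zero =>
    intro v hv
    have hnone : par v = none := par_eq_none_iff.2 (by omega)
    rw [pos_root Q hnone]
    exact off_add_cap_le_M0 Q hnone
  | succ k ih =>
    intro v hv
    cases hp : par v with
    | none =>
      rw [pos_root Q hp]
      exact off_add_cap_le_M0 Q hp
    | some p =>
      have h1 := in_parent Q hp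
      have hdp : dep p < dep v := dep_lt_of_mem_anc (mem_anc.2 (cover_of_par hp).lt)
      have h2 := ih p (by omega)
      omega

lemma sib_disjoint {u u' : X} (hpar : par u = par u') (he : earlier Q u u') :
    pos Q u + cap Q u ≤ pos Q u' := by
  cases hp : par u with
  | none =>
    have hp2 : par u' = none := by rw [← hpar]; exact hp
    rw [pos_root Q hp, pos_root Q hp2]
    exact (off_mono Q hpar he)
  | some p =>
    have hp2 : par u' = some p := by rw [← hpar]; exact hp
    rw [pos_child Q hp, pos_child Q hp2]
    have := off_mono Q hpar he
    omega

lemma level_disjoint (htree : IsTreeOrder X) {u u' : X}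
    (hd : dep u = dep u') (hne : u ≠ u') :
    pos Q u + cap Q u ≤ pos Q u' ∨ pos Q u' + cap Q u' ≤ pos Q u := by
  suffices H : ∀ k : ℕ, ∀ u u' : X, dep u ≤ k → dep u = dep u' → u ≠ u' →
      pos Q u + cap Q u ≤ pos Q u' ∨ pos Q u' + cap Q u' ≤ pos Q u by
    exact H (dep u) u u' (le_refl _) hd hne
  intro k
  induction k with
  | zero =>
    intro u u' hk hd hne
    have h1 : par u = par u' := by
      rw [par_eq_none_iff.2 (by omega), par_eq_none_iff.2 (by omega)]
    rcases earlier_total Q hne with he | he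
    · exact Or.inl (sib_disjoint Q h1 he)
    · exact Or.inr (sib_disjoint Q h1.symm he)
  | succ k ih =>
    intro u u' hk hd hne
    cases hp : par u with
    | none =>
      have h0 : dep u = 0 := par_eq_none_iff.1 hp
      have h1 : par u = par u' := by
        rw [hp, par_eq_none_iff.2 (by omega)]
      rcases earlier_total Q hne with he | he
      · exact Or.inl (sib_disjoint Q h1 he)
      · exact Or.inr (sib_disjoint Q h1.symm he)
    | some p =>
      have hdu : dep u ≠ 0 := by
        intro h0
        rw [par_eq_none_iff.2 h0] at hp
        cases hp
      obtain ⟨p', hp'⟩ := parent_exists (u := u') (by omega)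
      by_cases hpp : p = p'
      · subst hpp
        have h1 : par u = par u' := by rw [hp, hp']
        rcases earlier_total Q hne with he | he
        · exact Or.inl (sib_disjoint Q h1 he)
        · exact Or.inr (sib_disjoint Q h1.symm he)
      · have hc := cover_of_par hp
        have hc' := cover_of_par hp'
        have hd1 : dep u = dep p + 1 := dep_cover htree hc
        have hd2 : dep u' = dep p' + 1 := dep_cover htree hc'
        have h3 := ih p p' (by omega) (by omega) hpp
        have h4 := in_parent Q hp
        have h5 := in_parent Q hp'
        rcases h3 with h3 | h3
        · left; omega
        · right; omega

lemma gr_dvd_pos (v : X) : gr Q v ∣ pos Q v := by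
  suffices H : ∀ k : ℕ, ∀ v : X, dep v ≤ k → gr Q v ∣ pos Q v by
    exact H (dep v) v (le_refl _)
  intro k
  induction k with
  | zero =>
    intro v hv
    rw [pos_root Q (par_eq_none_iff.2 (by omega))]
    unfold off
    apply Finset.dvd_sum
    intro w hw
    simp only [Finset.mem_filter] at hw
    exact dvd_trans (pow_dvd_pow 2 (tg_le_of_earlier Q hw.2.2)) (gr_dvd_cap Q w)
  | succ k ih =>
    intro v hv
    have hoff : gr Q v ∣ off Q v := by
      unfold off
      apply Finset.dvd_sum
      intro w hw
      simp only [Finset.mem_filter] at hw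
      exact dvd_trans (pow_dvd_pow 2 (tg_le_of_earlier Q hw.2.2)) (gr_dvd_cap Q w)
    cases hp : par v with
    | none => rw [pos_root Q hp]; exact hoff
    | some p =>
      rw [pos_child Q hp]
      apply dvd_add _ hoff
      have hdp : dep p < dep v := dep_lt_of_mem_anc (mem_anc.2 (cover_of_par hp).lt)
      exact dvd_trans (pow_dvd_pow 2 (tg_cover_le Q (cover_of_par hp))) (ih p (by omega))

lemma M0_le {n d : ℕ} (htree : IsTreeOrder X) (hh : HeightLE X d)
    (hQ : 0 < Q) (hQd : 2 * d ≤ Q) (hcard : Fintype.card X ≤ n) :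
    M0 Q X ≤ 2 * n := by
  have hdisj : ∀ r ∈ (roots : Finset X), ∀ r' ∈ (roots : Finset X), r ≠ r' →
      Disjoint (sub r) (sub r') := by
    intro r hr r' hr' hne
    rw [Finset.disjoint_left]
    intro x hx hx'
    unfold roots at hr hr'
    simp only [Finset.mem_filter] at hr hr'
    rcases htree x r r' (mem_sub.1 hx) (mem_sub.1 hx') with hc | hc
    · rcases lt_or_eq_of_le hc with hlt | he
      · have : (anc r).Nonempty := ⟨r', mem_anc.2 hlt⟩
        simp [par, this] at hr
      · exact hne he
    · rcases lt_or_eq_of_le hc with hlt | he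
      · have : (anc r').Nonempty := ⟨r, mem_anc.2 hlt⟩
        simp [par, this] at hr'
      · exact hne he.symm
  have h1 : ∑ r ∈ (roots : Finset X), siz r ≤ Fintype.card X := by
    rw [show (∑ r ∈ (roots : Finset X), siz r) = ((roots : Finset X).biUnion sub).card from
      (Finset.card_biUnion hdisj).symm]
    calc ((roots : Finset X).biUnion sub).card ≤ (univ : Finset X).card :=
          Finset.card_le_card (Finset.subset_univ _)
      _ = Fintype.card X := Finset.card_univ
  calc M0 Q X = ∑ r ∈ (roots : Finset X), cap Q r := rfl
    _ ≤ ∑ r ∈ (roots : Finset X), 2 * siz r :=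
        Finset.sum_le_sum (fun r _ => cap_le_two_siz Q htree hh hQ hQd r)
    _ = 2 * ∑ r ∈ (roots : Finset X), siz r := by rw [Finset.mul_sum]
    _ ≤ 2 * Fintype.card X := by omega
    _ ≤ 2 * n := by omega

lemma cap_lt_gr (hQ : 0 < Q) (v : X) : cap Q v < (2 * Q + 1) * gr Q v := by
  rw [cap_eq, gr_eq_grd]
  exact rnd_lt Q _ hQ

lemma mantissa_le (hQ : 0 < Q) (v : X) : cap Q v / gr Q v ≤ 2 * Q := by
  have h1 := cap_lt_gr Q hQ v
  have h2 : 0 < gr Q v := Nat.pow_pos (by norm_num)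
  have := (Nat.div_lt_iff_lt_mul h2).2 (by omega : cap Q v < (2 * Q + 1) * gr Q v)
  · omega

lemma mantissa_pos (v : X) : 1 ≤ cap Q v / gr Q v := by
  have h2 : 0 < gr Q v := Nat.pow_pos (by norm_num)
  have := Nat.div_mul_cancel (gr_dvd_cap Q v)
  have h3 := cap_pos Q v
  rcases Nat.eq_zero_or_pos (cap Q v / gr Q v) with h | h
  · rw [h] at this; omega
  · omega

lemma mantissa_mul (v : X) : cap Q v / gr Q v * gr Q v = cap Q v :=
  Nat.div_mul_cancel (gr_dvd_cap Q v)

lemma pos_div_mul (v : X) : pos Q v / gr Q v * gr Q v = pos Q v :=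
  Nat.div_mul_cancel (gr_dvd_pos Q v)

lemma gr_le_cap (v : X) : gr Q v ≤ cap Q v :=
  Nat.le_of_dvd (cap_pos Q v) (gr_dvd_cap Q v)

noncomputable def enc (d : ℕ) (v : X) : ℕ :=
  ((2 ^ tg Q v * (2 * (pos Q v / gr Q v) + 1)) * (2 * Q + 1) + cap Q v / gr Q v) * d + dep v

lemma enc_phi (v : X) :
    2 ^ tg Q v * (2 * (pos Q v / gr Q v) + 1) = 2 * pos Q v + gr Q v := by
  calc 2 ^ tg Q v * (2 * (pos Q v / gr Q v) + 1)
      = 2 * (pos Q v / gr Q v * 2 ^ tg Q v) + 2 ^ tg Q v := by ring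
    _ = 2 * pos Q v + gr Q v := by
        rw [show (2:ℕ) ^ tg Q v = gr Q v from rfl, pos_div_mul Q v]

end PScheme

/-- A parenthood (adjacency) labeling scheme for rooted forests with at most
`n` nodes and depth at most `d`, with labels drawn from a set of size
`O(n·d³)`, i.e. labels of `log₂ n + 3 log₂ d + O(1)` bits.  Here `u ⋖ v`
means that `v` covers `u`, i.e. `v` is the parent of `u`. -/
theorem parenthood_scheme_bounded_depth :
    ∃ C : ℕ, ∀ n d : ℕ, 2 ≤ n → 2 ≤ d →
      ∃ (N : ℕ) (D : Fin N → Fin N → Prop),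
        N ≤ C * n * d ^ 3 ∧
        ∀ (X : Type) [Fintype X] [PartialOrder X],
          IsTreeOrder X → Fintype.card X ≤ n → HeightLE X d →
          ∃ L : X → Fin N,
            Function.Injective L ∧
            (∀ u v : X, u ⋖ v ↔ D (L v) (L u)) := by
  classical
  open PScheme in
  refine ⟨100, fun n d hn hd => ?_⟩
  set Q := d * d with hQdef
  have hQ : 0 < Q := by positivity
  have hQd : 2 * d ≤ Q := Nat.mul_le_mul_right d hd
  have hd0 : 0 < d := by omega
  refine ⟨100 * n * d ^ 3,
    (fun x y => ∃ t j m δ t' j' m' : ℕ,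
      x.val = ((2 ^ t * (2 * j + 1)) * (2 * Q + 1) + m) * d + δ ∧
      y.val = ((2 ^ t' * (2 * j' + 1)) * (2 * Q + 1) + m') * d + (δ + 1) ∧
      1 ≤ m ∧ m ≤ 2 * Q ∧ 1 ≤ m' ∧ m' ≤ 2 * Q ∧ δ + 1 < d ∧
      j * 2 ^ t ≤ j' * 2 ^ t' ∧ j' * 2 ^ t' < j * 2 ^ t + m * 2 ^ t),
    le_refl _, ?_⟩
  intro X _ _ htree hcard hh
  have hMle : M0 Q X ≤ 2 * n := M0_le Q htree hh hQ hQd hcard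
  have henc_lt : ∀ v : X, enc Q d v < 100 * n * d ^ 3 := by
    intro v
    have h1 : pos Q v + cap Q v ≤ 2 * n :=
      le_trans (pos_add_cap_le_M0 Q v) hMle
    have h2 : gr Q v ≤ cap Q v := gr_le_cap Q v
    have hphi : 2 ^ tg Q v * (2 * (pos Q v / gr Q v) + 1) ≤ 4 * n := by
      rw [enc_phi]; omega
    have hm : cap Q v / gr Q v ≤ 2 * Q := mantissa_le Q hQ v
    have hdep : dep v < d := dep_lt htree hh v
    have hstep : enc Q d v < (4 * n * (2 * Q + 1) + 2 * Q) * d + d := by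
      unfold enc
      have e1 : (2 ^ tg Q v * (2 * (pos Q v / gr Q v) + 1)) * (2 * Q + 1)
          + cap Q v / gr Q v ≤ 4 * n * (2 * Q + 1) + 2 * Q :=
        Nat.add_le_add (Nat.mul_le_mul_right _ hphi) hm
      have e2 := Nat.mul_le_mul_right d e1
      omega
    have hfin : (4 * n * (2 * Q + 1) + 2 * Q) * d + d ≤ 100 * n * d ^ 3 := by
      rw [hQdef, show d ^ 3 = d * d * d from by ring]
      have hm1 : d ≤ d * d * d := by nlinarith
      have hm2 : n * d ≤ n * (d * d * d) := Nat.mul_le_mul_left n hm1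
      have hm3 : d * d * d ≤ n * (d * d * d) := Nat.le_mul_of_pos_left _ (by omega)
      nlinarith [hm1, hm2, hm3]
    omega
  refine ⟨fun v => ⟨enc Q d v, henc_lt v⟩, ?_, ?_⟩
  · -- injectivity
    intro u u' h
    have he : enc Q d u = enc Q d u' := congrArg Fin.val h
    unfold enc at he
    obtain ⟨ht, hj, hm, hδ⟩ := enc_inj d Q hd0 _ _ _ _ _ _ _ _
      (mantissa_pos Q u) (mantissa_le Q hQ u) (mantissa_pos Q u') (mantissa_le Q hQ u')
      (dep_lt htree hh u) (dep_lt htree hh u') he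
    by_contra hne
    have hgr : gr Q u = gr Q u' := by unfold gr; rw [ht]
    have hpos : pos Q u = pos Q u' := by
      have p1 := pos_div_mul Q u
      have p2 := pos_div_mul Q u'
      rw [← p1, ← p2, hj, hgr]
    have hdisj := level_disjoint Q htree hδ hne
    have c1 := cap_pos Q u
    have c2 := cap_pos Q u'
    omega
  · -- the cover iff
    intro u v
    constructor
    · intro hc
      have hpar := par_of_cover htree hc
      have hdep : dep u = dep v + 1 := dep_cover htree hc
      have hip := in_parent Q hpar
      have hcapu := cap_pos Q u
      refine ⟨tg Q v, pos Q v / gr Q v, cap Q v / gr Q v, dep v,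
        tg Q u, pos Q u / gr Q u, cap Q u / gr Q u, rfl, ?_, mantissa_pos Q v,
        mantissa_le Q hQ v, mantissa_pos Q u, mantissa_le Q hQ u, ?_, ?_, ?_⟩
      · show enc Q d u = _
        unfold enc
        rw [hdep]
      · have := dep_lt htree hh u
        omega
      · rw [show (2:ℕ) ^ tg Q v = gr Q v from rfl,
          show (2:ℕ) ^ tg Q u = gr Q u from rfl, pos_div_mul, pos_div_mul]
        exact hip.1
      · rw [show (2:ℕ) ^ tg Q v = gr Q v from rfl,
          show (2:ℕ) ^ tg Q u = gr Q u from rfl, pos_div_mul, pos_div_mul, mantissa_mul]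
        omega
    · rintro ⟨t, j, m, δ, t', j', m', hx, hy, hm1, hm2, hm1', hm2', hδd, hij1, hij2⟩
      have hxv : enc Q d v = ((2 ^ t * (2 * j + 1)) * (2 * Q + 1) + m) * d + δ := hx
      have hyu : enc Q d u = ((2 ^ t' * (2 * j' + 1)) * (2 * Q + 1) + m') * d + (δ + 1) := hy
      unfold enc at hxv hyu
      obtain ⟨ht, hj, hm, hδ⟩ := enc_inj d Q hd0 _ _ _ _ _ _ _ _
        (mantissa_pos Q v) (mantissa_le Q hQ v) hm1 hm2
        (dep_lt htree hh v) (by omega) hxv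
      obtain ⟨ht', hj', hm', hδ'⟩ := enc_inj d Q hd0 _ _ _ _ _ _ _ _
        (mantissa_pos Q u) (mantissa_le Q hQ u) hm1' hm2'
        (dep_lt htree hh u) (by omega) hyu
      -- translate the interval facts
      have hposv : j * 2 ^ t = pos Q v := by
        rw [← ht, ← hj, show (2:ℕ) ^ tg Q v = gr Q v from rfl, pos_div_mul]
      have hposu : j' * 2 ^ t' = pos Q u := by
        rw [← ht', ← hj', show (2:ℕ) ^ tg Q u = gr Q u from rfl, pos_div_mul]
      have hcapv : m * 2 ^ t = cap Q v := by
        rw [← ht, ← hm, show (2:ℕ) ^ tg Q v = gr Q v from rfl, mantissa_mul]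
      rw [hposv, hposu] at hij1
      rw [hposv, hposu, hcapv] at hij2
      -- u has a parent p at the same depth as v
      have hdu : dep u ≠ 0 := by omega
      obtain ⟨p, hp⟩ := parent_exists hdu
      have hcov := cover_of_par hp
      have hdp : dep u = dep p + 1 := dep_cover htree hcov
      have hip := in_parent Q hp
      have hcapu := cap_pos Q u
      by_cases hvp : v = p
      · subst hvp; exact hcov
      · exfalso
        have hdep_eq : dep v = dep p := by omega
        have hdisj := level_disjoint Q htree hdep_eq hvp
        omega
end
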